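/- arXiv:1409.1288 — 7 statements merged into one kernel-verified Lean document; each statement's English description precedes it below -/
import Mathlib

section
/- Let F : ℝ → ℝ be Lipschitz continuous, k₁, k₂ ≥ 0, c₁, c₂ ∈ L¹_loc([0,∞)), T₀ ≥ 0, T₁ ∈ (T₀, ∞], with c₁ ≤ c₂ a.e. on [T₀, T₁]. Let kᵢ solve kᵢ' = F(kᵢ) − cᵢ with kᵢ(0) = kᵢ. If k₁(T₀) = k₂(T₀) then k₁(t) ≥ k₂(t) for all t ∈ [T₀, T₁]; if k₁(T₀) > k₂(T₀) then k₁(t) > k₂(t) for all t ∈ [T₀, T₁]. -/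
open MeasureTheory

/-- Integral form of Gronwall's inequality (forward form). -/
private lemma gronA {K a b : ℝ} (hK : 0 ≤ K) (hab : a ≤ b) {u : ℝ → ℝ}
    (hc : ContinuousOn u (Set.Icc a b))
    (hineq : ∀ t ∈ Set.Icc a b, u t ≤ K * ∫ s in a..t, u s) :
    ∀ t ∈ Set.Icc a b, u t ≤ 0 := by
  have hint : IntegrableOn u (Set.Icc a b) := hc.integrableOn_Icc
  set V : ℝ → ℝ := fun t => ∫ s in a..t, u s with hVdef
  have hVcont : ContinuousOn V (Set.Icc a b) := by
    have := intervalIntegral.continuousOn_primitive_interval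
      (a := a) (b := b) (f := u) (μ := volume) (by rw [Set.uIcc_of_le hab]; exact hint)
    rwa [Set.uIcc_of_le hab] at this
  have hVderiv : ∀ x ∈ Set.Ioo a b, HasDerivAt V (u x) x := by
    intro x hx
    have hxI : Set.Icc a b ∈ nhds x := Icc_mem_nhds hx.1 hx.2
    have hcx : ContinuousAt u x := (hc x (Set.Ioo_subset_Icc_self hx)).continuousAt hxI
    have hii : IntervalIntegrable u volume a x := by
      apply IntegrableOn.intervalIntegrable
      rw [Set.uIcc_of_le hx.1.le]
      exact hint.mono_set (Set.Icc_subset_Icc le_rfl hx.2.le)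
    exact intervalIntegral.integral_hasDerivAt_right hii
      ⟨_, hxI, hint.aestronglyMeasurable⟩ hcx
  set W : ℝ → ℝ := fun t => V t * Real.exp (-K * t) with hWdef
  have hWderiv : ∀ x ∈ Set.Ioo a b,
      HasDerivAt W (u x * Real.exp (-K * x) + V x * (Real.exp (-K * x) * -K)) x := by
    intro x hx
    have he : HasDerivAt (fun t : ℝ => Real.exp (-K * t)) (Real.exp (-K * x) * -K) x := by
      have h1 : HasDerivAt (fun t : ℝ => -K * t) (-K) x := by
        simpa using (hasDerivAt_id x).const_mul (-K)
      exact h1.exp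
    exact (hVderiv x hx).mul he
  have hanti : AntitoneOn W (Set.Icc a b) := by
    apply antitoneOn_of_deriv_nonpos (convex_Icc a b)
    · exact hVcont.mul (Real.continuous_exp.comp (continuous_const.mul continuous_id)).continuousOn
    · intro x hx
      rw [interior_Icc] at hx
      exact (hWderiv x hx).differentiableAt.differentiableWithinAt
    · intro x hx
      rw [interior_Icc] at hx
      rw [(hWderiv x hx).deriv]
      have hux := hineq x (Set.Ioo_subset_Icc_self hx)
      have hexp := Real.exp_pos (-K * x)
      nlinarith [hux, hexp]
  have hVle : ∀ t ∈ Set.Icc a b, V t ≤ 0 := by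
    intro t ht
    have hWa : W a = 0 := by simp [hWdef, hVdef]
    have hW := hanti (Set.left_mem_Icc.2 hab) ht ht.1
    rw [hWa] at hW
    simp only [hWdef] at hW
    have hexp := Real.exp_pos (-K * t)
    nlinarith [hW, hexp]
  intro t ht
  have h1 := hineq t ht
  have h2 := hVle t ht
  nlinarith [h1, h2]

/-- Integral form of Gronwall's inequality (backward form). -/
private lemma gronB {K a b : ℝ} (hK : 0 ≤ K) (hab : a ≤ b) {u : ℝ → ℝ}
    (hc : ContinuousOn u (Set.Icc a b))
    (hineq : ∀ t ∈ Set.Icc a b, u t ≤ K * ∫ s in t..b, u s) :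
    ∀ t ∈ Set.Icc a b, u t ≤ 0 := by
  have hmaps : Set.MapsTo (fun s => a + b - s) (Set.Icc a b) (Set.Icc a b) := by
    intro x hx
    simp only [Set.mem_Icc] at hx ⊢
    constructor <;> linarith [hx.1, hx.2]
  have key := gronA hK hab (u := fun s => u (a + b - s))
    (hc.comp (by fun_prop) hmaps) ?_
  · intro t ht
    have hmem : a + b - t ∈ Set.Icc a b := hmaps ht
    have := key _ hmem
    simpa [show a + b - (a + b - t) = t by ring] using this
  · intro t ht
    have hmem : a + b - t ∈ Set.Icc a b := hmaps ht
    have h1 := hineq (a + b - t) hmem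
    have h2 : (∫ s in a..t, u (a + b - s)) = ∫ s in (a + b - t)..b, u s := by
      have := intervalIntegral.integral_comp_sub_left (a := a) (b := t) u (a + b)
      simpa using this
    rw [h2]
    exact h1

/-- Core comparison lemma. -/
private lemma compCore {M T₀ T : ℝ} (hM : 0 ≤ M) (hT : T₀ ≤ T) {g : ℝ → ℝ}
    (hgc : ContinuousOn g (Set.Icc T₀ T))
    (key : ∀ τ t, T₀ ≤ τ → τ ≤ t → t ≤ T → g τ - M * ∫ s in τ..t, |g s| ≤ g t) :
    (0 ≤ g T₀ → ∀ t ∈ Set.Icc T₀ T, 0 ≤ g t) ∧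
    (0 < g T₀ → ∀ t ∈ Set.Icc T₀ T, 0 < g t) := by
  have part1 : 0 ≤ g T₀ → ∀ t ∈ Set.Icc T₀ T, 0 ≤ g t := by
    intro h0 t₁ ht₁
    by_contra hneg
    push_neg at hneg
    set S : Set ℝ := {t | t ∈ Set.Icc T₀ t₁ ∧ 0 ≤ g t} with hSdef
    have hSne : S.Nonempty := ⟨T₀, ⟨le_rfl, ht₁.1⟩, h0⟩
    have hSbdd : BddAbove S := ⟨t₁, fun x hx => hx.1.2⟩
    have hScl : IsClosed S := by
      have : ContinuousOn g (Set.Icc T₀ t₁) :=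
        hgc.mono (Set.Icc_subset_Icc le_rfl ht₁.2)
      have h2 := this.preimage_isClosed_of_isClosed isClosed_Icc (isClosed_Ici (a := (0:ℝ)))
      convert h2 using 1
      rfl
    set τ := sSup S with hτdef
    have hτS : τ ∈ S := hScl.csSup_mem hSne hSbdd
    have hτ0 : T₀ ≤ τ := hτS.1.1
    have hτ1 : τ ≤ t₁ := hτS.1.2
    have hgτ : 0 ≤ g τ := hτS.2
    have hτlt : τ < t₁ := lt_of_le_of_ne hτ1 (fun h => by rw [h] at hgτ; linarith)
    have hneg' : ∀ s, τ < s → s ≤ t₁ → g s < 0 := by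
      intro s hs hs1
      by_contra h
      push_neg at h
      have hsS : s ∈ S := ⟨⟨hτ0.trans hs.le, hs1⟩, h⟩
      have := le_csSup hSbdd hsS
      linarith
    have hres := gronA hM hτlt.le (u := fun s => -g s)
      ((hgc.mono (Set.Icc_subset_Icc hτ0 (ht₁.2))).neg) ?_ t₁ (Set.right_mem_Icc.2 hτlt.le)
    · linarith
    · intro t ht
      have hk := key τ t hτ0 ht.1 (ht.2.trans ht₁.2)
      have hI : (∫ s in τ..t, |g s|) = ∫ s in τ..t, -g s := by
        apply intervalIntegral.integral_congr_ae
        apply Filter.Eventually.of_forall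
        intro x hx
        rw [Set.uIoc_of_le ht.1] at hx
        exact abs_of_neg (hneg' x hx.1 (hx.2.trans ht.2))
      rw [hI] at hk
      linarith
  refine ⟨part1, ?_⟩
  intro h0 t₁ ht₁
  by_contra hneg
  push_neg at hneg
  have hge := part1 h0.le
  have hgt₁ : g t₁ = 0 := le_antisymm hneg (hge t₁ ht₁)
  have hres := gronB hM ht₁.1 (u := g)
    (hgc.mono (Set.Icc_subset_Icc le_rfl ht₁.2)) ?_ T₀ (Set.left_mem_Icc.2 ht₁.1)
  · linarith
  · intro t ht
    have hk := key t t₁ ht.1 ht.2 ht₁.2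
    have hI : (∫ s in t..t₁, |g s|) = ∫ s in t..t₁, g s := by
      apply intervalIntegral.integral_congr_ae
      apply Filter.Eventually.of_forall
      intro x hx
      rw [Set.uIoc_of_le ht.2] at hx
      exact abs_of_nonneg (hge x ⟨ht.1.trans hx.1.le, hx.2.trans ht₁.2⟩)
    rw [hI] at hk
    rw [hgt₁] at hk
    linarith

theorem stmt4 (F c₁ c₂ k₁f k₂f : ℝ → ℝ) (M k₁ k₂ T₀ : ℝ) (T₁ : EReal)
    (hLip : ∀ x y, |F x - F y| ≤ M * |x - y|)
    (hk₁ : 0 ≤ k₁) (hk₂ : 0 ≤ k₂)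
    (hc₁ : LocallyIntegrableOn c₁ (Set.Ici 0))
    (hc₂ : LocallyIntegrableOn c₂ (Set.Ici 0))
    (hT₀ : 0 ≤ T₀) (hT₁ : (T₀ : EReal) < T₁)
    (hle : ∀ᵐ t ∂(volume.restrict {t : ℝ | T₀ ≤ t ∧ (t : EReal) ≤ T₁}), c₁ t ≤ c₂ t)
    (h1cont : ContinuousOn k₁f (Set.Ici 0)) (h10 : k₁f 0 = k₁)
    (h1sol : ∀ t ≥ (0:ℝ), k₁f t = k₁ + ∫ s in (0:ℝ)..t, (F (k₁f s) - c₁ s))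
    (h2cont : ContinuousOn k₂f (Set.Ici 0)) (h20 : k₂f 0 = k₂)
    (h2sol : ∀ t ≥ (0:ℝ), k₂f t = k₂ + ∫ s in (0:ℝ)..t, (F (k₂f s) - c₂ s)) :
    (k₁f T₀ = k₂f T₀ → ∀ t, T₀ ≤ t → (t : EReal) ≤ T₁ → k₂f t ≤ k₁f t) ∧
    (k₂f T₀ < k₁f T₀ → ∀ t, T₀ ≤ t → (t : EReal) ≤ T₁ → k₂f t < k₁f t) := by
  have hM : 0 ≤ M := by
    have := hLip 1 0
    have h0 := abs_nonneg (F 1 - F 0)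
    simp at this
    linarith
  have hFcont : Continuous F := by
    have : LipschitzWith (Real.toNNReal M) F := by
      apply LipschitzWith.of_dist_le_mul
      intro x y
      rw [Real.dist_eq, Real.dist_eq]
      calc |F x - F y| ≤ M * |x - y| := hLip x y
        _ = (Real.toNNReal M : ℝ) * |x - y| := by rw [Real.coe_toNNReal M hM]
    exact this.continuous
  set g : ℝ → ℝ := fun t => k₁f t - k₂f t with hgdef
  have hF1c : ContinuousOn (fun s => F (k₁f s)) (Set.Ici 0) := hFcont.comp_continuousOn h1cont
  have hF2c : ContinuousOn (fun s => F (k₂f s)) (Set.Ici 0) := hFcont.comp_continuousOn h2cont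
  have hInt1 : ∀ t : ℝ, 0 ≤ t → IntervalIntegrable (fun s => F (k₁f s) - c₁ s) volume 0 t := by
    intro t ht
    have hsub : Set.Icc (0:ℝ) t ⊆ Set.Ici 0 := Set.Icc_subset_Ici_self
    have h1 : IntegrableOn (fun s => F (k₁f s)) (Set.Icc 0 t) :=
      (hF1c.mono hsub).integrableOn_Icc
    have h2 : IntegrableOn c₁ (Set.Icc 0 t) :=
      hc₁.integrableOn_compact_subset hsub isCompact_Icc
    apply IntegrableOn.intervalIntegrable
    rw [Set.uIcc_of_le ht]
    exact h1.sub h2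
  have hInt2 : ∀ t : ℝ, 0 ≤ t → IntervalIntegrable (fun s => F (k₂f s) - c₂ s) volume 0 t := by
    intro t ht
    have hsub : Set.Icc (0:ℝ) t ⊆ Set.Ici 0 := Set.Icc_subset_Ici_self
    have h1 : IntegrableOn (fun s => F (k₂f s)) (Set.Icc 0 t) :=
      (hF2c.mono hsub).integrableOn_Icc
    have h2 : IntegrableOn c₂ (Set.Icc 0 t) :=
      hc₂.integrableOn_compact_subset hsub isCompact_Icc
    apply IntegrableOn.intervalIntegrable
    rw [Set.uIcc_of_le ht]
    exact h1.sub h2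
  have main : ∀ T : ℝ, T₀ ≤ T → (T : EReal) ≤ T₁ →
      ((0 ≤ g T₀ → 0 ≤ g T) ∧ (0 < g T₀ → 0 < g T)) := by
    intro T hT0T hTT₁
    have hsub : Set.Icc T₀ T ⊆ Set.Ici (0:ℝ) := fun x hx => hT₀.trans hx.1
    have hgc : ContinuousOn g (Set.Icc T₀ T) :=
      ((h1cont.mono hsub).sub (h2cont.mono hsub))
    have key : ∀ τ t, T₀ ≤ τ → τ ≤ t → t ≤ T → g τ - M * ∫ s in τ..t, |g s| ≤ g t := by
      intro τ t hτ hτt htT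
      have h0τ : (0:ℝ) ≤ τ := hT₀.trans hτ
      have h0t : (0:ℝ) ≤ t := h0τ.trans hτt
      have hsubτ : Set.Icc τ t ⊆ Set.Ici (0:ℝ) := fun x hx => h0τ.trans hx.1
      have hsubτ' : Set.Icc τ t ⊆ Set.Icc T₀ T := Set.Icc_subset_Icc hτ htT
      have hIF1 : IntervalIntegrable (fun s => F (k₁f s)) volume τ t := by
        apply ContinuousOn.intervalIntegrable
        rw [Set.uIcc_of_le hτt]; exact hF1c.mono hsubτ
      have hIF2 : IntervalIntegrable (fun s => F (k₂f s)) volume τ t := by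
        apply ContinuousOn.intervalIntegrable
        rw [Set.uIcc_of_le hτt]; exact hF2c.mono hsubτ
      have hIc1 : IntervalIntegrable c₁ volume τ t := by
        apply IntegrableOn.intervalIntegrable
        rw [Set.uIcc_of_le hτt]
        exact hc₁.integrableOn_compact_subset hsubτ isCompact_Icc
      have hIc2 : IntervalIntegrable c₂ volume τ t := by
        apply IntegrableOn.intervalIntegrable
        rw [Set.uIcc_of_le hτt]
        exact hc₂.integrableOn_compact_subset hsubτ isCompact_Icc
      have e1 : k₁f t - k₁f τ = ∫ s in τ..t, (F (k₁f s) - c₁ s) := by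
        rw [h1sol t h0t, h1sol τ h0τ]
        have := intervalIntegral.integral_interval_sub_left (hInt1 t h0t) (hInt1 τ h0τ)
        linarith [this]
      have e2 : k₂f t - k₂f τ = ∫ s in τ..t, (F (k₂f s) - c₂ s) := by
        rw [h2sol t h0t, h2sol τ h0τ]
        have := intervalIntegral.integral_interval_sub_left (hInt2 t h0t) (hInt2 τ h0τ)
        linarith [this]
      have e1' : k₁f t - k₁f τ = (∫ s in τ..t, F (k₁f s)) - ∫ s in τ..t, c₁ s := by
        rw [e1, intervalIntegral.integral_sub hIF1 hIc1]
      have e2' : k₂f t - k₂f τ = (∫ s in τ..t, F (k₂f s)) - ∫ s in τ..t, c₂ s := by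
        rw [e2, intervalIntegral.integral_sub hIF2 hIc2]
      have hcle : (∫ s in τ..t, c₁ s) ≤ ∫ s in τ..t, c₂ s := by
        apply intervalIntegral.integral_mono_ae_restrict hτt hIc1 hIc2
        have hss : Set.Icc τ t ⊆ {s : ℝ | T₀ ≤ s ∧ (s : EReal) ≤ T₁} := by
          intro x hx
          refine ⟨hτ.trans hx.1, ?_⟩
          have hx2 : (x : EReal) ≤ (T : EReal) := EReal.coe_le_coe_iff.2 (hx.2.trans htT)
          exact hx2.trans hTT₁
        exact hle.filter_mono (ae_mono (Measure.restrict_mono hss le_rfl))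
      have hFle : -(M * ∫ s in τ..t, |g s|) ≤
          (∫ s in τ..t, F (k₁f s)) - ∫ s in τ..t, F (k₂f s) := by
        rw [← intervalIntegral.integral_sub hIF1 hIF2]
        have hgcc : ContinuousOn (fun s => -(M * |g s|)) (Set.Icc τ t) :=
          (((hgc.mono hsubτ').abs).const_smul M).neg
        have hIg : IntervalIntegrable (fun s => -(M * |g s|)) volume τ t := by
          apply ContinuousOn.intervalIntegrable
          rw [Set.uIcc_of_le hτt]; exact hgcc
        have hmono := intervalIntegral.integral_mono_on hτt hIg (hIF1.sub hIF2)
          (fun x hx => by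
            have h1 := hLip (k₁f x) (k₂f x)
            have h2 := neg_abs_le (F (k₁f x) - F (k₂f x))
            simp only [hgdef]
            linarith)
        calc -(M * ∫ s in τ..t, |g s|) = ∫ s in τ..t, -(M * |g s|) := by
              rw [intervalIntegral.integral_neg, intervalIntegral.integral_const_mul]
          _ ≤ _ := hmono
      simp only [hgdef]
      linarith [e1', e2', hcle, hFle]
    obtain ⟨p1, p2⟩ := compCore hM hT0T hgc key
    exact ⟨fun h => p1 h T ⟨hT0T, le_rfl⟩, fun h => p2 h T ⟨hT0T, le_rfl⟩⟩
  constructor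
  · intro heq t ht htT
    have h0 : 0 ≤ g T₀ := by simp [hgdef, heq]
    have := (main t ht htT).1 h0
    simpa [hgdef, sub_nonneg] using this
  · intro hlt t ht htT
    have h0 : 0 < g T₀ := sub_pos.2 hlt
    have := (main t ht htT).2 h0
    simpa [hgdef, sub_pos] using this
end

section
/- Let F : ℝ → ℝ be strictly increasing and continuous. Let 0 ≤ k₀ < k₁, c ∈ L¹_loc([0,∞)), H > 0 and δ_H > 0 with δ_H · H ≤ k₁ − k₀. Define c_H(t) = c(t) + H for t ∈ [0, δ_H) and c_H(t) = c(t) for t ≥ δ_H. Then k(t; k₁, c_H) > k(t; k₀, c) for all t ≥ 0. -/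
open MeasureTheory Set

theorem stmt5 (F c kH k : ℝ → ℝ) (k₀ k₁ H δ : ℝ)
    (hFmono : StrictMono F) (hFcont : Continuous F)
    (hk₀ : 0 ≤ k₀) (h01 : k₀ < k₁)
    (hc : LocallyIntegrableOn c (Set.Ici 0))
    (hH : 0 < H) (hδ : 0 < δ) (hδH : δ * H ≤ k₁ - k₀)
    (hkcont : ContinuousOn k (Set.Ici 0))
    (hsol : ∀ t ≥ (0:ℝ), k t = k₀ + ∫ s in (0:ℝ)..t, (F (k s) - c s))
    (hkHcont : ContinuousOn kH (Set.Ici 0))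
    (hsolH : ∀ t ≥ (0:ℝ), kH t = k₁ + ∫ s in (0:ℝ)..t,
        (F (kH s) - (if s < δ then c s + H else c s))) :
    ∀ t ≥ (0:ℝ), k t < kH t := by
  by_contra hcon
  push_neg at hcon
  obtain ⟨t₀, ht₀, ht₀'⟩ := hcon
  set S : Set ℝ := {t | 0 ≤ t ∧ kH t ≤ k t} with hS
  have hScl : IsClosed S := by
    have hEq : S = Ici 0 ∩ (fun t => kH t - k t) ⁻¹' Iic 0 := by
      ext t
      simp [hS, sub_nonpos, and_comm]
    rw [hEq]
    exact ContinuousOn.preimage_isClosed_of_isClosed (hkHcont.sub hkcont) isClosed_Ici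
      isClosed_Iic
  have hSne : S.Nonempty := ⟨t₀, ht₀, ht₀'⟩
  have hSbd : BddBelow S := ⟨0, fun x hx => hx.1⟩
  set T := sInf S with hT
  have hTS : T ∈ S := hScl.csInf_mem hSne hSbd
  have hT0 : (0:ℝ) ≤ T := hTS.1
  have hk0 : k 0 = k₀ := by simpa using hsol 0 le_rfl
  have hkH0 : kH 0 = k₁ := by simpa using hsolH 0 le_rfl
  have hTpos : 0 < T := by
    rcases lt_or_eq_of_le hT0 with h | h
    · exact h
    · exfalso
      have := hTS.2
      rw [← h, hk0, hkH0] at this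
      linarith
  have hpos : ∀ s ∈ Ioo (0:ℝ) T, k s < kH s := by
    intro s hs
    by_contra hns
    push_neg at hns
    have : T ≤ s := csInf_le hSbd ⟨hs.1.le, hns⟩
    exact absurd hs.2 (not_lt.2 this)
  -- integrability facts
  have hIccsub : Icc (0:ℝ) T ⊆ Ici 0 := fun x hx => hx.1
  have hIkH : IntervalIntegrable (fun s => F (kH s)) volume 0 T := by
    apply ContinuousOn.intervalIntegrable
    rw [uIcc_of_le hT0]
    exact hFcont.comp_continuousOn (hkHcont.mono hIccsub)
  have hIk : IntervalIntegrable (fun s => F (k s)) volume 0 T := by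
    apply ContinuousOn.intervalIntegrable
    rw [uIcc_of_le hT0]
    exact hFcont.comp_continuousOn (hkcont.mono hIccsub)
  have hIc : IntervalIntegrable c volume 0 T := by
    rw [intervalIntegrable_iff]
    apply (hc.integrableOn_compact_subset hIccsub isCompact_Icc).mono_set
    rw [uIoc_of_le hT0]
    exact Ioc_subset_Icc_self
  have hIf : ∀ a b : ℝ, IntervalIntegrable (fun s => if s < δ then H else 0) volume a b := by
    intro a b
    have hfind : (fun s => if s < δ then H else (0:ℝ)) = (Iio δ).indicator (fun _ => H) := by
      ext s
      simp [Set.indicator, Set.mem_Iio]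
    rw [hfind, intervalIntegrable_iff]
    refine Integrable.indicator ?_ measurableSet_Iio
    refine integrableOn_const ?_
    rw [Set.uIoc]
    exact measure_Ioc_lt_top.ne
  -- the solution formulas at T
  have hsplit : ∀ s : ℝ, F (kH s) - (if s < δ then c s + H else c s)
      = (F (kH s) - c s) - (if s < δ then H else 0) := by
    intro s
    by_cases h : s < δ <;> simp [h] <;> ring
  have hkHT : kH T = k₁ + ((∫ s in (0:ℝ)..T, F (kH s)) - (∫ s in (0:ℝ)..T, c s)
      - ∫ s in (0:ℝ)..T, (if s < δ then H else 0)) := by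
    rw [hsolH T hT0]
    congr 1
    have h1 : (∫ s in (0:ℝ)..T, (F (kH s) - (if s < δ then c s + H else c s)))
        = ∫ s in (0:ℝ)..T, ((F (kH s) - c s) - (if s < δ then H else 0)) := by
      congr 1
      ext s
      exact hsplit s
    rw [h1, intervalIntegral.integral_sub (hIkH.sub hIc) (hIf 0 T),
      intervalIntegral.integral_sub hIkH hIc]
  have hkT : k T = k₀ + ((∫ s in (0:ℝ)..T, F (k s)) - (∫ s in (0:ℝ)..T, c s)) := by
    rw [hsol T hT0, intervalIntegral.integral_sub hIk hIc]
  -- strict positivity of the comparison integral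
  have hIpos : 0 < (∫ s in (0:ℝ)..T, F (kH s)) - ∫ s in (0:ℝ)..T, F (k s) := by
    rw [← intervalIntegral.integral_sub hIkH hIk]
    refine intervalIntegral.intervalIntegral_pos_of_pos_on (hIkH.sub hIk) ?_ hTpos
    intro s hs
    exact sub_pos.2 (hFmono (hpos s hs))
  -- bound on the consumption bump integral
  have hJ : (∫ s in (0:ℝ)..T, (if s < δ then H else 0)) ≤ δ * H := by
    have hmono : ∀ a b : ℝ, a ≤ b →
        (∫ s in a..b, (if s < δ then H else 0)) ≤ (b - a) * H := by
      intro a b hab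
      have h1 : (∫ s in a..b, (if s < δ then H else 0)) ≤ ∫ s in a..b, H := by
        apply intervalIntegral.integral_mono_on hab (hIf a b) intervalIntegrable_const
        intro s _
        by_cases hsδ : s < δ <;> simp [hsδ, hH.le]
      simpa [mul_comm] using h1
    rcases le_total T δ with h | h
    · calc (∫ s in (0:ℝ)..T, (if s < δ then H else 0)) ≤ (T - 0) * H := hmono 0 T hT0
        _ ≤ δ * H := by nlinarith
    · have hadj : (∫ s in (0:ℝ)..δ, (if s < δ then H else 0))
          + (∫ s in δ..T, (if s < δ then H else 0))
          = ∫ s in (0:ℝ)..T, (if s < δ then H else 0) :=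
        intervalIntegral.integral_add_adjacent_intervals (hIf 0 δ) (hIf δ T)
      have h2 : (∫ s in δ..T, (if s < δ then H else 0)) = 0 := by
        have : (∫ s in δ..T, (if s < δ then H else 0)) = ∫ _ in δ..T, (0:ℝ) := by
          apply intervalIntegral.integral_congr
          intro s hs
          rw [uIcc_of_le h] at hs
          simp [not_lt.2 hs.1]
        rw [this]
        simp
      have h1 : (∫ s in (0:ℝ)..δ, (if s < δ then H else 0)) ≤ δ * H := by
        simpa using hmono 0 δ hδ.le
      linarith
  have := hTS.2
  rw [hkT, hkHT] at this
  linarith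
end

section
/- Under the standing assumptions on F, for every 0 ≤ k₀ < k₁, the set of admissible controls Λ(k₀) is strictly contained in Λ(k₁), where Λ(k) := {c ∈ L¹_loc([0,∞)) : c ≥ 0 a.e. and k(t;k,c) ≥ 0 for all t ≥ 0}. -/
open MeasureTheory

noncomputable section

/-- `k` is the trajectory starting at `k₀` driven by control `c` and production `F`. -/
def SolOn (F : ℝ → ℝ) (k₀ : ℝ) (c k : ℝ → ℝ) : Prop :=
  ContinuousOn k (Set.Ici 0) ∧ k 0 = k₀ ∧
    ∀ t ≥ (0:ℝ), k t = k₀ + ∫ s in (0:ℝ)..t, (F (k s) - c s)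

/-- `c` is an admissible control at initial capital `k₀`. -/
def Adm (F : ℝ → ℝ) (k₀ : ℝ) (c : ℝ → ℝ) : Prop :=
  LocallyIntegrableOn c (Set.Ici 0) ∧
  (∀ᵐ t ∂(volume.restrict (Set.Ici 0)), 0 ≤ c t) ∧
  ∃ k, SolOn F k₀ c k ∧ ∀ t ≥ (0:ℝ), 0 ≤ k t

/-- Intertemporal utility functional. -/
def Util (ρ : ℝ) (u c : ℝ → ℝ) : ℝ :=
  ∫ t in Set.Ioi (0:ℝ), Real.exp (-ρ * t) * u (c t)

/-- Value function. -/
def Val (F : ℝ → ℝ) (ρ : ℝ) (u : ℝ → ℝ) (k₀ : ℝ) : ℝ :=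
  sSup {x | ∃ c, Adm F k₀ c ∧ Util ρ u c = x}

open Set intervalIntegral

private lemma clamp_abs_le (B x y : ℝ) :
    |min (max x 0) B - min (max y 0) B| ≤ |x - y| := by
  calc |min (max x 0) B - min (max y 0) B| ≤ max |max x 0 - max y 0| |B - B| :=
        abs_min_sub_min_le_max _ _ _ _
    _ ≤ |x - y| := by
        rw [sub_self, abs_zero, max_eq_left (abs_nonneg _)]
        exact abs_max_sub_max_le_abs x y 0

private lemma mem_nhds_Ici_of_Ico {x T : ℝ} (hx : x ∈ Set.Ico (0:ℝ) T) :
    Set.Icc (0:ℝ) T ∈ nhdsWithin x (Set.Ici x) := by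
  exact mem_nhdsWithin.2 ⟨Set.Iio T, isOpen_Iio, hx.2,
    fun y hy => ⟨hx.1.trans hy.2, hy.1.le⟩⟩

/-- Uniqueness (via Grönwall) of nonnegative solutions of `v' = F (e + v) - F e`. -/
private lemma sol_unique {F : ℝ → ℝ} {M : ℝ}
    (hLip : ∀ x ≥ (0:ℝ), ∀ y ≥ (0:ℝ), |F x - F y| ≤ M * |x - y|)
    {e : ℝ → ℝ} (he0 : ∀ t, 0 ≤ e t) {T : ℝ}
    {v₁ v₂ : ℝ → ℝ} (h0 : v₁ 0 = v₂ 0)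
    (h1 : ∀ t ∈ Set.Icc (0:ℝ) T,
      HasDerivWithinAt v₁ (F (e t + v₁ t) - F (e t)) (Set.Icc (0:ℝ) T) t ∧ 0 ≤ v₁ t)
    (h2 : ∀ t ∈ Set.Icc (0:ℝ) T,
      HasDerivWithinAt v₂ (F (e t + v₂ t) - F (e t)) (Set.Icc (0:ℝ) T) t ∧ 0 ≤ v₂ t) :
    ∀ t ∈ Set.Icc (0:ℝ) T, v₁ t = v₂ t := by
  intro t ht
  set w := fun s => v₁ s - v₂ s with hw
  have hwc : ContinuousOn w (Set.Icc 0 T) := fun s hs =>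
    ((h1 s hs).1.continuousWithinAt.sub (h2 s hs).1.continuousWithinAt)
  have hder : ∀ x ∈ Set.Ico (0:ℝ) T, HasDerivWithinAt w
      ((F (e x + v₁ x) - F (e x)) - (F (e x + v₂ x) - F (e x))) (Set.Ici x) x := by
    intro x hx
    exact (((h1 x (Set.Ico_subset_Icc_self hx)).1.sub
      (h2 x (Set.Ico_subset_Icc_self hx)).1)).mono_of_mem_nhdsWithin (mem_nhds_Ici_of_Ico hx)
  have hb := norm_le_gronwallBound_of_norm_deriv_right_le (δ := 0) (K := M) (ε := 0)
      hwc hder (by simp [hw, h0]) ?_ t ht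
  · rw [gronwallBound_ε0_δ0] at hb
    have : ‖w t‖ = 0 := le_antisymm hb (norm_nonneg _)
    have : w t = 0 := by simpa [Real.norm_eq_abs, abs_eq_zero] using this
    simpa [hw, sub_eq_zero] using this
  · intro x hx
    have hx' := Set.Ico_subset_Icc_self hx
    have hx1 : 0 ≤ e x + v₁ x := add_nonneg (he0 x) (h1 x hx').2
    have hx2 : 0 ≤ e x + v₂ x := add_nonneg (he0 x) (h2 x hx').2
    have := hLip _ hx1 _ hx2
    rw [add_sub_add_left_eq_sub] at this
    simpa [Real.norm_eq_abs, sub_sub_sub_cancel_right, hw] using le_trans this (by simp)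

/-- Existence of a positive solution of `v' = F (e + v) - F e`, `v 0 = v₀ > 0`, on `[0, T]`. -/
private lemma exists_sol {F : ℝ → ℝ} {M : ℝ}
    (hFc : Continuous F) (hmono : Monotone F) (hF0 : F 0 = 0) (hM : 0 ≤ M)
    (hLip : ∀ x ≥ (0:ℝ), ∀ y ≥ (0:ℝ), |F x - F y| ≤ M * |x - y|)
    {e : ℝ → ℝ} (he : Continuous e) (he0 : ∀ t, 0 ≤ e t)
    {v₀ : ℝ} (hv₀ : 0 < v₀) {T : ℝ} (hT : 0 ≤ T) :
    ∃ v : ℝ → ℝ, v 0 = v₀ ∧ ∀ t ∈ Set.Icc (0:ℝ) T,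
      HasDerivWithinAt v (F (e t + v t) - F (e t)) (Set.Icc (0:ℝ) T) t ∧ 0 < v t := by
  obtain ⟨Kb, hKb⟩ := isCompact_Icc.exists_bound_of_continuousOn
    (he.continuousOn : ContinuousOn e (Set.Icc 0 T))
  have hKb' : ∀ t ∈ Set.Icc (0:ℝ) T, e t ≤ Kb := fun t ht =>
    (le_abs_self _).trans (by simpa [Real.norm_eq_abs] using hKb t ht)
  have hKb0 : 0 ≤ Kb := le_trans (norm_nonneg (e 0)) (hKb 0 ⟨le_rfl, hT⟩)
  have hvexp : 0 < v₀ * Real.exp (M * T) := mul_pos hv₀ (Real.exp_pos _)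
  set B := Kb + v₀ * Real.exp (M * T) with hBdef
  have hB0 : 0 ≤ B := by positivity
  set cl := fun x : ℝ => min (max x 0) B with hcl
  have hcl_mem : ∀ x, cl x ∈ Set.Icc (0:ℝ) B := fun x =>
    ⟨le_min (le_max_right _ _) hB0, min_le_right _ _⟩
  have hcl_id : ∀ x, 0 ≤ x → x ≤ B → cl x = x := by
    intro x h1 h2; simp [hcl, max_eq_left h1, min_eq_left h2]
  set G := fun x => F (cl x) with hG
  have hGlip : ∀ x y, |G x - G y| ≤ M * |x - y| := fun x y =>
    (hLip _ (hcl_mem x).1 _ (hcl_mem y).1).trans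
      (mul_le_mul_of_nonneg_left (clamp_abs_le B x y) hM)
  have hGmem : ∀ x, G x ∈ Set.Icc (0:ℝ) (F B) := fun x =>
    ⟨hF0 ▸ hmono (hcl_mem x).1, hmono (hcl_mem x).2⟩
  have hFB0 : 0 ≤ F B := hF0 ▸ hmono hB0
  set h := fun (t x : ℝ) => G (e t + x) - G (e t) with hh
  have hh_abs : ∀ t x, |h t x| ≤ M * |x| := by
    intro t x
    have := hGlip (e t + x) (e t)
    simpa [hh, add_sub_cancel_left] using this
  have hh_bound : ∀ t x, |h t x| ≤ F B := by
    intro t x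
    have h1 := hGmem (e t + x); have h2 := hGmem (e t)
    have heq : h t x = G (e t + x) - G (e t) := rfl
    rw [heq, abs_sub_le_iff]
    exact ⟨by linarith [h1.2, h2.1], by linarith [h1.1, h2.2]⟩
  have hGc : Continuous G :=
    hFc.comp ((continuous_id.max continuous_const).min continuous_const)
  have hpl : IsPicardLindelof h (tmin := 0) (tmax := T) ⟨0, ⟨le_rfl, hT⟩⟩ v₀
      (F B * T).toNNReal 0 (F B).toNNReal M.toNNReal := by
    refine ⟨?_, ?_, ?_, ?_⟩
    · intro t _
      apply LipschitzWith.lipschitzOnWith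
      apply LipschitzWith.of_dist_le_mul
      intro x y
      rw [Real.dist_eq, Real.dist_eq, Real.coe_toNNReal M hM]
      have heq : h t x - h t y = G (e t + x) - G (e t + y) :=
        sub_sub_sub_cancel_right _ _ _
      rw [heq]
      calc |G (e t + x) - G (e t + y)| ≤ M * |(e t + x) - (e t + y)| := hGlip _ _
        _ = M * |x - y| := by rw [add_sub_add_left_eq_sub]
    · intro x _
      exact ((hGc.comp (he.add continuous_const)).sub (hGc.comp he)).continuousOn
    · intro t _ x _
      rw [Real.norm_eq_abs, Real.coe_toNNReal _ hFB0]; exact hh_bound t x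
    · rw [Real.coe_toNNReal _ hFB0, Real.coe_toNNReal _ (mul_nonneg hFB0 hT)]
      simp [max_eq_left hT]
  obtain ⟨v, hv0, hvd⟩ : ∃ v : ℝ → ℝ, v 0 = v₀ ∧ ∀ t ∈ Set.Icc (0:ℝ) T,
      HasDerivWithinAt v (h t (v t)) (Set.Icc (0:ℝ) T) t :=
    hpl.exists_eq_forall_mem_Icc_hasDerivWithinAt₀
  have hvc : ContinuousOn v (Set.Icc 0 T) := fun t ht => (hvd t ht).continuousWithinAt
  have hbound : ∀ x ∈ Set.Ico (0:ℝ) T, ‖h x (v x)‖ ≤ M * ‖v x‖ + 0 := by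
    intro x _
    rw [Real.norm_eq_abs, Real.norm_eq_abs, add_zero]
    exact hh_abs x (v x)
  have hub : ∀ t ∈ Set.Icc (0:ℝ) T, ‖v t‖ ≤ v₀ * Real.exp (M * t) := by
    intro t ht
    have := norm_le_gronwallBound_of_norm_deriv_right_le (f := v)
      (f' := fun s => h s (v s)) (δ := v₀) (K := M) (ε := 0) (a := 0) (b := T)
      hvc
      (fun x hx => (hvd x (Set.Ico_subset_Icc_self hx)).mono_of_mem_nhdsWithin
        (mem_nhds_Ici_of_Ico hx))
      (by rw [hv0, Real.norm_eq_abs, abs_of_pos hv₀]) hbound t ht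
    rwa [gronwallBound_ε0, sub_zero] at this
  have hpos : ∀ t ∈ Set.Icc (0:ℝ) T, 0 < v t := by
    by_contra hcon
    push_neg at hcon
    obtain ⟨t₁, ht₁, hv₁⟩ := hcon
    have h00 : (0:ℝ) ∈ Set.Icc (v t₁) (v 0) := ⟨hv₁, by rw [hv0]; exact hv₀.le⟩
    obtain ⟨t₂, ht₂, hvt₂⟩ := intermediate_value_Icc' ht₁.1
      (hvc.mono (Set.Icc_subset_Icc le_rfl ht₁.2)) h00
    have ht₂T : t₂ ∈ Set.Icc (0:ℝ) T := ⟨ht₂.1, ht₂.2.trans ht₁.2⟩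
    set w := fun s => v (t₂ - s) with hwdef
    have hsub : Set.MapsTo (fun u : ℝ => t₂ - u) (Set.Icc 0 t₂) (Set.Icc 0 T) := by
      intro u hu
      simp only [Set.mem_Icc] at hu ⊢
      exact ⟨by linarith [hu.2], by linarith [hu.1, ht₂T.2]⟩
    have hwder : ∀ s ∈ Set.Ico (0:ℝ) t₂,
        HasDerivWithinAt w (-(h (t₂ - s) (w s))) (Set.Ici s) s := by
      intro s hs
      have hd1 := hvd (t₂ - s) (hsub ⟨hs.1, hs.2.le⟩)
      have hd2 : HasDerivWithinAt (fun u : ℝ => t₂ - u) (-1) (Set.Icc 0 t₂) s :=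
        ((hasDerivAt_id s).const_sub t₂).hasDerivWithinAt
      have hcomp := HasDerivWithinAt.comp (h := fun u : ℝ => t₂ - u)
        (h₂ := v) (x := s) hd1 hd2 hsub
      have := hcomp.mono_of_mem_nhdsWithin (s := Set.Ici s)
        (mem_nhdsWithin.2 ⟨Set.Iio t₂, isOpen_Iio, hs.2,
          fun y hy => ⟨hs.1.trans hy.2, hy.1.le⟩⟩)
      simpa [hwdef, Function.comp_def, mul_comm] using this
    have hwcont : ContinuousOn w (Set.Icc 0 t₂) :=
      hvc.comp ((continuous_const.sub continuous_id).continuousOn) hsub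
    have hfinal := norm_le_gronwallBound_of_norm_deriv_right_le (δ := 0) (K := M) (ε := 0)
      hwcont hwder (by simp [hwdef, hvt₂]) ?_ t₂ ⟨ht₂.1, le_rfl⟩
    · rw [gronwallBound_ε0_δ0] at hfinal
      have : v 0 = 0 := by
        have h1 : ‖w t₂‖ = 0 := le_antisymm hfinal (norm_nonneg _)
        simpa [hwdef, Real.norm_eq_abs, abs_eq_zero] using h1
      rw [hv0] at this; linarith
    · intro x _
      rw [norm_neg, Real.norm_eq_abs, Real.norm_eq_abs, add_zero]
      exact hh_abs (t₂ - x) (w x)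
  refine ⟨v, hv0, fun t ht => ⟨?_, hpos t ht⟩⟩
  have hvtB : v t ≤ v₀ * Real.exp (M * T) := by
    have h1 := hub t ht
    have h2 : Real.exp (M * t) ≤ Real.exp (M * T) :=
      Real.exp_le_exp.2 (mul_le_mul_of_nonneg_left ht.2 hM)
    calc v t ≤ ‖v t‖ := le_abs_self _
      _ ≤ v₀ * Real.exp (M * t) := h1
      _ ≤ v₀ * Real.exp (M * T) := by nlinarith [hv₀.le]
  have hc1 : cl (e t + v t) = e t + v t :=
    hcl_id _ (add_nonneg (he0 t) (hpos t ht).le)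
      (by have := hKb' t ht; rw [hBdef]; linarith)
  have hc2 : cl (e t) = e t :=
    hcl_id _ (he0 t) (by have := hKb' t ht; rw [hBdef]; linarith)
  have := hvd t ht
  simpa [hh, hG, hc1, hc2] using this

theorem stmt7 (F : ℝ → ℝ) (M k₀ k₁ : ℝ)
    (hF : ContDiff ℝ 1 F) (hFmono : StrictMono F) (hF0 : F 0 = 0)
    (hLip : ∀ x ≥ (0:ℝ), ∀ y ≥ (0:ℝ), |F x - F y| ≤ M * |x - y|)
    (hk₀ : 0 ≤ k₀) (h01 : k₀ < k₁) :
    {c : ℝ → ℝ | Adm F k₀ c} ⊂ {c : ℝ → ℝ | Adm F k₁ c} := by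
  have hM0 : 0 ≤ M := by
    have h1 := hLip 1 zero_le_one 0 le_rfl
    rw [sub_zero, abs_one, mul_one] at h1
    linarith [abs_nonneg (F 1 - F 0)]
  have hk₁ : 0 < k₁ := lt_of_le_of_lt hk₀ h01
  constructor
  · -- inclusion
    intro c hc
    obtain ⟨hloc, hcnn, k, ⟨hkc, hk0, hkeq⟩, hknn⟩ := hc
    set e := fun t : ℝ => k (max t 0) with hedef
    have he : Continuous e :=
      hkc.comp_continuous (continuous_id.max continuous_const) (fun x => Set.mem_Ici.2 (le_max_right _ _))
    have he0 : ∀ t, 0 ≤ e t := fun t => hknn _ (le_max_right _ _)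
    have hee : ∀ t, 0 ≤ t → e t = k t := fun t ht => by simp [hedef, max_eq_left ht]
    have hv₀pos : 0 < k₁ - k₀ := sub_pos.2 h01
    have hex : ∀ n : ℕ, ∃ v : ℝ → ℝ, v 0 = k₁ - k₀ ∧ ∀ t ∈ Set.Icc (0:ℝ) n,
        HasDerivWithinAt v (F (e t + v t) - F (e t)) (Set.Icc (0:ℝ) n) t ∧ 0 < v t :=
      fun n => exists_sol hF.continuous hFmono.monotone hF0 hM0 hLip he he0 hv₀pos
        (Nat.cast_nonneg n)
    choose vf hvf0 hvfP using hex
    have hagree : ∀ (m n : ℕ) t, t ∈ Set.Icc (0:ℝ) (min (m:ℝ) n) → vf m t = vf n t := by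
      intro m n t ht
      refine sol_unique hLip he0 (T := min (m:ℝ) n)
        (by rw [hvf0 m, hvf0 n]) ?_ ?_ t ht
      · intro s hs
        have hs' : s ∈ Set.Icc (0:ℝ) m := ⟨hs.1, hs.2.trans (min_le_left _ _)⟩
        exact ⟨((hvfP m s hs').1).mono (Set.Icc_subset_Icc le_rfl (min_le_left _ _)),
          (hvfP m s hs').2.le⟩
      · intro s hs
        have hs' : s ∈ Set.Icc (0:ℝ) n := ⟨hs.1, hs.2.trans (min_le_right _ _)⟩
        exact ⟨((hvfP n s hs').1).mono (Set.Icc_subset_Icc le_rfl (min_le_right _ _)),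
          (hvfP n s hs').2.le⟩
    set v := fun t : ℝ => vf (⌊t⌋₊ + 1) t with hvdef
    have hfl : ∀ t : ℝ, t ≤ ((⌊t⌋₊ + 1 : ℕ) : ℝ) := by
      intro t; push_cast; exact (Nat.lt_floor_add_one t).le
    have hvn : ∀ (n : ℕ) t, t ∈ Set.Icc (0:ℝ) n → v t = vf n t := by
      intro n t ht
      exact hagree _ n t ⟨ht.1, le_min (hfl t) ht.2⟩
    have hv0' : v 0 = k₁ - k₀ := hvf0 _
    have hvmem : ∀ t : ℝ, 0 ≤ t → t ∈ Set.Icc (0:ℝ) ((⌊t⌋₊ + 1 : ℕ) : ℝ) :=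
      fun t ht => ⟨ht, hfl t⟩
    have hvpos : ∀ t, 0 ≤ t → 0 < v t := fun t ht => (hvfP _ t (hvmem t ht)).2
    have hvcont : ContinuousOn v (Set.Ici 0) := by
      intro t ht
      set n := ⌊t⌋₊ + 1 with hn
      have htn : t < (n : ℝ) := by rw [hn]; push_cast; exact Nat.lt_floor_add_one t
      have hmem : Set.Icc (0:ℝ) n ∈ nhdsWithin t (Set.Ici 0) :=
        mem_nhdsWithin.2 ⟨Set.Iio (n:ℝ), isOpen_Iio, htn, fun y hy => ⟨hy.2, hy.1.le⟩⟩
      have h1 : ContinuousWithinAt (vf n) (Set.Icc (0:ℝ) n) t :=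
        ((hvfP n t ⟨ht, htn.le⟩).1).continuousWithinAt
      exact (h1.mono_of_mem_nhdsWithin hmem).congr_of_eventuallyEq
        (Filter.eventuallyEq_of_mem hmem (fun y hy => hvn n y hy)) (hvn n t ⟨ht, htn.le⟩)
    refine ⟨hloc, hcnn, fun t => e t + v t, ⟨(he.continuousOn.add hvcont), ?_, ?_⟩, ?_⟩
    · show e 0 + v 0 = k₁
      rw [hee 0 le_rfl, hk0, hv0']; ring
    · intro t ht
      set n := ⌊t⌋₊ + 1 with hn
      have htn : t < (n : ℝ) := by rw [hn]; push_cast; exact Nat.lt_floor_add_one t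
      have hder : ∀ x ∈ Set.Ioo (0:ℝ) t,
          HasDerivWithinAt v (F (e x + v x) - F (e x)) (Set.Ioi x) x := by
        intro x hx
        have hxn : x ∈ Set.Icc (0:ℝ) n := ⟨hx.1.le, (hx.2.trans htn).le⟩
        have hmem' : Set.Icc (0:ℝ) n ∈ nhdsWithin x (Set.Ioi x) :=
          mem_nhdsWithin.2 ⟨Set.Ioo 0 (n:ℝ), isOpen_Ioo, ⟨hx.1, hx.2.trans htn⟩,
            fun y hy => ⟨hy.1.1.le, hy.1.2.le⟩⟩
        have h1 := ((hvfP n x hxn).1).mono_of_mem_nhdsWithin hmem'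
        have h2 := h1.congr_of_eventuallyEq
          (Filter.eventuallyEq_of_mem hmem' (fun y hy => hvn n y hy)) (hvn n x hxn)
        rwa [← hvn n x hxn] at h2
      have hvcont' : ContinuousOn v (Set.Icc 0 t) := hvcont.mono (fun y hy => hy.1)
      have hgcont : ContinuousOn (fun s => F (e s + v s) - F (e s)) (Set.Icc 0 t) :=
        (hF.continuous.comp_continuousOn (he.continuousOn.add hvcont')).sub
          (hF.continuous.comp he).continuousOn
      have hgint : IntervalIntegrable (fun s => F (e s + v s) - F (e s)) volume 0 t :=
        ContinuousOn.intervalIntegrable (by rw [uIcc_of_le ht]; exact hgcont)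
      have hFTC := intervalIntegral.integral_eq_sub_of_hasDeriv_right_of_le ht hvcont'
        hder hgint
      have hcint : IntervalIntegrable c volume 0 t := by
        apply MeasureTheory.IntegrableOn.intervalIntegrable
        rw [uIcc_of_le ht]
        exact hloc.integrableOn_compact_subset (fun y (hy : y ∈ Set.Icc (0:ℝ) t) => hy.1)
          isCompact_Icc
      have hFe_int : IntervalIntegrable (fun s => F (e s)) volume 0 t :=
        (hF.continuous.comp he).intervalIntegrable 0 t
      have hsplit : (∫ s in (0:ℝ)..t, (F (e s + v s) - c s)) =
          (∫ s in (0:ℝ)..t, (F (e s) - c s)) +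
            ∫ s in (0:ℝ)..t, (F (e s + v s) - F (e s)) := by
        rw [← intervalIntegral.integral_add (hFe_int.sub hcint) hgint]
        apply intervalIntegral.integral_congr
        intro s _
        ring
      have he_eq_k : (∫ s in (0:ℝ)..t, (F (k s) - c s)) =
          ∫ s in (0:ℝ)..t, (F (e s) - c s) := by
        apply intervalIntegral.integral_congr
        intro s hs
        rw [uIcc_of_le ht] at hs
        show F (k s) - c s = F (e s) - c s
        rw [hee s hs.1]
      have hkt := hkeq t ht
      have het := hee t ht
      show e t + v t = k₁ + ∫ s in (0:ℝ)..t, (F (e s + v s) - c s)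
      rw [hsplit, hFTC, ← he_eq_k, hv0']
      rw [het, hkt]
      ring
    · intro t ht
      exact add_nonneg (he0 t) (hvpos t ht).le
  · -- strictness
    intro hsub
    have hcmem : Adm F k₁ (fun _ => F k₁) := by
      refine ⟨(MeasureTheory.locallyIntegrable_const _).locallyIntegrableOn _, ?_, ?_⟩
      · filter_upwards with t
        exact le_of_lt (hF0 ▸ hFmono hk₁)
      · refine ⟨fun _ => k₁, ⟨continuousOn_const, rfl, ?_⟩, fun t _ => hk₁.le⟩
        intro t _
        simp
    have hc0 : Adm F k₀ (fun _ => F k₁) := hsub hcmem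
    obtain ⟨-, -, k, ⟨hkc, hk0, hkeq⟩, hknn⟩ := hc0
    simp only at hkeq
    set g := fun s => F (k s) - F k₁ with hg
    have hgc : ContinuousOn g (Set.Ici 0) :=
      (hF.continuous.comp_continuousOn hkc).sub continuousOn_const
    have hint : ∀ a b : ℝ, 0 ≤ a → a ≤ b → IntervalIntegrable g volume a b := by
      intro a b ha hab
      apply ContinuousOn.intervalIntegrable
      rw [uIcc_of_le hab]
      exact hgc.mono (fun y hy => ha.trans hy.1)
    have step1 : ∀ t, 0 ≤ t → k t ≤ k₀ := by
      intro b hb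
      have key : Set.Icc (0:ℝ) b ⊆ {t | k t ≤ k₀} := by
        apply IsClosed.Icc_subset_of_forall_exists_gt
        · have hcl : IsClosed (Set.Icc (0:ℝ) b ∩ k ⁻¹' (Set.Iic k₀)) :=
            (hkc.mono (fun y (hy : y ∈ Set.Icc (0:ℝ) b) => hy.1)).preimage_isClosed_of_isClosed
              isClosed_Icc isClosed_Iic
          rw [Set.inter_comm] at hcl
          exact hcl
        · exact Set.mem_setOf.2 hk0.le
        · intro x hx y hy
          obtain ⟨hxs, hx0, hxb⟩ : k x ≤ k₀ ∧ 0 ≤ x ∧ x < b := ⟨hx.1, hx.2.1, hx.2.2⟩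
          have hcw : ContinuousWithinAt k (Set.Ici 0) x := hkc x hx0
          have hev : k ⁻¹' (Set.Iio k₁) ∈ nhdsWithin x (Set.Ici 0) :=
            hcw (Iio_mem_nhds (lt_of_le_of_lt hxs h01))
          rcases mem_nhdsWithin.1 hev with ⟨U, hUopen, hxU, hU⟩
          rcases Metric.isOpen_iff.1 hUopen x hxU with ⟨ε, hε, hball⟩
          set z := min y (x + ε/2) with hz
          have hxz : x < z := lt_min hy (by linarith)
          have hzy : z ≤ y := min_le_left _ _
          have hz0 : 0 ≤ z := hx0.trans hxz.le
          have hsmall : ∀ u ∈ Set.Icc x z, k u < k₁ := by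
            intro u hu
            apply hU
            refine ⟨hball ?_, hx0.trans hu.1⟩
            rw [Metric.mem_ball, Real.dist_eq, abs_of_nonneg (by linarith [hu.1])]
            have : u ≤ x + ε/2 := hu.2.trans (min_le_right _ _)
            linarith
          have hkz : k z ≤ k x := by
            have e1 := hkeq z hz0
            have e2 := hkeq x hx0
            have hsubint := intervalIntegral.integral_interval_sub_left
              (hint 0 z le_rfl hz0) (hint 0 x le_rfl hx0)
            have hneg : (∫ s in x..z, g s) ≤ 0 := by
              have hmon := intervalIntegral.integral_mono_on (f := g)
                (g := fun _ => (0:ℝ)) hxz.le (hint x z hx0 hxz.le)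
                intervalIntegrable_const
                (fun u hu => sub_nonpos.2 (le_of_lt (hFmono (hsmall u hu))))
              simpa using hmon
            simp only [hg] at hsubint
            linarith [e1, e2, hsubint, hneg]
          exact ⟨z, Set.mem_setOf.2 (hkz.trans hxs), hxz, hzy⟩
      exact key ⟨hb, le_rfl⟩
    have hδ : 0 < F k₁ - F k₀ := sub_pos.2 (hFmono h01)
    set t := (k₀ + 1) / (F k₁ - F k₀) with htdef
    have ht0 : 0 ≤ t := div_nonneg (by linarith) hδ.le
    have hb2 : (∫ s in (0:ℝ)..t, g s) ≤ ∫ s in (0:ℝ)..t, (F k₀ - F k₁) := by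
      apply intervalIntegral.integral_mono_on ht0 (hint 0 t le_rfl ht0)
        intervalIntegrable_const
      intro u hu
      have := hFmono.monotone (step1 u hu.1)
      simp only [hg]
      linarith
    rw [intervalIntegral.integral_const, smul_eq_mul, sub_zero] at hb2
    have hkt := hkeq t ht0
    have hnn := hknn t ht0
    have hmul : t * (F k₁ - F k₀) = k₀ + 1 := div_mul_cancel₀ _ hδ.ne'
    have h3 : t * (F k₀ - F k₁) = -(k₀ + 1) := by
      rw [show F k₀ - F k₁ = -(F k₁ - F k₀) by ring, mul_neg, hmul]
    simp only [hg] at hb2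
    linarith [hkt, hnn, hb2, h3]
end
end

section
/- Suppose F(x) ≤ (L+ε₀)x + M for all x ≥ 0, where L, ε₀, M > 0. Let k₀ ≥ 0, c ≥ 0 a.e. locally integrable, and k the nonnegative solution of k' = F(k) − c, k(0)=k₀. Set M(k₀) := 1 + max{(L+ε₀)k₀, M}. Then for every t ≥ 0: ∫₀ᵗ c(s) ds ≤ t·M(k₀)·(1 + e^{(L+ε₀)t}) + M(k₀)/(L+ε₀). -/
open MeasureTheory Set

private lemma key_exp (x : ℝ) (hx : 0 ≤ x) :
    2 * (Real.exp x - 1) ≤ x * (1 + Real.exp x) := by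
  have hd : ∀ y : ℝ, HasDerivAt (fun z : ℝ => z * (1 + Real.exp z) - 2 * (Real.exp z - 1))
      (1 - Real.exp y + y * Real.exp y) y := by
    intro y
    have h := ((hasDerivAt_id y).mul ((hasDerivAt_const y (1:ℝ)).add (Real.hasDerivAt_exp y))).sub
      (((Real.hasDerivAt_exp y).sub_const 1).const_mul 2)
    refine h.congr_deriv ?_
    simp only [id_eq, Pi.add_apply]
    ring
  have hmono : MonotoneOn (fun z : ℝ => z * (1 + Real.exp z) - 2 * (Real.exp z - 1)) (Ici 0) := by
    apply monotoneOn_of_deriv_nonneg (convex_Ici 0)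
    · exact fun y _ => (hd y).continuousAt.continuousWithinAt
    · exact fun y _ => (hd y).differentiableAt.differentiableWithinAt
    · intro y hy
      rw [interior_Ici] at hy
      rw [(hd y).deriv]
      have h1 : (-y) + 1 ≤ Real.exp (-y) := Real.add_one_le_exp _
      have h2 : Real.exp (-y) * Real.exp y = 1 := by rw [← Real.exp_add]; simp
      nlinarith [Real.exp_pos y]
  have h := hmono (self_mem_Ici) hx hx
  simp only [Real.exp_zero] at h
  linarith

set_option maxHeartbeats 1000000 in
theorem stmt9 (F c k : ℝ → ℝ) (L ε₀ M k₀ : ℝ)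
    (hL : 0 < L) (hε₀ : 0 < ε₀) (hM : 0 < M) (hk₀ : 0 ≤ k₀)
    (hFsub : ∀ x ≥ (0:ℝ), F x ≤ (L + ε₀) * x + M)
    (hc : LocallyIntegrableOn c (Set.Ici 0))
    (hcpos : ∀ᵐ t ∂(volume.restrict (Set.Ici 0)), 0 ≤ c t)
    (hkcont : ContinuousOn k (Set.Ici 0)) (hk0 : k 0 = k₀)
    (hsol : ∀ t ≥ (0:ℝ), k t = k₀ + ∫ s in (0:ℝ)..t, (F (k s) - c s))
    (hknn : ∀ t ≥ (0:ℝ), 0 ≤ k t) :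
    ∀ t ≥ (0:ℝ), (∫ s in (0:ℝ)..t, c s) ≤
      t * (1 + max ((L + ε₀) * k₀) M) * (1 + Real.exp ((L + ε₀) * t)) +
        (1 + max ((L + ε₀) * k₀) M) / (L + ε₀) := by
  intro t ht
  set lam : ℝ := L + ε₀ with hlam_def
  have hlam : 0 < lam := add_pos hL hε₀
  set M₀ : ℝ := 1 + max (lam * k₀) M with hM₀_def
  have hM₀M : M ≤ M₀ := by
    have := le_max_right (lam * k₀) M; linarith
  have hM₀k : lam * k₀ ≤ M₀ := by
    have := le_max_left (lam * k₀) M; linarith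
  have hM₀pos : 0 < M₀ := lt_of_lt_of_le hM hM₀M
  rcases eq_or_lt_of_le ht with rfl | ht0
  · rw [intervalIntegral.integral_same]
    have h1 : 0 ≤ M₀ / lam := div_nonneg hM₀pos.le hlam.le
    simp only [zero_mul]
    linarith
  set g : ℝ → ℝ := fun s => F (k s) - c s with hg_def
  have hIcc_sub : Icc (0:ℝ) t ⊆ Ici 0 := Icc_subset_Ici_self
  have hc_int : IntegrableOn c (Icc 0 t) := hc.integrableOn_compact_subset hIcc_sub isCompact_Icc
  have hkcont' : ContinuousOn k (Icc 0 t) := hkcont.mono hIcc_sub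
  obtain ⟨K, hK⟩ := isCompact_Icc.exists_bound_of_continuousOn hkcont'
  have hKnn : 0 ≤ K := (norm_nonneg _).trans (hK 0 ⟨le_refl 0, ht⟩)
  have hkleK : ∀ x ∈ Icc (0:ℝ) t, k x ≤ K := fun x hx =>
    (le_abs_self _).trans (by simpa [Real.norm_eq_abs] using hK x hx)
  set B : ℝ := lam * K + M with hB_def
  have hBpos : 0 < B := by positivity
  -- a.e. upper bound for g on Ioc 0 s
  have hgae : ∀ s ∈ Icc (0:ℝ) t, ∀ᵐ u ∂(volume.restrict (Ioc 0 s)), g u ≤ B := by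
    intro s hs
    have h1 : ∀ᵐ u ∂(volume.restrict (Ioc (0:ℝ) s)), 0 ≤ c u :=
      ae_restrict_of_ae_restrict_of_subset (Ioc_subset_Icc_self.trans
        ((Icc_subset_Icc_right hs.2).trans hIcc_sub)) hcpos
    have h2 : ∀ᵐ u ∂(volume.restrict (Ioc (0:ℝ) s)), u ∈ Ioc (0:ℝ) s :=
      ae_restrict_mem measurableSet_Ioc
    filter_upwards [h1, h2] with u hcu hu
    have hu' : u ∈ Icc (0:ℝ) t := ⟨hu.1.le, hu.2.trans hs.2⟩
    have := hFsub (k u) (hknn u hu.1.le)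
    have := hkleK u hu'
    simp only [hg_def]
    nlinarith
  -- the integral equation on Ioc sets
  have hksol : ∀ s, 0 ≤ s → (∫ u in Ioc (0:ℝ) s, g u) = k s - k₀ := by
    intro s hs
    have h := hsol s hs
    rw [intervalIntegral.integral_of_le hs] at h
    simp only [← hg_def] at h
    linarith
  -- uniform bound on ∫ ‖g‖ over Ioc 0 s for integrable s
  have hbound : ∀ s ∈ Icc (0:ℝ) t, IntegrableOn g (Ioc 0 s) →
      (∫ u in Ioc (0:ℝ) s, ‖g u‖) ≤ 2 * B * t + k₀ + K := by
    intro s hs hgint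
    have hmeas : volume (Ioc (0:ℝ) s) < ⊤ := measure_Ioc_lt_top
    have hconst : IntegrableOn (fun _ : ℝ => B) (Ioc 0 s) :=
      integrableOn_const hmeas.ne
    have hpos_int : IntegrableOn (fun u => max (g u) 0) (Ioc 0 s) := hgint.pos_part
    have h1 : (∫ u in Ioc (0:ℝ) s, max (g u) 0) ≤ ∫ _u in Ioc (0:ℝ) s, B := by
      apply integral_mono_ae hpos_int hconst
      filter_upwards [hgae s hs] with u hu
      exact max_le hu hBpos.le
    have h2 : (∫ _u in Ioc (0:ℝ) s, B) = (volume (Ioc (0:ℝ) s)).toReal * B := by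
      rw [setIntegral_const, smul_eq_mul]
      rfl
    have h3 : (volume (Ioc (0:ℝ) s)).toReal ≤ t := by
      rw [Real.volume_Ioc, ENNReal.toReal_ofReal_eq_iff.mpr]
      · linarith [hs.2]
      · linarith [hs.1]
    have h4 : (∫ u in Ioc (0:ℝ) s, ‖g u‖) ≤
        ∫ u in Ioc (0:ℝ) s, (2 * max (g u) 0 - g u) := by
      apply integral_mono hgint.norm ((hpos_int.const_mul 2).sub hgint)
      intro u
      show ‖g u‖ ≤ 2 * max (g u) 0 - g u
      rw [Real.norm_eq_abs]
      rcases le_total 0 (g u) with h | h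
      · rw [abs_of_nonneg h, max_eq_left h]; linarith
      · rw [abs_of_nonpos h, max_eq_right h]; linarith
    have h5 : (∫ u in Ioc (0:ℝ) s, (2 * max (g u) 0 - g u)) =
        2 * (∫ u in Ioc (0:ℝ) s, max (g u) 0) - ∫ u in Ioc (0:ℝ) s, g u := by
      rw [integral_sub (hpos_int.const_mul 2) hgint, integral_const_mul]
    have h6 := hksol s hs.1
    have h7 : -K ≤ k s := by
      have := hK s hs
      rw [Real.norm_eq_abs] at this
      linarith [(abs_le.mp this).1]
    have hB_nonneg : 0 ≤ B * (volume (Ioc (0:ℝ) s)).toReal := by positivity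
    nlinarith [mul_le_mul_of_nonneg_left h3 hBpos.le]
  -- the set of times with integrable g
  set A : Set ℝ := {s | s ∈ Icc (0:ℝ) t ∧ IntegrableOn g (Ioc 0 s)} with hA_def
  have hA0 : (0:ℝ) ∈ A := ⟨⟨le_refl 0, ht⟩, by simp [IntegrableOn]⟩
  have hAne : A.Nonempty := ⟨0, hA0⟩
  have hAbdd : BddAbove A := ⟨t, fun s hs => hs.1.2⟩
  set τ := sSup A with hτ_def
  have hτmem : τ ∈ Icc (0:ℝ) t := ⟨le_csSup hAbdd hA0, csSup_le hAne fun s hs => hs.1.2⟩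
  -- integrability up to τ
  have hτA : IntegrableOn g (Ioc 0 τ) := by
    obtain ⟨u, hu_mono, hu_tendsto, hu_mem⟩ := exists_seq_tendsto_sSup hAne hAbdd
    have hu_nonneg : ∀ n, 0 ≤ u n := fun n => (hu_mem n).1.1
    have hu_le : ∀ n, u n ≤ t := fun n => (hu_mem n).1.2
    set S : ℕ → Set ℝ := fun n => Nat.rec (Ioc 0 (u 0)) (fun m _ => Ioc (u m) (u (m + 1))) n
      with hS_def
    have hSmeas : ∀ n, MeasurableSet (S n) := by
      intro n; cases n <;> exact measurableSet_Ioc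
    have hS_subset : ∀ n, S n ⊆ Ioc 0 (u n) := by
      intro n
      cases n with
      | zero => exact subset_rfl
      | succ m => exact Ioc_subset_Ioc_left (hu_nonneg m)
    have hSint : ∀ n, IntegrableOn g (S n) := fun n =>
      ((hu_mem n).2).mono_set (hS_subset n)
    have hUnion : ∀ n, Ioc (0:ℝ) (u n) = ⋃ m ∈ Finset.range (n + 1), S m := by
      intro n
      induction n with
      | zero => simp [hS_def]
      | succ m ih =>
        rw [← Ioc_union_Ioc_eq_Ioc (hu_nonneg m) (hu_mono (Nat.le_succ m)), ih]
        ext x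
        simp only [Finset.mem_range, mem_iUnion, mem_union, exists_prop]
        constructor
        · rintro (⟨i, hi, hx⟩ | hx)
          · exact ⟨i, by omega, hx⟩
          · exact ⟨m + 1, by omega, hx⟩
        · rintro ⟨i, hi, hx⟩
          rcases Nat.lt_or_ge i (m + 1) with h | h
          · exact Or.inl ⟨i, h, hx⟩
          · have : i = m + 1 := by omega
            subst this; exact Or.inr hx
    have hsum_eq : ∀ n, (∑ i ∈ Finset.range (n + 1), ∫ x in S i, ‖g x‖)
        = ∫ x in Ioc (0:ℝ) (u n), ‖g x‖ := by
      intro n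
      induction n with
      | zero => simp [hS_def]
      | succ m ih =>
        have hSm : S (m + 1) = Ioc (u m) (u (m + 1)) := rfl
        rw [Finset.sum_range_succ, ih, hSm,
          ← setIntegral_union (Ioc_disjoint_Ioc.mpr ((min_le_left _ _).trans (le_max_right _ _))) measurableSet_Ioc
            ((hu_mem m).2.norm) (((hu_mem (m+1)).2.mono_set
              (Ioc_subset_Ioc_left (hu_nonneg m))).norm),
          Ioc_union_Ioc_eq_Ioc (hu_nonneg m) (hu_mono (Nat.le_succ m))]
    have hsum : Summable fun n => ∫ x in S n, ‖g x‖ := by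
      apply summable_of_sum_range_le (c := 2 * B * t + k₀ + K)
      · intro n
        exact setIntegral_nonneg (hSmeas n) fun x _ => norm_nonneg _
      · intro n
        cases n with
        | zero =>
          simp only [Finset.range_zero, Finset.sum_empty]
          nlinarith [hKnn, hBpos, hk₀, ht]
        | succ m =>
          rw [hsum_eq m]
          exact hbound (u m) ⟨hu_nonneg m, hu_le m⟩ (hu_mem m).2
    have hint_union : IntegrableOn g (⋃ n, S n) :=
      integrableOn_iUnion_of_summable_integral_norm hSint hsum
    have hcover : Ioo (0:ℝ) τ ⊆ ⋃ n, S n := by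
      intro x hx
      obtain ⟨n, hn⟩ := (hu_tendsto.eventually_const_lt hx.2).exists
      have : x ∈ Ioc (0:ℝ) (u n) := ⟨hx.1, hn.le⟩
      rw [hUnion n] at this
      simp only [Finset.mem_range, mem_iUnion, exists_prop] at this
      obtain ⟨i, _, hxi⟩ := this
      exact mem_iUnion.mpr ⟨i, hxi⟩
    rw [integrableOn_Ioc_iff_integrableOn_Ioo]
    exact hint_union.mono_set hcover
  -- integrability up to t
  have htA : IntegrableOn g (Ioc 0 t) := by
    rcases eq_or_lt_of_le hτmem.2 with heq | hlt
    · rw [← heq]; exact hτA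
    · have hkconst : ∀ x ∈ Ioc τ t, k x = k₀ := by
        intro x hx
        have hxmem : x ∈ Icc (0:ℝ) t := ⟨hτmem.1.trans hx.1.le, hx.2⟩
        by_contra hne
        have hxA : x ∈ A := by
          refine ⟨hxmem, ?_⟩
          by_contra hni
          have h := hsol x hxmem.1
          rw [intervalIntegral.integral_of_le hxmem.1] at h
          simp only [← hg_def] at h
          rw [integral_undef hni] at h
          exact hne (by linarith)
        exact absurd (le_csSup hAbdd hxA) (not_le.mpr hx.1)
      have hIocτt : IntegrableOn g (Ioc τ t) := by
        have hc' : IntegrableOn (fun x => F k₀ - c x) (Ioc τ t) := by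
          apply Integrable.sub
          · exact integrableOn_const measure_Ioc_lt_top.ne
          · exact hc_int.mono_set fun x hx => ⟨hτmem.1.trans hx.1.le, hx.2⟩
        apply hc'.congr_fun _ measurableSet_Ioc
        intro x hx
        simp [hg_def, hkconst x hx]
      rw [← Ioc_union_Ioc_eq_Ioc hτmem.1 hτmem.2]
      exact hτA.union hIocτt
  -- interval integrabilities
  have hgint : ∀ s ∈ Icc (0:ℝ) t, IntervalIntegrable g volume 0 s := fun s hs =>
    (intervalIntegrable_iff_integrableOn_Ioc_of_le hs.1).mpr
      (htA.mono_set (Ioc_subset_Ioc_right hs.2))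
  have hcint : ∀ s ∈ Icc (0:ℝ) t, IntervalIntegrable c volume 0 s := fun s hs =>
    (intervalIntegrable_iff_integrableOn_Ioc_of_le hs.1).mpr
      (hc_int.mono_set (Ioc_subset_Icc_self.trans (Icc_subset_Icc_right hs.2)))
  have hFkint : ∀ s ∈ Icc (0:ℝ) t, IntervalIntegrable (fun u => F (k u)) volume 0 s := by
    intro s hs
    have h : (fun u => F (k u)) = fun u => g u + c u := by
      funext u; simp [hg_def]
    rw [h]
    exact (hgint s hs).add (hcint s hs)
  have hkint : ∀ s ∈ Icc (0:ℝ) t, IntervalIntegrable k volume 0 s := fun s hs =>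
    (hkcont'.mono (Icc_subset_Icc_right hs.2)).intervalIntegrable_of_Icc hs.1
  -- the primitive of k
  set v : ℝ → ℝ := fun s => ∫ u in (0:ℝ)..s, k u with hv_def
  have hvcont : ContinuousOn v (Icc 0 t) := by
    have h := intervalIntegral.continuousOn_primitive_interval (a := (0:ℝ)) (b := t) (μ := volume)
      (f := k) (by rw [uIcc_of_le ht]; exact hkcont'.integrableOn_Icc)
    rwa [uIcc_of_le ht] at h
  have hvderiv : ∀ x ∈ Ioo (0:ℝ) t, HasDerivAt v (k x) x := by
    intro x hx
    apply intervalIntegral.integral_hasDerivAt_right (hkint x ⟨hx.1.le, hx.2.le⟩)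
    · exact (hkcont.mono Ioi_subset_Ici_self).stronglyMeasurableAtFilter isOpen_Ioi x hx.1
    · exact hkcont.continuousAt (Ici_mem_nhds hx.1)
  -- integral inequalities
  have hintc_nonneg : ∀ s ∈ Icc (0:ℝ) t, 0 ≤ ∫ u in (0:ℝ)..s, c u := by
    intro s hs
    apply intervalIntegral.integral_nonneg_of_ae_restrict hs.1
    exact ae_restrict_of_ae_restrict_of_subset ((Icc_subset_Icc_right hs.2).trans hIcc_sub) hcpos
  have hFk_le : ∀ s ∈ Icc (0:ℝ) t, (∫ u in (0:ℝ)..s, F (k u)) ≤ lam * v s + M * s := by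
    intro s hs
    have h1 : (∫ u in (0:ℝ)..s, F (k u)) ≤ ∫ u in (0:ℝ)..s, (lam * k u + M) := by
      apply intervalIntegral.integral_mono_on hs.1 (hFkint s hs)
        (((hkint s hs).const_mul lam).add intervalIntegrable_const)
      intro u hu
      exact hFsub (k u) (hknn u hu.1)
    have h2 : (∫ u in (0:ℝ)..s, (lam * k u + M)) = lam * v s + M * s := by
      rw [intervalIntegral.integral_add ((hkint s hs).const_mul lam) intervalIntegrable_const,
        intervalIntegral.integral_const_mul, intervalIntegral.integral_const]
      simp [hv_def]; ring
    linarith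
  have hk_le : ∀ s ∈ Icc (0:ℝ) t, k s ≤ k₀ + M * s + lam * v s := by
    intro s hs
    have h := hsol s hs.1
    have hsplit : (∫ u in (0:ℝ)..s, (F (k u) - c u)) =
        (∫ u in (0:ℝ)..s, F (k u)) - ∫ u in (0:ℝ)..s, c u :=
      intervalIntegral.integral_sub (hFkint s hs) (hcint s hs)
    rw [hsplit] at h
    linarith [hintc_nonneg s hs, hFk_le s hs]
  -- Gronwall via explicit comparison
  set E : ℝ → ℝ := fun s => Real.exp (-(lam * s)) with hE_def
  set G : ℝ → ℝ := fun s => (k₀ / lam) * (1 - E s) + (M / lam ^ 2) * (1 - E s * (1 + lam * s))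
    with hG_def
  set D : ℝ → ℝ := fun s => G s - E s * v s with hD_def
  have hEderiv : ∀ x : ℝ, HasDerivAt E (-lam * E x) x := by
    intro x
    have h1 : HasDerivAt (fun s : ℝ => -(lam * s)) (-lam) x := by
      have h := ((hasDerivAt_id x).const_mul lam).neg
      rw [mul_one] at h
      exact h
    have := (Real.hasDerivAt_exp (-(lam * x))).comp x h1
    simpa [hE_def, mul_comm, Function.comp_def] using this
  have hEpos : ∀ x : ℝ, 0 < E x := fun x => Real.exp_pos _
  have hDderiv : ∀ x ∈ Ioo (0:ℝ) t,
      HasDerivAt D (E x * ((k₀ + M * x) - (k x - lam * v x))) x := by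
    intro x hx
    have hlin : HasDerivAt (fun s : ℝ => 1 + lam * s) lam x := by
      have h := ((hasDerivAt_id x).const_mul lam).const_add 1
      rw [mul_one] at h
      exact h
    have hG' : HasDerivAt G (E x * (k₀ + M * x)) x := by
      have h1 : HasDerivAt (fun s => (k₀ / lam) * (1 - E s))
          ((k₀ / lam) * (0 - (-lam * E x))) x :=
        ((hasDerivAt_const x (1:ℝ)).sub (hEderiv x)).const_mul (k₀ / lam)
      have h2 : HasDerivAt (fun s => (M / lam ^ 2) * (1 - E s * (1 + lam * s)))
          ((M / lam ^ 2) * (0 - ((-lam * E x) * (1 + lam * x) + E x * lam))) x :=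
        ((hasDerivAt_const x (1:ℝ)).sub ((hEderiv x).mul hlin)).const_mul (M / lam ^ 2)
      have h3 := h1.add h2
      refine h3.congr_deriv ?_
      field_simp
      ring
    have hV : HasDerivAt (fun s => E s * v s) ((-lam * E x) * v x + E x * k x) x :=
      (hEderiv x).mul (hvderiv x hx)
    have h := hG'.sub hV
    refine h.congr_deriv ?_
    ring
  have hDmono : MonotoneOn D (Icc 0 t) := by
    apply monotoneOn_of_deriv_nonneg (convex_Icc 0 t)
    · apply ContinuousOn.sub
      · apply Continuous.continuousOn
        fun_prop
      · exact (Continuous.continuousOn (by fun_prop)).mul hvcont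
    · intro x hx
      rw [interior_Icc] at hx
      exact (hDderiv x hx).differentiableAt.differentiableWithinAt
    · intro x hx
      rw [interior_Icc] at hx
      rw [(hDderiv x hx).deriv]
      have h1 := hk_le x ⟨hx.1.le, hx.2.le⟩
      have h2 := hEpos x
      nlinarith
  have hD0 : D 0 = 0 := by
    simp [hD_def, hG_def, hE_def, hv_def, Real.exp_zero, intervalIntegral.integral_same]
  have hDt : 0 ≤ D t := by
    have := hDmono (left_mem_Icc.mpr ht) (right_mem_Icc.mpr ht) ht
    rwa [hD0] at this
  set e : ℝ := Real.exp (lam * t) with he_def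
  have hepos : 0 < e := Real.exp_pos _
  have he1 : 1 ≤ e := Real.one_le_exp (by positivity)
  have hEt : E t = e⁻¹ := by
    simp only [hE_def, he_def]
    rw [Real.exp_neg]
  have hvt : lam * v t ≤ k₀ * (e - 1) + (M / lam) * (e - 1 - lam * t) := by
    have h1 : E t * v t ≤ G t := by
      have := hDt; simp only [hD_def] at this; linarith
    have h2 : v t ≤ e * G t := by
      rw [hEt] at h1
      have h3 : v t = e * (e⁻¹ * v t) := by field_simp
      rw [h3]
      exact mul_le_mul_of_nonneg_left h1 hepos.le
    have h4 : lam * (e * G t) = k₀ * (e - 1) + (M / lam) * (e - 1 - lam * t) := by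
      simp only [hG_def, hEt]
      field_simp
      ring
    rw [← h4]
    exact mul_le_mul_of_nonneg_left h2 hlam.le
  -- final chain
  have hintc : (∫ s in (0:ℝ)..t, c s) ≤ k₀ + M * t + lam * v t := by
    have h := hsol t ht
    have hsplit : (∫ u in (0:ℝ)..t, (F (k u) - c u)) =
        (∫ u in (0:ℝ)..t, F (k u)) - ∫ u in (0:ℝ)..t, c u :=
      intervalIntegral.integral_sub (hFkint t (right_mem_Icc.mpr ht)) (hcint t (right_mem_Icc.mpr ht))
    rw [hsplit] at h
    have h2 := hFk_le t (right_mem_Icc.mpr ht)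
    have h3 := hknn t ht
    linarith
  have hexpand : (M / lam) * (e - 1 - lam * t) = (M / lam) * (e - 1) - M * t := by
    field_simp
  rw [hexpand] at hvt
  have hk₀e' : k₀ * (e - 1) = k₀ * e - k₀ := by ring
  have hfinal1 : (∫ s in (0:ℝ)..t, c s) ≤ k₀ * e + (M / lam) * (e - 1) := by
    have h9 : k₀ + M * t + lam * v t ≤
        k₀ + M * t + (k₀ * (e - 1) + (M / lam * (e - 1) - M * t)) := by
      exact add_le_add_right hvt _
    have h10 : k₀ + M * t + (k₀ * (e - 1) + (M / lam * (e - 1) - M * t)) =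
        k₀ * e + M / lam * (e - 1) := by ring
    exact hintc.trans (h9.trans_eq h10)
  -- last elementary inequality
  have hkey := key_exp (lam * t) (by positivity)
  rw [← he_def] at hkey
  have ha : 0 ≤ M₀ / lam := by positivity
  have hk₀e : k₀ * e ≤ (M₀ / lam) * e :=
    mul_le_mul_of_nonneg_right ((le_div_iff₀ hlam).mpr (by linarith)) hepos.le
  have hMe : (M / lam) * (e - 1) ≤ (M₀ / lam) * (e - 1) :=
    mul_le_mul_of_nonneg_right ((div_le_div_iff_of_pos_right hlam).mpr hM₀M) (by linarith)
  have hkey2 : (M₀ / lam) * (2 * (e - 1)) ≤ (M₀ / lam) * ((lam * t) * (1 + e)) :=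
    mul_le_mul_of_nonneg_left hkey ha
  have hid : (M₀ / lam) * ((lam * t) * (1 + e)) = t * M₀ * (1 + e) := by
    field_simp
  have hid2 : (M₀ / lam) * (2 * (e - 1)) = (M₀ / lam) * e + (M₀ / lam) * (e - 1) - M₀ / lam := by
    ring
  linarith
end

section
/- Under the standing assumptions on F and u (in particular ∃ε₀>0 with e^{ε₀t}e^{−ρt}u(e^{(L+ε₀)t}) → 0 as t→∞), for every k₀ ≥ 0 and every admissible control c ∈ Λ(k₀): lim_{t→∞} e^{−ρt} ∫₀ᵗ u(c(s)) ds = 0, and the utility functional satisfies U(c;k₀) = ρ ∫₀^∞ e^{−ρt} (∫₀ᵗ u(c(s)) ds) dt ≤ γ(k₀) < ∞ for a finite constant γ(k₀) depending only on k₀ and the data. -/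
open MeasureTheory

noncomputable section

section AuxLemmas

open Real Set Filter
open scoped ENNReal NNReal

open MeasureTheory Real Set Filter

-- u nonneg
lemma upos {u : ℝ → ℝ} (humono : StrictMonoOn u (Set.Ici 0)) (hu0 : u 0 = 0)
    {a : ℝ} (ha : 0 ≤ a) : 0 ≤ u a := by
  rcases ha.eq_or_lt with h | h
  · simp [← h, hu0]
  · have := humono (Set.self_mem_Ici) (Set.mem_Ici.2 ha) h
    linarith [hu0]

-- key concavity bound : u x ≤ u a + (u a / a) x
lemma ubound {u : ℝ → ℝ} (humono : StrictMonoOn u (Set.Ici 0))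
    (huconc : ConcaveOn ℝ (Set.Ici 0) u) (hu0 : u 0 = 0)
    {a x : ℝ} (ha : 0 < a) (hx : 0 ≤ x) : u x ≤ u a + (u a / a) * x := by
  have hua : 0 ≤ u a := upos humono hu0 ha.le
  rcases le_or_gt x a with h | h
  · have h1 : u x ≤ u a := humono.monotoneOn (Set.mem_Ici.2 hx) (Set.mem_Ici.2 ha.le) h
    have : 0 ≤ (u a / a) * x := mul_nonneg (div_nonneg hua ha.le) hx
    linarith
  · -- a = (a/x) • x + (1 - a/x) • 0
    have hxpos : 0 < x := ha.trans h
    have hθ : 0 ≤ a / x := div_nonneg ha.le hxpos.le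
    have hθ1 : a / x ≤ 1 := (div_le_one hxpos).2 h.le
    have hcomb := huconc.2 (Set.mem_Ici.2 hx) (Set.self_mem_Ici) hθ (by linarith)
      (by ring : a / x + (1 - a / x) = 1)
    have harg : (a / x) • x + (1 - a / x) • (0:ℝ) = a := by
      simp only [smul_eq_mul]; field_simp; ring
    rw [harg] at hcomb
    have : (a / x) * u x ≤ u a := by
      simpa [hu0, smul_eq_mul] using hcomb
    have hux : u x ≤ (u a / a) * x := by
      rw [div_mul_eq_mul_div, le_div_iff₀ ha]
      calc u x * a = (a / x * u x) * x := by field_simp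
        _ ≤ u a * x := by nlinarith
    linarith

lemma traj_bound (F c k : ℝ → ℝ) (l Mh k₀ : ℝ) (hl : 0 < l) (hMh : 0 < Mh) (hk₀ : 0 ≤ k₀)
    (hFmono : StrictMonoOn F (Set.Ici 0)) (hF0 : F 0 = 0)
    (hFsub : ∀ x ≥ (0:ℝ), F x ≤ l * x + Mh)
    (hc_loc : LocallyIntegrableOn c (Set.Ici 0))
    (hc_nn : ∀ᵐ t ∂(volume.restrict (Set.Ici 0)), 0 ≤ c t)
    (hsol : SolOn F k₀ c k) (hknn : ∀ t ≥ (0:ℝ), 0 ≤ k t) :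
    ∀ t ≥ (0:ℝ), (∫ s in (0:ℝ)..t, c s) ≤ (k₀ + Mh / l) * Real.exp (l * t) := by
  obtain ⟨hkC, hk0, hkeq⟩ := hsol
  intro T hT
  -- integrability of c on subintervals
  have hcint : ∀ t ∈ Set.Icc (0:ℝ) T, IntervalIntegrable c volume 0 t := by
    intro t ht
    rw [intervalIntegrable_iff_integrableOn_Ioc_of_le ht.1]
    exact (hc_loc.integrableOn_compact_subset
      (Set.Icc_subset_Ici_self : Set.Icc (0:ℝ) t ⊆ Set.Ici 0) isCompact_Icc).mono_set
      Set.Ioc_subset_Icc_self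
  obtain ⟨C, hC⟩ := (isCompact_Icc (a := (0:ℝ)) (b := T)).exists_bound_of_continuousOn
    (hkC.mono Set.Icc_subset_Ici_self)
  -- F ∘ k facts
  have hFm : Monotone (fun x => F (max x 0)) := by
    intro x y hxy
    exact hFmono.monotoneOn (Set.mem_Ici.2 (le_max_right _ _))
      (Set.mem_Ici.2 (le_max_right _ _)) (max_le_max hxy le_rfl)
  have hFknn : ∀ s ≥ (0:ℝ), 0 ≤ F (k s) := by
    intro s hs
    have := hFmono.monotoneOn (Set.self_mem_Ici) (Set.mem_Ici.2 (hknn s hs)) (hknn s hs)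
    linarith [hF0]
  have hFkint : ∀ t ∈ Set.Icc (0:ℝ) T, IntervalIntegrable (fun s => F (k s)) volume 0 t := by
    intro t ht
    rw [intervalIntegrable_iff_integrableOn_Ioc_of_le ht.1]
    have hk' : AEMeasurable k (volume.restrict (Set.Ioc 0 t)) :=
      (hkC.mono (fun x (hx : x ∈ Set.Ioc (0:ℝ) t) =>
        Set.mem_Ici.2 hx.1.le)).aemeasurable measurableSet_Ioc
    have hmeas : AEMeasurable (fun s => F (k s)) (volume.restrict (Set.Ioc 0 t)) := by
      refine (hFm.measurable.comp_aemeasurable hk').congr ?_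
      filter_upwards [ae_restrict_mem measurableSet_Ioc] with s hs
      simp [max_eq_left (hknn s hs.1.le)]
    refine Integrable.mono' (integrable_const (l * C + Mh)) hmeas.aestronglyMeasurable ?_
    filter_upwards [ae_restrict_mem measurableSet_Ioc] with s hs
    have hs' : s ∈ Set.Icc (0:ℝ) T := ⟨hs.1.le, hs.2.trans ht.2⟩
    have h1 : 0 ≤ F (k s) := hFknn s hs.1.le
    have h2 : F (k s) ≤ l * k s + Mh := hFsub _ (hknn s hs.1.le)
    have h3 : k s ≤ C := (le_abs_self _).trans (by simpa [Real.norm_eq_abs] using hC s hs')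
    rw [Real.norm_eq_abs, abs_of_nonneg h1]
    nlinarith
  -- the comparison function w
  set g : ℝ → ℝ := fun s => l * k s + Mh with hg
  have hgC : ContinuousOn g (Set.Ici 0) := (continuousOn_const.mul hkC).add continuousOn_const
  have hgint : ∀ t ∈ Set.Icc (0:ℝ) T, IntervalIntegrable g volume 0 t := by
    intro t ht
    exact (hgC.mono (by rw [Set.uIcc_of_le ht.1]; exact Set.Icc_subset_Ici_self)).intervalIntegrable
  set w : ℝ → ℝ := fun t => k₀ + ∫ s in (0:ℝ)..t, g s with hw
  have hgnn : ∀ s ≥ (0:ℝ), 0 ≤ g s := fun s hs => by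
    have := hknn s hs; simp only [hg]; nlinarith
  have hwnn : ∀ t ∈ Set.Icc (0:ℝ) T, 0 ≤ w t := by
    intro t ht
    have : 0 ≤ ∫ s in (0:ℝ)..t, g s :=
      intervalIntegral.integral_nonneg ht.1 (fun s hs => hgnn s hs.1)
    simp only [hw]; linarith
  have hknn_int : ∀ t ∈ Set.Icc (0:ℝ) T, 0 ≤ ∫ s in (0:ℝ)..t, c s := by
    intro t ht
    refine intervalIntegral.integral_nonneg_of_ae_restrict ht.1 ?_
    exact ae_restrict_of_ae_restrict_of_subset
      (Set.Icc_subset_Ici_self : Set.Icc (0:ℝ) t ⊆ Set.Ici 0) hc_nn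
  have hsplit : ∀ t ∈ Set.Icc (0:ℝ) T,
      k t = k₀ + (∫ s in (0:ℝ)..t, F (k s)) - ∫ s in (0:ℝ)..t, c s := by
    intro t ht
    rw [hkeq t ht.1, intervalIntegral.integral_sub (hFkint t ht) (hcint t ht)]
    ring
  have hklew : ∀ t ∈ Set.Icc (0:ℝ) T, k t ≤ w t := by
    intro t ht
    have h1 : (∫ s in (0:ℝ)..t, F (k s)) ≤ ∫ s in (0:ℝ)..t, g s := by
      refine intervalIntegral.integral_mono_on ht.1 (hFkint t ht) (hgint t ht) ?_
      intro s hs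
      exact hFsub _ (hknn s hs.1)
    have := hsplit t ht
    have := hknn_int t ht
    simp only [hw]; linarith
  -- w is continuous on [0,T] and has the right derivative g
  have hwC : ContinuousOn w (Set.Icc 0 T) := by
    have : ContinuousOn (fun t => ∫ s in (0:ℝ)..t, g s) (Set.uIcc 0 T) := by
      refine intervalIntegral.continuousOn_primitive_interval' ?_ Set.left_mem_uIcc
      exact hgint T ⟨hT, le_rfl⟩
    rw [Set.uIcc_of_le hT] at this
    exact continuousOn_const.add this
  have hw' : ∀ x ∈ Set.Ico (0:ℝ) T, HasDerivWithinAt w (g x) (Set.Ici x) x := by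
    intro x hx
    have hprim : HasDerivWithinAt (fun t => ∫ s in (0:ℝ)..t, g s) (g x) (Set.Ici x) x := by
      refine intervalIntegral.integral_hasDerivWithinAt_right
        (hgint x ⟨hx.1, hx.2.le⟩) ?_ ?_
      · exact ⟨Set.Ici 0, Filter.mem_of_superset self_mem_nhdsWithin
          (fun y (hy : y ∈ Set.Ioi x) => Set.mem_Ici.2 (hx.1.trans hy.out.le)),
          hgC.aestronglyMeasurable measurableSet_Ici⟩
      · exact (hgC x hx.1).mono (fun y (hy : y ∈ Set.Ioi x) => Set.mem_Ici.2 (hx.1.trans hy.out.le))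
    exact hprim.const_add k₀
  -- Grönwall
  have hgron := norm_le_gronwallBound_of_norm_deriv_right_le (f := w) (f' := g)
    (δ := k₀) (K := l) (ε := Mh) (a := 0) (b := T) hwC hw' (by simp [hw, Real.norm_eq_abs, abs_of_nonneg hk₀]) ?_ T ⟨hT, le_rfl⟩
  swap
  · intro x hx
    have hx' : x ∈ Set.Icc (0:ℝ) T := ⟨hx.1, hx.2.le⟩
    have h0 : 0 ≤ g x := hgnn x hx.1
    have h1 : k x ≤ w x := hklew x hx'
    have h2 : 0 ≤ w x := hwnn x hx'
    rw [Real.norm_eq_abs, abs_of_nonneg h0, Real.norm_eq_abs, abs_of_nonneg h2]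
    simp only [hg]; nlinarith
  -- conclude
  have hwT : w T ≤ (k₀ + Mh / l) * Real.exp (l * T) := by
    have hgb : gronwallBound k₀ l Mh (T - 0) =
        k₀ * Real.exp (l * T) + Mh / l * (Real.exp (l * T) - 1) := by
      rw [gronwallBound_of_K_ne_0 (ne_of_gt hl)]
      simp
    have := hgron
    rw [Real.norm_eq_abs, abs_of_nonneg (hwnn T ⟨hT, le_rfl⟩), hgb] at this
    have hexp1 : (0:ℝ) < Real.exp (l * T) := Real.exp_pos _
    have : Mh / l * (Real.exp (l * T) - 1) ≤ Mh / l * Real.exp (l * T) := by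
      have : 0 ≤ Mh / l := le_of_lt (div_pos hMh hl)
      nlinarith
    nlinarith [hgron, (by positivity : (0:ℝ) ≤ Mh / l)]
  have hTmem : T ∈ Set.Icc (0:ℝ) T := ⟨hT, le_rfl⟩
  have h1 : (∫ s in (0:ℝ)..T, c s) ≤ w T := by
    have h2 := hsplit T hTmem
    have h3 : (∫ s in (0:ℝ)..T, F (k s)) ≤ ∫ s in (0:ℝ)..T, g s :=
      intervalIntegral.integral_mono_on hT (hFkint T hTmem) (hgint T hTmem)
        (fun s hs => hFsub _ (hknn s hs.1))
    have h4 := hknn T hT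
    simp only [hw]; linarith
  exact h1.trans hwT

lemma ucirc_intInt {u c : ℝ → ℝ}
    (hucont : ContinuousOn u (Set.Ici 0)) (humono : StrictMonoOn u (Set.Ici 0))
    (huconc : ConcaveOn ℝ (Set.Ici 0) u) (hu0 : u 0 = 0)
    (hc_nn : ∀ᵐ t ∂(volume.restrict (Set.Ici 0)), 0 ≤ c t)
    (hcI : ∀ t ≥ (0:ℝ), IntegrableOn c (Set.Ioc 0 t)) :
    ∀ t ≥ (0:ℝ), IntervalIntegrable (fun s => u (c s)) volume 0 t := by
  have hUmax : Continuous (fun x => u (max x 0)) :=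
    hucont.comp_continuous (continuous_id.max continuous_const) (fun x => Set.mem_Ici.2 (le_max_right _ _))
  intro t ht
  rw [intervalIntegrable_iff_integrableOn_Ioc_of_le ht]
  have hc_nn' : ∀ᵐ s ∂(volume.restrict (Set.Ioc 0 t)), 0 ≤ c s :=
    ae_restrict_of_ae_restrict_of_subset (fun x hx => le_of_lt hx.1) hc_nn
  have hcm : AEStronglyMeasurable c (volume.restrict (Set.Ioc 0 t)) :=
    (hcI t ht).aestronglyMeasurable
  have hum : AEStronglyMeasurable (fun s => u (c s)) (volume.restrict (Set.Ioc 0 t)) := by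
    refine (hUmax.comp_aestronglyMeasurable hcm).congr ?_
    filter_upwards [hc_nn'] with s hs
    simp [max_eq_left hs]
  refine Integrable.mono' ((integrable_const (u 1)).add (((hcI t ht).const_mul (u 1)))) hum ?_
  filter_upwards [hc_nn'] with s hs
  have h1 : 0 ≤ u (c s) := upos humono hu0 hs
  have h2 : u (c s) ≤ u 1 + (u 1 / 1) * c s := ubound humono huconc hu0 one_pos hs
  rw [Real.norm_eq_abs, abs_of_nonneg h1]
  simpa using h2

lemma G_nonneg {u c : ℝ → ℝ}
    (humono : StrictMonoOn u (Set.Ici 0)) (hu0 : u 0 = 0)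
    (hc_nn : ∀ᵐ t ∂(volume.restrict (Set.Ici 0)), 0 ≤ c t) :
    ∀ t ≥ (0:ℝ), 0 ≤ ∫ s in (0:ℝ)..t, u (c s) := by
  intro t ht
  refine intervalIntegral.integral_nonneg_of_ae_restrict ht ?_
  have : ∀ᵐ s ∂(volume.restrict (Set.Icc 0 t)), 0 ≤ c s :=
    ae_restrict_of_ae_restrict_of_subset (fun x hx => hx.1) hc_nn
  filter_upwards [this] with s hs
  exact upos humono hu0 hs

lemma G_le {u c : ℝ → ℝ} {B l : ℝ} (hB : 0 < B) (hl : 0 < l)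
    (hucont : ContinuousOn u (Set.Ici 0)) (humono : StrictMonoOn u (Set.Ici 0))
    (huconc : ConcaveOn ℝ (Set.Ici 0) u) (hu0 : u 0 = 0)
    (hc_nn : ∀ᵐ t ∂(volume.restrict (Set.Ici 0)), 0 ≤ c t)
    (hcI : ∀ t ≥ (0:ℝ), IntegrableOn c (Set.Ioc 0 t))
    (hcb : ∀ t ≥ (0:ℝ), (∫ s in (0:ℝ)..t, c s) ≤ B * Real.exp (l * t)) :
    ∀ t > (0:ℝ), (∫ s in (0:ℝ)..t, u (c s)) ≤ 2 * t * u (B * Real.exp (l * t) / t) := by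
  intro t ht
  set a : ℝ := B * Real.exp (l * t) / t with ha_def
  have ha : 0 < a := by positivity
  have hua : 0 ≤ u a := upos humono hu0 ha.le
  have hcint : IntervalIntegrable c volume 0 t := by
    rw [intervalIntegrable_iff_integrableOn_Ioc_of_le ht.le]; exact hcI t ht.le
  have h1 : (∫ s in (0:ℝ)..t, u (c s)) ≤ ∫ s in (0:ℝ)..t, (u a + (u a / a) * c s) := by
    refine intervalIntegral.integral_mono_ae_restrict ht.le
      (ucirc_intInt hucont humono huconc hu0 hc_nn hcI t ht.le)
      ((intervalIntegrable_const).add (hcint.const_mul _)) ?_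
    have : ∀ᵐ s ∂(volume.restrict (Set.Icc 0 t)), 0 ≤ c s :=
      ae_restrict_of_ae_restrict_of_subset (fun x hx => hx.1) hc_nn
    filter_upwards [this] with s hs
    exact ubound humono huconc hu0 ha hs
  have h2 : (∫ s in (0:ℝ)..t, (u a + (u a / a) * c s))
      = t * u a + (u a / a) * ∫ s in (0:ℝ)..t, c s := by
    rw [intervalIntegral.integral_add intervalIntegrable_const (hcint.const_mul _),
      intervalIntegral.integral_const, intervalIntegral.integral_const_mul]
    simp only [smul_eq_mul, sub_zero]
  have h3 : (u a / a) * (∫ s in (0:ℝ)..t, c s) ≤ (u a / a) * (a * t) := by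
    have hba : a * t = B * Real.exp (l * t) := by rw [ha_def]; field_simp
    have h3' : (∫ s in (0:ℝ)..t, c s) ≤ a * t := by rw [hba]; exact hcb t ht.le
    exact mul_le_mul_of_nonneg_left h3' (div_nonneg hua ha.le)
  have h4 : (u a / a) * (a * t) = u a * t := by field_simp
  calc (∫ s in (0:ℝ)..t, u (c s)) ≤ t * u a + (u a / a) * ∫ s in (0:ℝ)..t, c s := by
        rw [← h2]; exact h1
    _ ≤ t * u a + u a * t := by rw [← h4]; linarith
    _ = 2 * t * u a := by ring

lemma t_le_exp_half {ε : ℝ} (hε : 0 < ε) : ∀ t ≥ (0:ℝ), t ≤ (2 / ε) * Real.exp (ε * t / 2) := by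
  intro t ht
  have h := Real.add_one_le_exp (ε * t / 2)
  have h2 : ε * t / 2 ≤ Real.exp (ε * t / 2) := by nlinarith
  calc t = (2 / ε) * (ε * t / 2) := by field_simp
    _ ≤ (2 / ε) * Real.exp (ε * t / 2) := mul_le_mul_of_nonneg_left h2 (by positivity)

lemma t_le_exp {ε : ℝ} (hε : 0 < ε) : ∀ t ≥ 4 / ε ^ 2, t ≤ Real.exp (ε * t) := by
  intro t ht
  have ht0 : 0 ≤ t := le_trans (by positivity) ht
  have h2 : ε * t / 2 ≤ Real.exp (ε * t / 2) := by
    nlinarith [Real.add_one_le_exp (ε * t / 2)]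
  have h3 : Real.exp (ε * t) = Real.exp (ε * t / 2) ^ 2 := by
    rw [← Real.exp_nat_mul]; norm_num; ring_nf
  have h4 : (ε * t / 2) ^ 2 ≤ Real.exp (ε * t / 2) ^ 2 := by
    have : 0 ≤ ε * t / 2 := by positivity
    nlinarith
  have h5 : t ≤ (ε * t / 2) ^ 2 := by
    rw [ge_iff_le, div_le_iff₀ (by positivity)] at ht
    nlinarith
  linarith [h3 ▸ h4]

lemma uargmono {u : ℝ → ℝ} (humono : StrictMonoOn u (Set.Ici 0))
    {B l t : ℝ} (hB : 0 < B) (ht : 0 < t) (hBt : B ≤ t) :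
    u (B * Real.exp (l * t) / t) ≤ u (Real.exp (l * t)) := by
  refine humono.monotoneOn (Set.mem_Ici.2 (by positivity)) (Set.mem_Ici.2 (Real.exp_pos _).le) ?_
  rw [div_le_iff₀ ht]
  nlinarith [Real.exp_pos (l * t)]

lemma Glimit {ρ ε₀ B l : ℝ} {G u : ℝ → ℝ} (hB : 0 < B) (hε₀ : 0 < ε₀)
    (humono : StrictMonoOn u (Set.Ici 0)) (hu0 : u 0 = 0)
    (hexp : Filter.Tendsto
      (fun t => Real.exp (ε₀ * t) * Real.exp (-ρ * t) * u (Real.exp (l * t)))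
      Filter.atTop (nhds 0))
    (hG0 : ∀ t ≥ (0:ℝ), 0 ≤ G t)
    (hGle : ∀ t > (0:ℝ), G t ≤ 2 * t * u (B * Real.exp (l * t) / t)) :
    Filter.Tendsto (fun t => Real.exp (-ρ * t) * G t) Filter.atTop (nhds 0) := by
  have hup : Filter.Tendsto
      (fun t => 2 * (Real.exp (ε₀ * t) * Real.exp (-ρ * t) * u (Real.exp (l * t))))
      Filter.atTop (nhds 0) := by
    simpa using hexp.const_mul 2
  refine tendsto_of_tendsto_of_tendsto_of_le_of_le' tendsto_const_nhds hup ?_ ?_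
  · filter_upwards [Filter.eventually_ge_atTop (0:ℝ)] with t ht
    exact mul_nonneg (Real.exp_pos _).le (hG0 t ht)
  · filter_upwards [Filter.eventually_ge_atTop (max B (4 / ε₀ ^ 2)),
      Filter.eventually_gt_atTop (0:ℝ)] with t ht ht0
    have hBt : B ≤ t := le_trans (le_max_left _ _) ht
    have hte : t ≤ Real.exp (ε₀ * t) := t_le_exp hε₀ t (le_trans (le_max_right _ _) ht)
    have h1 : G t ≤ 2 * t * u (Real.exp (l * t)) := by
      refine le_trans (hGle t ht0) ?_
      have := uargmono (l := l) humono hB ht0 hBt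
      nlinarith
    have hue : 0 ≤ u (Real.exp (l * t)) := upos humono hu0 (Real.exp_pos _).le
    have h2 : Real.exp (-ρ * t) * G t ≤ Real.exp (-ρ * t) * (2 * t * u (Real.exp (l * t))) :=
      mul_le_mul_of_nonneg_left h1 (Real.exp_pos _).le
    refine h2.trans ?_
    have : Real.exp (-ρ * t) * (2 * t * u (Real.exp (l * t)))
        ≤ Real.exp (-ρ * t) * (2 * Real.exp (ε₀ * t) * u (Real.exp (l * t))) := by
      have : 2 * t * u (Real.exp (l * t)) ≤ 2 * Real.exp (ε₀ * t) * u (Real.exp (l * t)) := by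
        nlinarith
      exact mul_le_mul_of_nonneg_left this (Real.exp_pos _).le
    refine this.trans (le_of_eq ?_)
    ring

lemma Hintegrable {ρ ε₀ B l : ℝ} {u : ℝ → ℝ} (hρ : 0 < ρ) (hε₀ : 0 < ε₀) (hB : 0 < B)
    (hl : 0 < l)
    (hucont : ContinuousOn u (Set.Ici 0)) (humono : StrictMonoOn u (Set.Ici 0))
    (huconc : ConcaveOn ℝ (Set.Ici 0) u) (hu0 : u 0 = 0)
    (hexp : Filter.Tendsto
      (fun t => Real.exp (ε₀ * t) * Real.exp (-ρ * t) * u (Real.exp (l * t)))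
      Filter.atTop (nhds 0)) :
    IntegrableOn (fun t => Real.exp (-ρ * t) * (2 * t * u (B * Real.exp (l * t) / t)))
      (Set.Ioi 0) := by
  set φ : ℝ → ℝ := fun t => Real.exp (-ρ * t) * (2 * t * u (B * Real.exp (l * t) / t)) with hφ
  -- continuity on Ioi 0
  have hargC : ContinuousOn (fun t => B * Real.exp (l * t) / t) (Set.Ioi 0) := by
    refine ContinuousOn.div (Continuous.continuousOn (by continuity)) continuousOn_id ?_
    intro t ht; exact ne_of_gt ht
  have hφC : ContinuousOn φ (Set.Ioi 0) := by
    refine ContinuousOn.mul (Continuous.continuousOn (by continuity)) ?_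
    refine ContinuousOn.mul (Continuous.continuousOn (by continuity)) ?_
    refine hucont.comp hargC ?_
    intro t ht
    have : (0:ℝ) < t := ht
    exact Set.mem_Ici.2 (by positivity)
  -- choose threshold
  have hev : ∀ᶠ t in Filter.atTop,
      (Real.exp (ε₀ * t) * Real.exp (-ρ * t) * u (Real.exp (l * t)) ≤ 1
        ∧ B ≤ t ∧ 4 / ε₀ ^ 2 ≤ t ∧ 0 < t) := by
    have h1 : ∀ᶠ t in Filter.atTop,
        Real.exp (ε₀ * t) * Real.exp (-ρ * t) * u (Real.exp (l * t)) < 1 :=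
      hexp.eventually_lt_const one_pos
    filter_upwards [h1, Filter.eventually_ge_atTop B, Filter.eventually_ge_atTop (4 / ε₀ ^ 2),
      Filter.eventually_gt_atTop (0:ℝ)] with t h1 h2 h3 h4
    exact ⟨h1.le, h2, h3, h4⟩
  obtain ⟨T, hT⟩ := Filter.eventually_atTop.1 hev
  set T1 : ℝ := max T 1 with hT1
  have hT1pos : (0:ℝ) < T1 := lt_of_lt_of_le one_pos (le_max_right _ _)
  have hsplit : Set.Ioi (0:ℝ) = Set.Ioc 0 T1 ∪ Set.Ioi T1 := (Set.Ioc_union_Ioi_eq_Ioi hT1pos.le).symm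
  rw [hsplit]
  refine IntegrableOn.union ?_ ?_
  · -- bounded piece
    have hmeas : AEStronglyMeasurable φ (volume.restrict (Set.Ioc 0 T1)) :=
      (hφC.mono (fun x hx => hx.1)).aestronglyMeasurable measurableSet_Ioc
    set Cb : ℝ := 2 * u 1 * T1 + 2 * u 1 * (B * Real.exp (l * T1)) with hCb
    refine Integrable.mono' (integrable_const Cb) hmeas ?_
    filter_upwards [ae_restrict_mem measurableSet_Ioc] with t ht
    have ht0 : 0 < t := ht.1
    have htT : t ≤ T1 := ht.2
    have hu1 : 0 ≤ u 1 := upos humono hu0 zero_le_one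
    have ha : (0:ℝ) < B * Real.exp (l * t) / t := by positivity
    have hnn : 0 ≤ φ t := by
      have := upos humono hu0 ha.le
      have h2t : 0 ≤ 2 * t := by linarith
      simp only [hφ]
      positivity
    rw [Real.norm_eq_abs, abs_of_nonneg hnn]
    have hub : u (B * Real.exp (l * t) / t) ≤ u 1 + u 1 * (B * Real.exp (l * t) / t) := by
      have := ubound humono huconc hu0 (a := 1) (x := B * Real.exp (l * t) / t) one_pos ha.le
      simpa using this
    have hexp1 : Real.exp (-ρ * t) ≤ 1 := by
      rw [← Real.exp_zero]
      apply Real.exp_le_exp.2; nlinarith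
    have hphile : φ t ≤ 2 * t * u (B * Real.exp (l * t) / t) := by
      have h2 : 0 ≤ 2 * t * u (B * Real.exp (l * t) / t) :=
        mul_nonneg (by linarith) (upos humono hu0 ha.le)
      calc φ t ≤ 1 * (2 * t * u (B * Real.exp (l * t) / t)) :=
            mul_le_mul_of_nonneg_right hexp1 h2
        _ = _ := one_mul _
    have key : 2 * t * u (B * Real.exp (l * t) / t) ≤ Cb := by
      have h3 : 2 * t * u (B * Real.exp (l * t) / t)
          ≤ 2 * t * (u 1 + u 1 * (B * Real.exp (l * t) / t)) :=
        mul_le_mul_of_nonneg_left hub (by linarith)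
      have h4 : 2 * t * (u 1 + u 1 * (B * Real.exp (l * t) / t))
          = 2 * u 1 * t + 2 * u 1 * (B * Real.exp (l * t)) := by
        field_simp
      have h5 : Real.exp (l * t) ≤ Real.exp (l * T1) := by
        apply Real.exp_le_exp.2; nlinarith
      have h6 : 2 * u 1 * t ≤ 2 * u 1 * T1 := by nlinarith
      have h7 : 2 * u 1 * (B * Real.exp (l * t)) ≤ 2 * u 1 * (B * Real.exp (l * T1)) :=
        mul_le_mul_of_nonneg_left (mul_le_mul_of_nonneg_left h5 hB.le) (by positivity)
      rw [hCb]
      have h8 := h4 ▸ h3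
      linarith [h3.trans_eq h4, h6, h7]
    linarith
  · -- tail piece
    have hmeas : AEStronglyMeasurable φ (volume.restrict (Set.Ioi T1)) :=
      (hφC.mono (fun x hx => lt_trans hT1pos hx)).aestronglyMeasurable measurableSet_Ioi
    refine Integrable.mono' (((exp_neg_integrableOn_Ioi T1
      (by positivity : (0:ℝ) < ε₀ / 2))).const_mul (4 / ε₀)) hmeas ?_
    filter_upwards [ae_restrict_mem measurableSet_Ioi] with t ht
    have htT : T ≤ t := le_trans (le_max_left _ _) (le_of_lt ht)
    obtain ⟨hψ, hBt, ht4, ht0⟩ := hT t htT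
    have ha : (0:ℝ) < B * Real.exp (l * t) / t := by positivity
    have hnn : 0 ≤ φ t := by
      have := upos humono hu0 ha.le
      simp only [hφ]
      positivity
    rw [Real.norm_eq_abs, abs_of_nonneg hnn]
    have h1 : φ t ≤ Real.exp (-ρ * t) * (2 * t * u (Real.exp (l * t))) := by
      have := uargmono (l := l) humono hB ht0 hBt
      have h2t : (0:ℝ) ≤ 2 * t := by linarith
      simp only [hφ]
      have : 2 * t * u (B * Real.exp (l * t) / t) ≤ 2 * t * u (Real.exp (l * t)) :=
        mul_le_mul_of_nonneg_left this h2t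
      exact mul_le_mul_of_nonneg_left this (Real.exp_pos _).le
    have hid : Real.exp (-ε₀ * t) * (Real.exp (ε₀ * t) * Real.exp (-ρ * t)
        * u (Real.exp (l * t))) = Real.exp (-ρ * t) * u (Real.exp (l * t)) := by
      rw [show Real.exp (-ε₀ * t) * (Real.exp (ε₀ * t) * Real.exp (-ρ * t)
          * u (Real.exp (l * t)))
        = (Real.exp (-ε₀ * t) * Real.exp (ε₀ * t)) * (Real.exp (-ρ * t)
          * u (Real.exp (l * t))) from by ring, ← Real.exp_add,
        show -ε₀ * t + ε₀ * t = 0 by ring, Real.exp_zero, one_mul]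
    have step2 : Real.exp (-ρ * t) * u (Real.exp (l * t)) ≤ Real.exp (-ε₀ * t) := by
      have := mul_le_mul_of_nonneg_left hψ (Real.exp_pos (-ε₀ * t)).le
      rw [hid, mul_one] at this
      exact this
    have hth := t_le_exp_half hε₀ t ht0.le
    have step3 : 2 * t * Real.exp (-ε₀ * t) ≤ (4 / ε₀) * Real.exp (-(ε₀ / 2) * t) := by
      have h5 : 2 * t * Real.exp (-ε₀ * t)
          ≤ 2 * ((2 / ε₀) * Real.exp (ε₀ * t / 2)) * Real.exp (-ε₀ * t) := by
        have := Real.exp_pos (-ε₀ * t)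
        nlinarith
      refine h5.trans (le_of_eq ?_)
      rw [show (2:ℝ) * ((2 / ε₀) * Real.exp (ε₀ * t / 2)) * Real.exp (-ε₀ * t)
          = (4 / ε₀) * (Real.exp (ε₀ * t / 2) * Real.exp (-ε₀ * t)) from by ring,
        ← Real.exp_add, show ε₀ * t / 2 + -ε₀ * t = -(ε₀ / 2) * t by ring]
    calc φ t ≤ Real.exp (-ρ * t) * (2 * t * u (Real.exp (l * t))) := h1
      _ = 2 * t * (Real.exp (-ρ * t) * u (Real.exp (l * t))) := by ring
      _ ≤ 2 * t * Real.exp (-ε₀ * t) := mul_le_mul_of_nonneg_left step2 (by linarith)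
      _ ≤ (4 / ε₀) * Real.exp (-(ε₀ / 2) * t) := step3
      _ = 4 / ε₀ * Real.exp (-(ε₀ / 2) * t) := by ring

lemma exp_tail_integral {ρ : ℝ} (hρ : 0 < ρ) (s : ℝ) :
    ∫ t in Set.Ioi s, ρ * Real.exp (-ρ * t) = Real.exp (-ρ * s) := by
  have hderiv : ∀ x ∈ Set.Ioi s, HasDerivAt (fun t => -Real.exp (-ρ * t))
      (ρ * Real.exp (-ρ * x)) x := by
    intro x _
    have h1 : HasDerivAt (fun t : ℝ => -ρ * t) (-ρ) x := by
      simpa using (hasDerivAt_id x).const_mul (-ρ)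
    have h2 := h1.exp
    have h3 : HasDerivAt (fun t => -Real.exp (-ρ * t)) (-(Real.exp (-ρ * x) * -ρ)) x := h2.neg
    convert h3 using 1
    ring
  have hint : IntegrableOn (fun t => ρ * Real.exp (-ρ * t)) (Set.Ioi s) :=
    (exp_neg_integrableOn_Ioi s hρ).const_mul ρ
  have htend : Filter.Tendsto (fun t => -Real.exp (-ρ * t)) Filter.atTop (nhds 0) := by
    have h1 : Filter.Tendsto (fun t : ℝ => ρ * t) Filter.atTop Filter.atTop :=
      Filter.Tendsto.const_mul_atTop hρ Filter.tendsto_id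
    have h2 : Filter.Tendsto (fun t : ℝ => Real.exp (-(ρ * t))) Filter.atTop (nhds 0) :=
      Real.tendsto_exp_neg_atTop_nhds_zero.comp h1
    have h3 := h2.neg
    rw [neg_zero] at h3
    refine h3.congr (fun t => ?_)
    ring_nf
  have hcont : ContinuousWithinAt (fun t => -Real.exp (-ρ * t)) (Set.Ici s) s :=
    (Continuous.continuousWithinAt (by continuity))
  have := MeasureTheory.integral_Ioi_of_hasDerivAt_of_tendsto hcont hderiv hint htend
  rw [this]
  simp

lemma exp_tail_lintegral {ρ : ℝ} (hρ : 0 < ρ) (s : ℝ) :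
    ∫⁻ t in Set.Ici s, ENNReal.ofReal (ρ * Real.exp (-ρ * t))
      = ENNReal.ofReal (Real.exp (-ρ * s)) := by
  rw [← MeasureTheory.Measure.restrict_congr_set Ioi_ae_eq_Ici]
  rw [← MeasureTheory.ofReal_integral_eq_lintegral_ofReal
    ((exp_neg_integrableOn_Ioi s hρ).const_mul ρ)
    (Filter.Eventually.of_forall (fun t => by positivity))]
  rw [exp_tail_integral hρ s]

lemma fubini_main {ρ : ℝ} (hρ : 0 < ρ) {f H : ℝ → ℝ}
    (hfm : AEStronglyMeasurable f (volume.restrict (Set.Ici 0)))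
    (hf_nn : ∀ᵐ s ∂(volume.restrict (Set.Ici 0)), 0 ≤ f s)
    (hfint : ∀ t ≥ (0:ℝ), IntegrableOn f (Set.Ioc 0 t))
    (hG0 : ∀ t ≥ (0:ℝ), 0 ≤ ∫ s in (0:ℝ)..t, f s)
    (hGleH : ∀ t > (0:ℝ), (∫ s in (0:ℝ)..t, f s) ≤ H t)
    (hHint : IntegrableOn (fun t => Real.exp (-ρ * t) * H t) (Set.Ioi 0)) :
    Integrable (fun t => Real.exp (-ρ * t) * f t) (volume.restrict (Set.Ioi 0)) ∧
    Integrable (fun t => Real.exp (-ρ * t) * ∫ s in (0:ℝ)..t, f s)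
      (volume.restrict (Set.Ioi 0)) ∧
    (∫ t in Set.Ioi (0:ℝ), Real.exp (-ρ * t) * f t)
      = ρ * ∫ t in Set.Ioi (0:ℝ), Real.exp (-ρ * t) * ∫ s in (0:ℝ)..t, f s := by
  set G : ℝ → ℝ := fun t => ∫ s in (0:ℝ)..t, f s with hGdef
  set μ0 : Measure ℝ := volume.restrict (Set.Ioi 0) with hμ0
  have hfm0 : AEStronglyMeasurable f μ0 :=
    hfm.mono_measure (Measure.restrict_mono Set.Ioi_subset_Ici_self le_rfl)
  -- measurable ℝ≥0∞-valued representative of f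
  have am : AEMeasurable (fun s => ENNReal.ofReal (f s)) μ0 :=
    ENNReal.measurable_ofReal.comp_aemeasurable hfm0.aemeasurable
  set g : ℝ → ℝ≥0∞ := AEMeasurable.mk _ am with hgdef
  have hgm : Measurable g := am.measurable_mk
  have hgae : (fun s => ENNReal.ofReal (f s)) =ᵐ[μ0] g := am.ae_eq_mk
  -- inner identity
  have key1 : ∀ t > (0:ℝ), (∫⁻ s in Set.Ioc 0 t, g s) = ENNReal.ofReal (G t) := by
    intro t ht
    have hsub : Set.Ioc (0:ℝ) t ⊆ Set.Ioi 0 := fun x hx => hx.1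
    have h1 : (∫⁻ s in Set.Ioc 0 t, g s) = ∫⁻ s in Set.Ioc 0 t, ENNReal.ofReal (f s) := by
      refine lintegral_congr_ae (Filter.EventuallyEq.symm ?_)
      exact ae_restrict_of_ae_restrict_of_subset hsub hgae
    have hnn : ∀ᵐ s ∂(volume.restrict (Set.Ioc 0 t)), 0 ≤ f s :=
      ae_restrict_of_ae_restrict_of_subset (fun x hx => le_of_lt hx.1) hf_nn
    rw [h1, ← MeasureTheory.ofReal_integral_eq_lintegral_ofReal (hfint t ht.le) hnn, hGdef]
    congr 1
    exact (intervalIntegral.integral_of_le ht.le).symm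
  -- the product function for Tonelli
  set S : Set (ℝ × ℝ) := {q : ℝ × ℝ | 0 < q.2 ∧ q.2 ≤ q.1} with hS
  have hSm : MeasurableSet S :=
    (measurableSet_lt measurable_const measurable_snd).inter
      (measurableSet_le measurable_snd measurable_fst)
  set Φ : ℝ → ℝ → ℝ≥0∞ := fun t s =>
    Set.indicator S (fun q => ENNReal.ofReal (ρ * Real.exp (-ρ * q.1)) * g q.2) (t, s) with hΦ
  have hΦm : Measurable (Function.uncurry Φ) := by
    have h1 : Measurable (fun q : ℝ × ℝ => ENNReal.ofReal (ρ * Real.exp (-ρ * q.1))) :=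
      ((Real.measurable_exp.comp (measurable_fst.const_mul (-ρ))).const_mul ρ).ennreal_ofReal
    have h2 : Measurable (fun q : ℝ × ℝ => g q.2) := hgm.comp measurable_snd
    exact (h1.mul h2).indicator hSm
  have swap : (∫⁻ t, ∫⁻ s, Φ t s ∂volume ∂μ0) = ∫⁻ s, ∫⁻ t, Φ t s ∂μ0 ∂volume :=
    lintegral_lintegral_swap hΦm.aemeasurable
  -- compute left side of swap
  have hleft : ∀ t : ℝ, (∫⁻ s, Φ t s ∂volume)
      = ENNReal.ofReal (ρ * Real.exp (-ρ * t)) * ∫⁻ s in Set.Ioc 0 t, g s := by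
    intro t
    have h1 : (fun s => Φ t s)
        = Set.indicator (Set.Ioc 0 t) (fun s => ENNReal.ofReal (ρ * Real.exp (-ρ * t)) * g s) := by
      funext s
      simp only [hΦ, hS, Set.indicator_apply, Set.mem_setOf_eq, Set.mem_Ioc]
    rw [h1, lintegral_indicator measurableSet_Ioc]
    exact lintegral_const_mul' _ _ ENNReal.ofReal_ne_top
  -- compute right side of swap
  have hright : ∀ s : ℝ, (∫⁻ t, Φ t s ∂μ0)
      = Set.indicator (Set.Ioi 0) (fun s => ENNReal.ofReal (Real.exp (-ρ * s)) * g s) s := by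
    intro s
    by_cases hs : 0 < s
    · have h1 : (fun t => Φ t s)
          = fun t => Set.indicator (Set.Ici s)
              (fun t => ENNReal.ofReal (ρ * Real.exp (-ρ * t))) t * g s := by
        funext t
        simp only [hΦ, hS, Set.indicator_apply, Set.mem_setOf_eq, Set.mem_Ici]
        by_cases hts : s ≤ t
        · simp [hs, hts]
        · simp [hts]
      rw [h1]
      have hmi : Measurable (fun t => Set.indicator (Set.Ici s)
          (fun t => ENNReal.ofReal (ρ * Real.exp (-ρ * t))) t) :=
        ((Real.measurable_exp.comp (measurable_id.const_mul (-ρ))).const_mul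
          ρ).ennreal_ofReal.indicator measurableSet_Ici
      rw [lintegral_mul_const _ hmi]
      have h2 : (∫⁻ t, Set.indicator (Set.Ici s)
          (fun t => ENNReal.ofReal (ρ * Real.exp (-ρ * t))) t ∂μ0)
          = ∫⁻ t in Set.Ici s, ENNReal.ofReal (ρ * Real.exp (-ρ * t)) := by
        have hIs : Set.Ici s ∩ Set.Ioi 0 = Set.Ici s :=
          Set.inter_eq_self_of_subset_left (fun x hx => lt_of_lt_of_le hs hx)
        rw [hμ0, lintegral_indicator measurableSet_Ici,
          Measure.restrict_restrict measurableSet_Ici, hIs]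
      rw [h2, exp_tail_lintegral hρ s]
      rw [Set.indicator_of_mem (Set.mem_Ioi.2 hs)]
    · have h1 : (fun t => Φ t s) = fun _ => 0 := by
        funext t
        simp only [hΦ, hS, Set.indicator_apply, Set.mem_setOf_eq]
        simp [hs]
      rw [h1, lintegral_zero, Set.indicator_of_notMem (by simpa using hs)]
  -- assemble Tonelli identity
  have key3 : (∫⁻ t in Set.Ioi (0:ℝ), ENNReal.ofReal (ρ * Real.exp (-ρ * t))
        * ∫⁻ s in Set.Ioc 0 t, g s)
      = ∫⁻ s in Set.Ioi (0:ℝ), ENNReal.ofReal (Real.exp (-ρ * s)) * g s := by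
    calc (∫⁻ t in Set.Ioi (0:ℝ), ENNReal.ofReal (ρ * Real.exp (-ρ * t))
          * ∫⁻ s in Set.Ioc 0 t, g s)
        = ∫⁻ t, ∫⁻ s, Φ t s ∂volume ∂μ0 := by
          rw [hμ0]; exact (lintegral_congr (fun t => (hleft t))).symm
      _ = ∫⁻ s, ∫⁻ t, Φ t s ∂μ0 ∂volume := swap
      _ = ∫⁻ s, Set.indicator (Set.Ioi 0)
            (fun s => ENNReal.ofReal (Real.exp (-ρ * s)) * g s) s ∂volume :=
          lintegral_congr (fun s => hright s)
      _ = ∫⁻ s in Set.Ioi (0:ℝ), ENNReal.ofReal (Real.exp (-ρ * s)) * g s :=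
          lintegral_indicator measurableSet_Ioi _
  set Tl : ℝ≥0∞ := ∫⁻ t in Set.Ioi (0:ℝ), ENNReal.ofReal (ρ * Real.exp (-ρ * t))
      * ∫⁻ s in Set.Ioc 0 t, g s with hTldef
  set X : ℝ≥0∞ := ∫⁻ t in Set.Ioi (0:ℝ), ENNReal.ofReal (Real.exp (-ρ * t) * G t) with hXdef
  have hTl3 : Tl = ENNReal.ofReal ρ * X := by
    rw [hTldef, hXdef]
    have h1 : (∫⁻ t in Set.Ioi (0:ℝ), ENNReal.ofReal (ρ * Real.exp (-ρ * t))
        * ∫⁻ s in Set.Ioc 0 t, g s)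
        = ∫⁻ t in Set.Ioi (0:ℝ), ENNReal.ofReal ρ
          * ENNReal.ofReal (Real.exp (-ρ * t) * G t) := by
      refine lintegral_congr_ae ?_
      filter_upwards [ae_restrict_mem measurableSet_Ioi] with t ht
      rw [key1 t ht, ← ENNReal.ofReal_mul (by positivity : (0:ℝ) ≤ ρ * Real.exp (-ρ * t)),
        ← ENNReal.ofReal_mul hρ.le, mul_assoc]
    rw [h1]
    exact lintegral_const_mul' _ _ ENNReal.ofReal_ne_top
  -- nonnegativity facts
  have hGH : ∀ t ∈ Set.Ioi (0:ℝ), Real.exp (-ρ * t) * G t ≤ Real.exp (-ρ * t) * H t :=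
    fun t ht => mul_le_mul_of_nonneg_left (hGleH t ht) (Real.exp_pos _).le
  have hGnn : ∀ t ∈ Set.Ioi (0:ℝ), 0 ≤ Real.exp (-ρ * t) * G t :=
    fun t ht => mul_nonneg (Real.exp_pos _).le (hG0 t (le_of_lt ht))
  -- finiteness
  have hXfin : X < ⊤ := by
    have hXle : X ≤ ∫⁻ t in Set.Ioi (0:ℝ), ENNReal.ofReal (Real.exp (-ρ * t) * H t) := by
      rw [hXdef]
      refine lintegral_mono_ae ?_
      filter_upwards [ae_restrict_mem measurableSet_Ioi] with t ht
      exact ENNReal.ofReal_le_ofReal (hGH t ht)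
    have hHlt : (∫⁻ t in Set.Ioi (0:ℝ), ENNReal.ofReal (Real.exp (-ρ * t) * H t)) < ⊤ := by
      rw [← MeasureTheory.ofReal_integral_eq_lintegral_ofReal hHint ?_]
      · exact ENNReal.ofReal_lt_top
      · filter_upwards [ae_restrict_mem measurableSet_Ioi] with t ht
        exact le_trans (hGnn t ht) (hGH t ht)
    exact lt_of_le_of_lt hXle hHlt
  have hTlfin : Tl < ⊤ := by
    rw [hTl3]
    exact ENNReal.mul_lt_top ENNReal.ofReal_lt_top hXfin
  -- monotonicity / measurability of G
  have hGmono : MonotoneOn G (Set.Ici 0) := by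
    intro s hs t ht hst
    have h1 : IntervalIntegrable f volume 0 s := by
      rw [intervalIntegrable_iff_integrableOn_Ioc_of_le hs]; exact hfint s hs
    have h2 : IntervalIntegrable f volume s t := by
      rw [intervalIntegrable_iff_integrableOn_Ioc_of_le hst]
      exact (hfint t ht).mono_set (Set.Ioc_subset_Ioc hs le_rfl)
    have h3 : G t = G s + ∫ x in s..t, f x := by
      rw [hGdef]
      exact (intervalIntegral.integral_add_adjacent_intervals h1 h2).symm
    have h4 : 0 ≤ ∫ x in s..t, f x := by
      refine intervalIntegral.integral_nonneg_of_ae_restrict hst ?_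
      exact ae_restrict_of_ae_restrict_of_subset (fun x hx => le_trans hs.out hx.1) hf_nn
    linarith
  have hGm : AEStronglyMeasurable G μ0 :=
    (aemeasurable_restrict_of_monotoneOn measurableSet_Ioi
      (hGmono.mono Set.Ioi_subset_Ici_self)).aestronglyMeasurable
  have hexpm : AEStronglyMeasurable (fun t => Real.exp (-ρ * t)) μ0 :=
    (Real.continuous_exp.comp (continuous_const.mul continuous_id)).aestronglyMeasurable
  -- integrability (B)
  have hBint : Integrable (fun t => Real.exp (-ρ * t) * G t) μ0 := by
    refine ⟨hexpm.mul hGm, ?_⟩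
    rw [hasFiniteIntegral_iff_norm]
    have heq : (∫⁻ t, ENNReal.ofReal ‖Real.exp (-ρ * t) * G t‖ ∂μ0) = X := by
      rw [hXdef, hμ0]
      refine lintegral_congr_ae ?_
      filter_upwards [ae_restrict_mem measurableSet_Ioi] with t ht
      rw [Real.norm_eq_abs, abs_of_nonneg (hGnn t ht)]
    rw [heq]; exact hXfin
  -- integrability (A)
  have hf_nn0 : ∀ᵐ s ∂μ0, 0 ≤ f s :=
    ae_restrict_of_ae_restrict_of_subset Set.Ioi_subset_Ici_self hf_nn
  have hAkey : (∫⁻ t, ENNReal.ofReal (Real.exp (-ρ * t) * f t) ∂μ0) = Tl := by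
    have heq2 : (∫⁻ t, ENNReal.ofReal (Real.exp (-ρ * t) * f t) ∂μ0)
        = ∫⁻ s in Set.Ioi (0:ℝ), ENNReal.ofReal (Real.exp (-ρ * s)) * g s := by
      rw [hμ0]
      refine lintegral_congr_ae ?_
      filter_upwards [hf_nn0, hgae] with s hsnn hgs
      rw [ENNReal.ofReal_mul (Real.exp_pos _).le, hgs]
    rw [heq2, ← key3, hTldef]
  have hAint : Integrable (fun t => Real.exp (-ρ * t) * f t) μ0 := by
    refine ⟨hexpm.mul hfm0, ?_⟩
    rw [hasFiniteIntegral_iff_norm]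
    have heq : (∫⁻ t, ENNReal.ofReal ‖Real.exp (-ρ * t) * f t‖ ∂μ0)
        = ∫⁻ t, ENNReal.ofReal (Real.exp (-ρ * t) * f t) ∂μ0 := by
      refine lintegral_congr_ae ?_
      filter_upwards [hf_nn0] with t ht
      rw [Real.norm_eq_abs, abs_of_nonneg (mul_nonneg (Real.exp_pos _).le ht)]
    rw [heq, hAkey]; exact hTlfin
  -- the identity
  have hefnn : ∀ᵐ t ∂μ0, 0 ≤ Real.exp (-ρ * t) * f t := by
    filter_upwards [hf_nn0] with t ht
    exact mul_nonneg (Real.exp_pos _).le ht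
  have heGnn : ∀ᵐ t ∂μ0, 0 ≤ Real.exp (-ρ * t) * G t := by
    rw [hμ0]
    filter_upwards [ae_restrict_mem measurableSet_Ioi] with t ht
    exact hGnn t ht
  have hLHS : ENNReal.ofReal (∫ t, Real.exp (-ρ * t) * f t ∂μ0) = Tl := by
    rw [MeasureTheory.ofReal_integral_eq_lintegral_ofReal hAint hefnn, hAkey]
  have hXeq : ENNReal.ofReal (∫ t, Real.exp (-ρ * t) * G t ∂μ0) = X := by
    rw [MeasureTheory.ofReal_integral_eq_lintegral_ofReal hBint heGnn, hXdef, hμ0]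
  have hRHS : ENNReal.ofReal (ρ * ∫ t, Real.exp (-ρ * t) * G t ∂μ0) = Tl := by
    rw [ENNReal.ofReal_mul hρ.le, hXeq, ← hTl3]
  have hL0 : 0 ≤ ∫ t, Real.exp (-ρ * t) * f t ∂μ0 := integral_nonneg_of_ae hefnn
  have hR0 : 0 ≤ ρ * ∫ t, Real.exp (-ρ * t) * G t ∂μ0 :=
    mul_nonneg hρ.le (integral_nonneg_of_ae heGnn)
  refine ⟨hAint, hBint, ?_⟩
  have := hLHS.trans hRHS.symm
  exact (ENNReal.ofReal_eq_ofReal_iff hL0 hR0).1 this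

end AuxLemmas

theorem stmt10 (F u : ℝ → ℝ) (ρ L ε₀ Mh k₀ : ℝ)
    (hρ : 0 < ρ) (hL : 0 < L) (hε₀ : 0 < ε₀) (hMh : 0 < Mh) (hk₀ : 0 ≤ k₀)
    (hFmono : StrictMonoOn F (Set.Ici 0)) (hF0 : F 0 = 0)
    (hFsub : ∀ x ≥ (0:ℝ), F x ≤ (L + ε₀) * x + Mh)
    (hucont : ContinuousOn u (Set.Ici 0)) (humono : StrictMonoOn u (Set.Ici 0))
    (huconc : ConcaveOn ℝ (Set.Ici 0) u) (hu0 : u 0 = 0)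
    (hulim : Filter.Tendsto u Filter.atTop Filter.atTop)
    (hexp : Filter.Tendsto
      (fun t => Real.exp (ε₀ * t) * Real.exp (-ρ * t) * u (Real.exp ((L + ε₀) * t)))
      Filter.atTop (nhds 0)) :
    ∃ γ : ℝ, ∀ c : ℝ → ℝ, Adm F k₀ c →
      Filter.Tendsto (fun t => Real.exp (-ρ * t) * ∫ s in (0:ℝ)..t, u (c s))
        Filter.atTop (nhds 0) ∧
      Util ρ u c =
        ρ * ∫ t in Set.Ioi (0:ℝ), Real.exp (-ρ * t) * ∫ s in (0:ℝ)..t, u (c s) ∧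
      Util ρ u c ≤ γ := by
  classical
  set l : ℝ := L + ε₀ with hldef
  have hl : 0 < l := by rw [hldef]; linarith
  set B : ℝ := k₀ + Mh / l with hBdef
  have hB : 0 < B := by rw [hBdef]; positivity
  set H : ℝ → ℝ := fun t => 2 * t * u (B * Real.exp (l * t) / t) with hHdef
  have hHint : IntegrableOn (fun t => Real.exp (-ρ * t) * H t) (Set.Ioi 0) :=
    Hintegrable hρ hε₀ hB hl hucont humono huconc hu0 hexp
  refine ⟨ρ * ∫ t in Set.Ioi (0:ℝ), Real.exp (-ρ * t) * H t, ?_⟩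
  intro c hc
  obtain ⟨hc_loc, hc_nn, k, hsol, hknn⟩ := hc
  have hcb : ∀ t ≥ (0:ℝ), (∫ s in (0:ℝ)..t, c s) ≤ B * Real.exp (l * t) :=
    traj_bound F c k l Mh k₀ hl hMh hk₀ hFmono hF0 hFsub hc_loc hc_nn hsol hknn
  have hcI : ∀ t ≥ (0:ℝ), IntegrableOn c (Set.Ioc 0 t) := fun t ht =>
    (hc_loc.integrableOn_compact_subset
      (Set.Icc_subset_Ici_self : Set.Icc (0:ℝ) t ⊆ Set.Ici 0) isCompact_Icc).mono_set
      Set.Ioc_subset_Icc_self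
  have hfint : ∀ t ≥ (0:ℝ), IntegrableOn (fun s => u (c s)) (Set.Ioc 0 t) := by
    intro t ht
    have := ucirc_intInt hucont humono huconc hu0 hc_nn hcI t ht
    rwa [intervalIntegrable_iff_integrableOn_Ioc_of_le ht] at this
  have hG0 : ∀ t ≥ (0:ℝ), 0 ≤ ∫ s in (0:ℝ)..t, u (c s) := G_nonneg humono hu0 hc_nn
  have hGle : ∀ t > (0:ℝ), (∫ s in (0:ℝ)..t, u (c s)) ≤ H t :=
    G_le hB hl hucont humono huconc hu0 hc_nn hcI hcb
  have hlim : Filter.Tendsto (fun t => Real.exp (-ρ * t) * ∫ s in (0:ℝ)..t, u (c s))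
      Filter.atTop (nhds 0) :=
    Glimit hB hε₀ humono hu0 hexp hG0 hGle
  -- measurability of u ∘ c on [0, ∞)
  have hUmax : Continuous (fun x => u (max x 0)) :=
    hucont.comp_continuous (continuous_id.max continuous_const) (fun x => Set.mem_Ici.2 (le_max_right _ _))
  have hfm : AEStronglyMeasurable (fun s => u (c s)) (volume.restrict (Set.Ici 0)) := by
    refine (hUmax.comp_aestronglyMeasurable hc_loc.aestronglyMeasurable).congr ?_
    filter_upwards [hc_nn] with s hs
    simp [max_eq_left hs]
  have hf_nn : ∀ᵐ s ∂(volume.restrict (Set.Ici 0)), 0 ≤ u (c s) := by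
    filter_upwards [hc_nn] with s hs
    exact upos humono hu0 hs
  obtain ⟨hAint, hBint, hid⟩ := fubini_main hρ hfm hf_nn hfint hG0 hGle hHint
  refine ⟨hlim, hid, ?_⟩
  have hle : (∫ t in Set.Ioi (0:ℝ), Real.exp (-ρ * t) * ∫ s in (0:ℝ)..t, u (c s))
      ≤ ∫ t in Set.Ioi (0:ℝ), Real.exp (-ρ * t) * H t := by
    refine setIntegral_mono_on hBint hHint measurableSet_Ioi ?_
    intro t ht
    exact mul_le_mul_of_nonneg_left (hGle t ht) (Real.exp_pos _).le
  calc Util ρ u c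
      = ρ * ∫ t in Set.Ioi (0:ℝ), Real.exp (-ρ * t) * ∫ s in (0:ℝ)..t, u (c s) := hid
    _ ≤ ρ * ∫ t in Set.Ioi (0:ℝ), Real.exp (-ρ * t) * H t :=
        mul_le_mul_of_nonneg_left hle hρ.le
end
end

section
/- Under the standing assumptions, the value function V(k₀) := sup_{c ∈ Λ(k₀)} U(c;k₀) is finite for every k₀ ≥ 0, and satisfies V(k₀) ≥ u(F(k₀))/ρ; in particular lim_{k→∞} V(k) = +∞. -/
open MeasureTheory Real Set Filter
open scoped ENNReal

noncomputable section

lemma contOn_Ici_of_Icc {f : ℝ → ℝ} (h : ∀ T : ℝ, 0 < T → ContinuousOn f (Set.Icc 0 T)) :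
    ContinuousOn f (Set.Ici 0) := by
  intro t ht
  have ht' : (0:ℝ) ≤ t := ht
  have h1 := h (t+1) (by linarith) t ⟨ht', by linarith⟩
  refine h1.mono_of_mem_nhdsWithin ?_
  have h2 : Set.Iic (t+1) ∈ nhdsWithin t (Set.Ici 0) :=
    mem_nhdsWithin_of_mem_nhds (Iic_mem_nhds (by linarith))
  exact Filter.mem_of_superset (Filter.inter_mem self_mem_nhdsWithin h2)
    (fun x hx => ⟨hx.1, hx.2⟩)

lemma gronwall (F : ℝ → ℝ) (a Mh k₀ : ℝ) (c k : ℝ → ℝ)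
    (ha : 0 < a) (hMh : 0 < Mh) (hk₀ : 0 ≤ k₀)
    (hFmono : MonotoneOn F (Set.Ici 0)) (hF0 : F 0 = 0)
    (hFsub : ∀ x ≥ (0:ℝ), F x ≤ a * x + Mh)
    (hcint : LocallyIntegrableOn c (Set.Ici 0))
    (hc0 : ∀ᵐ t ∂(volume.restrict (Set.Ici 0)), 0 ≤ c t)
    (hsol : SolOn F k₀ c k) (hkpos : ∀ t ≥ (0:ℝ), 0 ≤ k t) :
    ∀ t ≥ (0:ℝ), k t ≤ (k₀ + Mh / a) * Real.exp (a*t) ∧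
      (∫ s in (0:ℝ)..t, c s) ≤ 2*(k₀ + Mh / a) * Real.exp (a*t) := by
  obtain ⟨hkc, hk0eq, hkeq⟩ := hsol
  set B : ℝ := k₀ + Mh / a with hB
  have hBpos : 0 < B := by positivity
  set φ : ℝ → ℝ := fun t => ∫ s in (0:ℝ)..t, k s with hφ
  set ψ : ℝ → ℝ := fun t => (B/a) * (Real.exp (a*t) - 1) - (Mh/a) * t with hψ
  clear_value B
  -- integrability facts
  have hcI : ∀ T : ℝ, IntegrableOn c (Set.Icc 0 T) :=
    fun T => hcint.integrableOn_compact_subset Set.Icc_subset_Ici_self isCompact_Icc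
  have hcII : ∀ T ≥ (0:ℝ), IntervalIntegrable c volume 0 T := fun T hT =>
    (intervalIntegrable_iff_integrableOn_Ioc_of_le hT).mpr
      ((hcI T).mono_set Set.Ioc_subset_Icc_self)
  have hkII : ∀ T ≥ (0:ℝ), IntervalIntegrable k volume 0 T := fun T hT => by
    apply ContinuousOn.intervalIntegrable
    apply hkc.mono
    rw [Set.uIcc_of_le hT]
    exact fun x hx => hx.1
  have hGmono : Monotone (fun x => F (max x 0)) := fun x y hxy =>
    hFmono (Set.mem_Ici.mpr (le_max_right _ _)) (Set.mem_Ici.mpr (le_max_right _ _))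
      (max_le_max hxy le_rfl)
  have hFkI : ∀ T ≥ (0:ℝ), IntegrableOn (fun s => F (k s)) (Set.Icc 0 T) := by
    intro T hT
    obtain ⟨C, hC⟩ := isCompact_Icc.exists_bound_of_continuousOn
      (hkc.mono (Set.Icc_subset_Ici_self : Set.Icc (0:ℝ) T ⊆ Set.Ici 0))
    have hk_ae : AEMeasurable k (volume.restrict (Set.Icc 0 T)) :=
      (hkc.mono Set.Icc_subset_Ici_self).aemeasurable measurableSet_Icc
    have hmeas : AEStronglyMeasurable (fun s => F (k s)) (volume.restrict (Set.Icc 0 T)) := by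
      refine (hGmono.measurable.comp_aemeasurable hk_ae).aestronglyMeasurable.congr ?_
      refine ((ae_restrict_iff' measurableSet_Icc).mpr (Filter.Eventually.of_forall ?_))
      intro s hs
      simp only [Function.comp, max_eq_left (hkpos s hs.1)]
    refine Integrable.mono' (g := fun _ => a * C + Mh) (integrableOn_const ?_) hmeas ?_
    · exact measure_Icc_lt_top.ne
    · refine (ae_restrict_iff' measurableSet_Icc).mpr (Filter.Eventually.of_forall ?_)
      intro s hs
      have h0 : 0 ≤ k s := hkpos s hs.1
      have h1 : F (k s) ≤ a * k s + Mh := hFsub _ h0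
      have h2 : 0 ≤ F (k s) := by
        rw [← hF0]; exact hFmono (Set.self_mem_Ici) h0 h0
      have h3 : k s ≤ C := (le_abs_self _).trans ((Real.norm_eq_abs (k s)) ▸ hC s hs)
      rw [Real.norm_eq_abs, abs_of_nonneg h2]
      show F (k s) ≤ a * C + Mh
      nlinarith [mul_le_mul_of_nonneg_left h3 ha.le]
  have hFkII : ∀ T ≥ (0:ℝ), IntervalIntegrable (fun s => F (k s)) volume 0 T := fun T hT =>
    (intervalIntegrable_iff_integrableOn_Ioc_of_le hT).mpr
      ((hFkI T hT).mono_set Set.Ioc_subset_Icc_self)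
  have hcnn : ∀ T ≥ (0:ℝ), 0 ≤ ∫ s in (0:ℝ)..T, c s := by
    intro T hT
    rw [intervalIntegral.integral_of_le hT]
    refine setIntegral_nonneg_of_ae_restrict ?_
    exact ae_restrict_of_ae_restrict_of_subset (fun x hx => le_of_lt hx.1) hc0
  have hlin : ∀ T ≥ (0:ℝ), (∫ s in (0:ℝ)..T, (a * k s + Mh)) = a * φ T + Mh * T := by
    intro T hT
    rw [intervalIntegral.integral_add ((hkII T hT).const_mul a) intervalIntegrable_const,
      intervalIntegral.integral_const_mul, intervalIntegral.integral_const]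
    simp only [hφ, smul_eq_mul]
    ring
  have hFk_le : ∀ T ≥ (0:ℝ), (∫ s in (0:ℝ)..T, F (k s)) ≤ a * φ T + Mh * T := by
    intro T hT
    rw [← hlin T hT]
    refine intervalIntegral.integral_mono_on hT (hFkII T hT)
      (((hkII T hT).const_mul a).add intervalIntegrable_const) ?_
    exact fun s hs => hFsub _ (hkpos s hs.1)
  have key : ∀ t ≥ (0:ℝ), k t ≤ k₀ + Mh * t + a * φ t := by
    intro t ht
    have h1 := hkeq t ht
    rw [intervalIntegral.integral_sub (hFkII t ht) (hcII t ht)] at h1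
    have := hcnn t ht
    have := hFk_le t ht
    linarith
  -- continuity of φ on Ici 0
  have hφc : ContinuousOn φ (Set.Ici 0) := by
    refine contOn_Ici_of_Icc (fun T hT => ?_)
    have := intervalIntegral.continuousOn_primitive_interval
      (μ := volume) (f := k) (a := 0) (b := T) ?_
    · rwa [Set.uIcc_of_le hT.le] at this
    · rw [Set.uIcc_of_le hT.le]
      exact (hkc.mono (fun x hx => hx.1)).integrableOn_compact isCompact_Icc
  have hψd : ∀ x : ℝ, HasDerivAt ψ (B * Real.exp (a*x) - Mh/a) x := by
    intro x
    have h1 : HasDerivAt (fun t : ℝ => a * t) a x := by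
      simpa using (hasDerivAt_id x).const_mul a
    have h2 := h1.exp
    have h4 : HasDerivAt (fun t : ℝ => (Mh/a)*t) (Mh/a) x := by
      simpa using (hasDerivAt_id x).const_mul (Mh/a)
    have h3 := ((h2.sub_const 1).const_mul (B/a)).fun_sub h4
    have hane : a ≠ 0 := ne_of_gt ha
    rw [hψ]
    refine h3.congr_deriv ?_
    field_simp
  have hφd : ∀ x ∈ Set.Ioi (0:ℝ), HasDerivAt φ (k x) x := by
    intro x hx
    refine intervalIntegral.integral_hasDerivAt_right (hkII x (le_of_lt hx)) ?_ ?_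
    · exact (ContinuousAt.stronglyMeasurableAtFilter isOpen_Ioi
        (fun y hy => hkc.continuousAt (Ici_mem_nhds hy)) x hx)
    · exact hkc.continuousAt (Ici_mem_nhds hx)
  clear_value φ ψ
  set g : ℝ → ℝ := fun t => Real.exp (-(a*t)) * (φ t - ψ t) with hg
  clear_value g
  have hgd : ∀ x ∈ Set.Ioi (0:ℝ), HasDerivAt g
      (Real.exp (-(a*x)) * ((k x - (B * Real.exp (a*x) - Mh/a)) - a * (φ x - ψ x))) x := by
    intro x hx
    have h1 : HasDerivAt (fun t : ℝ => -(a * t)) (-a) x := by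
      simpa using ((hasDerivAt_id x).const_mul a).fun_neg
    have h2 := h1.exp
    have h3 := h2.mul ((hφd x hx).fun_sub (hψd x))
    rw [hg]
    refine h3.congr_deriv ?_
    ring
  have hψcont : Continuous ψ := by
    rw [hψ]; fun_prop
  have hanti : AntitoneOn g (Set.Ici 0) := by
    refine antitoneOn_of_deriv_nonpos (convex_Ici 0) ?_ ?_ ?_
    · rw [hg]
      refine ContinuousOn.mul ?_ (hφc.sub hψcont.continuousOn)
      fun_prop
    · rw [interior_Ici]
      exact fun x hx => (hgd x hx).differentiableAt.differentiableWithinAt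
    · rw [interior_Ici]
      intro x hx
      rw [(hgd x hx).deriv]
      have h1 : k x ≤ k₀ + Mh * x + a * φ x := key x (le_of_lt hx)
      have hane : a ≠ 0 := ne_of_gt ha
      have h2 : k₀ + Mh * x + a * ψ x = B * Real.exp (a*x) - Mh/a := by
        simp only [hψ, hB]; field_simp; ring
      have h3 : (k x - (B * Real.exp (a*x) - Mh/a)) - a * (φ x - ψ x) ≤ 0 := by
        rw [← h2]; ring_nf; linarith
      exact mul_nonpos_of_nonneg_of_nonpos (Real.exp_pos _).le h3
  have hφψ : ∀ t ≥ (0:ℝ), φ t ≤ ψ t := by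
    intro t ht
    have h1 : g t ≤ g 0 := hanti Set.self_mem_Ici ht ht
    have hφ0 : φ 0 = 0 := by simp only [hφ]; exact intervalIntegral.integral_same
    have hψ0 : ψ 0 = 0 := by simp only [hψ]; norm_num
    have h2 : g 0 = 0 := by
      simp only [hg]; rw [hφ0, hψ0]; ring
    rw [h2] at h1
    simp only [hg] at h1
    have h1' : Real.exp (-(a*t)) * (φ t - ψ t) ≤ 0 := h1
    have h3 := (Real.exp_pos (-(a*t)))
    nlinarith [h1', h3]
  intro t ht
  have hexp1 : (1:ℝ) ≤ Real.exp (a*t) := by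
    rw [← Real.exp_zero]
    exact Real.exp_le_exp.mpr (by positivity)
  have hkb : k t ≤ B * Real.exp (a*t) := by
    have h1 := key t ht
    have h2 := hφψ t ht
    have hane : a ≠ 0 := ne_of_gt ha
    have h3 : k₀ + Mh * t + a * ψ t = B * Real.exp (a*t) - Mh/a := by
      simp only [hψ, hB]; field_simp; ring
    have h4 : a * φ t ≤ a * ψ t := mul_le_mul_of_nonneg_left h2 ha.le
    have h5 : 0 ≤ Mh / a := by positivity
    linarith
  refine ⟨hkb, ?_⟩
  have h1 := hkeq t ht
  rw [intervalIntegral.integral_sub (hFkII t ht) (hcII t ht)] at h1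
  have h2 : (∫ s in (0:ℝ)..t, F (k s)) ≤ a * ψ t + Mh * t := by
    have := hFk_le t ht
    have h4 : a * φ t ≤ a * ψ t := mul_le_mul_of_nonneg_left (hφψ t ht) ha.le
    linarith
  have hane : a ≠ 0 := ne_of_gt ha
  have h3 : a * ψ t + Mh * t = B * Real.exp (a*t) - B := by
    simp only [hψ]; field_simp; ring
  have h5 : 0 ≤ k t := hkpos t ht
  have h7 : k₀ ≤ B := by rw [hB]; nlinarith [div_nonneg hMh.le ha.le]
  have h8 : B * 1 ≤ B * Real.exp (a*t) := mul_le_mul_of_nonneg_left hexp1 hBpos.le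
  nlinarith

lemma Ioi_eq_iUnion_Ioc : Set.Ioi (0:ℝ) = ⋃ n : ℕ, Set.Ioc (n:ℝ) (n+1) := by
  ext t
  simp only [Set.mem_Ioi, Set.mem_iUnion, Set.mem_Ioc]
  constructor
  · intro ht
    have h1 : 1 ≤ ⌈t⌉₊ := Nat.one_le_ceil_iff.mpr ht
    refine ⟨⌈t⌉₊ - 1, ?_, ?_⟩
    · push_cast [Nat.cast_sub h1]
      have := Nat.ceil_lt_add_one (le_of_lt ht)
      linarith
    · push_cast [Nat.cast_sub h1]
      have := Nat.le_ceil t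
      linarith
  · rintro ⟨n, hn1, hn2⟩
    exact lt_of_le_of_lt (Nat.cast_nonneg n) hn1

lemma pairwise_disjoint_Ioc_nat :
    Pairwise (Function.onFun Disjoint (fun n : ℕ => Set.Ioc (n:ℝ) (n+1))) := by
  intro i j hij
  simp only [Function.onFun]
  rcases hij.lt_or_gt with h | h
  · refine Set.Ioc_disjoint_Ioc.mpr ?_
    have h' : (i:ℝ) + 1 ≤ (j:ℝ) := by exact_mod_cast h
    exact le_trans (min_le_left _ _) (le_trans h' (le_max_right _ _))
  · refine Set.Ioc_disjoint_Ioc.mpr ?_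
    have h' : (j:ℝ) + 1 ≤ (i:ℝ) := by exact_mod_cast h
    exact le_trans (min_le_right _ _) (le_trans h' (le_max_left _ _))

lemma util_bdd (F u : ℝ → ℝ) (ρ L ε₀ Mh : ℝ)
    (hρ : 0 < ρ) (hL : 0 < L) (hε₀ : 0 < ε₀) (hMh : 0 < Mh)
    (hFmono : StrictMonoOn F (Set.Ici 0)) (hF0 : F 0 = 0)
    (hFsub : ∀ x ≥ (0:ℝ), F x ≤ (L + ε₀) * x + Mh)
    (hucont : ContinuousOn u (Set.Ici 0)) (humono : StrictMonoOn u (Set.Ici 0))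
    (huconc : ConcaveOn ℝ (Set.Ici 0) u) (hu0 : u 0 = 0)
    (hexp : Filter.Tendsto
      (fun t => Real.exp (ε₀ * t) * Real.exp (-ρ * t) * u (Real.exp ((L + ε₀) * t)))
      Filter.atTop (nhds 0))
    (k₀ : ℝ) (hk₀ : 0 ≤ k₀) :
    BddAbove {x | ∃ c, Adm F k₀ c ∧ Util ρ u c = x} := by
  set A : ℝ := L + ε₀ with hA
  have hApos : 0 < A := by positivity
  set B : ℝ := k₀ + Mh / A with hB
  have hBnn : 0 ≤ B := by positivity
  clear_value B
  have humon : MonotoneOn u (Set.Ici 0) := humono.monotoneOn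
  have hu_nn : ∀ y, 0 ≤ y → 0 ≤ u y := fun y hy => by
    rw [← hu0]; exact humon Set.self_mem_Ici hy hy
  -- bound on the discounted utility of the comparison trajectory
  obtain ⟨T₀, hT₀⟩ := Filter.eventually_atTop.mp
    (hexp.eventually (gt_mem_nhds (by norm_num : (0:ℝ) < 1)))
  set T₁ : ℝ := max T₀ 0 with hT₁
  have hT₁nn : 0 ≤ T₁ := le_max_right _ _
  have hg₁cont : ContinuousOn (fun t => Real.exp (-ρ*t) * u (Real.exp (A*t))) (Set.Icc 0 T₁) := by
    refine ContinuousOn.mul (by fun_prop) ?_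
    refine hucont.comp (by fun_prop) ?_
    exact fun x _ => Set.mem_Ici.mpr (Real.exp_nonneg _)
  obtain ⟨C₃, hC₃⟩ := isCompact_Icc.exists_bound_of_continuousOn hg₁cont
  set C₄ : ℝ := (max C₃ 1) * Real.exp (ε₀ * T₁) with hC₄
  have hexpT₁ : 1 ≤ Real.exp (ε₀ * T₁) := by
    rw [← Real.exp_zero]; exact Real.exp_le_exp.mpr (by positivity)
  have hC₄1 : 1 ≤ C₄ := by
    rw [hC₄]
    nlinarith [le_max_right C₃ 1]
  have hC₄nn : 0 ≤ C₄ := le_trans zero_le_one hC₄1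
  clear_value C₄
  have hg₁bd : ∀ t, 0 ≤ t → Real.exp (-ρ*t) * u (Real.exp (A*t)) ≤ C₄ * Real.exp (-ε₀*t) := by
    intro t ht
    rcases le_or_gt t T₁ with hcase | hcase
    · have h1 := hC₃ t ⟨ht, hcase⟩
      rw [Real.norm_eq_abs] at h1
      have h2 : Real.exp (-ρ*t) * u (Real.exp (A*t)) ≤ C₃ := le_trans (le_abs_self _) h1
      have e1 : Real.exp (ε₀*T₁) * Real.exp (-ε₀*t) = Real.exp (ε₀*T₁ - ε₀*t) := by
        rw [← Real.exp_add]; ring_nf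
      have e2 : 1 ≤ Real.exp (ε₀*T₁ - ε₀*t) := by
        rw [← Real.exp_zero]
        apply Real.exp_le_exp.mpr
        nlinarith
      calc Real.exp (-ρ*t) * u (Real.exp (A*t)) ≤ C₃ := h2
        _ ≤ max C₃ 1 := le_max_left _ _
        _ = (max C₃ 1) * 1 := (mul_one _).symm
        _ ≤ (max C₃ 1) * Real.exp (ε₀*T₁ - ε₀*t) := by
            apply mul_le_mul_of_nonneg_left e2
            exact le_trans zero_le_one (le_max_right _ _)
        _ = C₄ * Real.exp (-ε₀*t) := by rw [hC₄, mul_assoc, e1]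
    · have hT : T₀ ≤ t := le_trans (le_max_left _ _) (le_of_lt hcase)
      have h1 := le_of_lt (hT₀ t hT)
      have hE : Real.exp (ε₀*t) * Real.exp (-ε₀*t) = 1 := by
        rw [← Real.exp_add]; ring_nf; exact Real.exp_zero
      have h2 := mul_le_mul_of_nonneg_left h1 (Real.exp_nonneg (-ε₀*t))
      have hE' : Real.exp (-ε₀*t) * Real.exp (ε₀*t) = 1 := by
        rw [← Real.exp_add]; ring_nf; exact Real.exp_zero
      have key : Real.exp (-ε₀*t) * (Real.exp (ε₀*t) * Real.exp (-ρ*t) * u (Real.exp (A*t)))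
          = Real.exp (-ρ*t) * u (Real.exp (A*t)) := by
        calc Real.exp (-ε₀*t) * (Real.exp (ε₀*t) * Real.exp (-ρ*t) * u (Real.exp (A*t)))
            = (Real.exp (-ε₀*t) * Real.exp (ε₀*t)) * (Real.exp (-ρ*t) * u (Real.exp (A*t))) := by
              ring
          _ = Real.exp (-ρ*t) * u (Real.exp (A*t)) := by rw [hE']; ring
      have h3 : Real.exp (-ρ*t) * u (Real.exp (A*t)) ≤ Real.exp (-ε₀*t) := by
        rw [key, mul_one] at h2; exact h2
      have h4 : Real.exp (-ε₀*t) ≤ C₄ * Real.exp (-ε₀*t) := by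
        nlinarith [Real.exp_nonneg (-ε₀*t)]
      linarith
  -- concavity cut
  have hcut : ∀ t, 0 ≤ t → ∀ y, 0 ≤ y →
      u y ≤ u (Real.exp (A*t)) + u (Real.exp (A*t)) * Real.exp (-(A*t)) * y := by
    intro t ht y hy
    set Y : ℝ := Real.exp (A*t) with hY
    have hYpos : 0 < Y := Real.exp_pos _
    have hYu : 0 ≤ u Y := hu_nn Y hYpos.le
    have hinv : Real.exp (-(A*t)) = Y⁻¹ := by rw [hY, ← Real.exp_neg]
    rcases le_or_gt y Y with hcase | hcase
    · have h1 : u y ≤ u Y := humon hy hYpos.le hcase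
      have h2 : 0 ≤ u Y * Real.exp (-(A*t)) * y :=
        mul_nonneg (mul_nonneg hYu (Real.exp_nonneg _)) hy
      linarith
    · have hypos : 0 < y := lt_trans hYpos hcase
      have h5 := huconc.2 (Set.mem_Ici.mpr hy) Set.self_mem_Ici
        (div_nonneg hYpos.le hy) (sub_nonneg.mpr ((div_le_one hypos).mpr hcase.le))
        (by ring)
      simp only [smul_eq_mul, hu0, mul_zero, add_zero] at h5
      rw [div_mul_cancel₀ _ (ne_of_gt hypos)] at h5
      -- h5 : Y / y * u y ≤ u Y
      have h6 : Y * u y ≤ u Y * y := by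
        rw [div_mul_eq_mul_div, div_le_iff₀ hypos] at h5
        linarith
      have h7 : u y ≤ (u Y * y) / Y := (le_div_iff₀ hYpos).mpr (by nlinarith [h6])
      have h8 : u Y * Real.exp (-(A*t)) * y = (u Y * y) / Y := by
        rw [hinv]; field_simp
      rw [h8]
      linarith [hYu, h7]
  -- the main bound
  set K : ℝ := C₄ + C₄ * (2*B) * Real.exp A with hK
  have hKnn : 0 ≤ K := by
    rw [hK]
    have h1 : (0:ℝ) ≤ 2*B := by linarith
    nlinarith [mul_nonneg (mul_nonneg hC₄nn h1) (Real.exp_nonneg A)]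
  set S : ℝ≥0∞ := ENNReal.ofReal K * (1 - ENNReal.ofReal (Real.exp (-ε₀)))⁻¹ with hS
  have hrlt1 : ENNReal.ofReal (Real.exp (-ε₀)) < 1 := by
    rw [← ENNReal.ofReal_one]
    exact (ENNReal.ofReal_lt_ofReal_iff one_pos).mpr
      (Real.exp_lt_one_iff.mpr (by linarith))
  have hSne : S ≠ ⊤ := by
    apply ENNReal.mul_ne_top ENNReal.ofReal_ne_top
    rw [ENNReal.inv_ne_top]
    exact (tsub_pos_of_lt hrlt1).ne'
  refine ⟨S.toReal, ?_⟩
  rintro x ⟨c, ⟨hcint, hc0, k, hsol, hkpos⟩, rfl⟩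
  have traj := gronwall F A Mh k₀ c k hApos hMh hk₀ hFmono.monotoneOn hF0
    (by rw [hA] at hFsub ⊢; exact hFsub) hcint hc0 hsol hkpos
  by_cases hInt : Integrable (fun t => Real.exp (-ρ*t) * u (c t)) (volume.restrict (Set.Ioi 0))
  case neg =>
    have h0 : Util ρ u c = 0 := integral_undef hInt
    rw [h0]
    exact ENNReal.toReal_nonneg
  case pos =>
  have hae_nn : ∀ᵐ t ∂(volume.restrict (Set.Ioi (0:ℝ))), 0 ≤ c t :=
    ae_restrict_of_ae_restrict_of_subset Set.Ioi_subset_Ici_self hc0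
  have hf_nn : 0 ≤ᵐ[volume.restrict (Set.Ioi (0:ℝ))] fun t => Real.exp (-ρ*t) * u (c t) := by
    filter_upwards [hae_nn] with t hct
    exact mul_nonneg (Real.exp_nonneg _) (hu_nn _ hct)
  show (∫ t in Set.Ioi (0:ℝ), Real.exp (-ρ*t) * u (c t)) ≤ S.toReal
  rw [integral_eq_lintegral_of_nonneg_ae hf_nn hInt.aestronglyMeasurable]
  apply ENNReal.toReal_mono hSne
  have hcIoc : ∀ n : ℕ, IntegrableOn c (Set.Ioc (0:ℝ) ((n:ℝ)+1)) :=
    fun n => (hcint.integrableOn_compact_subset Set.Icc_subset_Ici_self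
      isCompact_Icc).mono_set Set.Ioc_subset_Icc_self
  have piece : ∀ n : ℕ, (∫⁻ t in Set.Ioc (n:ℝ) ((n:ℝ)+1),
      ENNReal.ofReal (Real.exp (-ρ*t) * u (c t)))
      ≤ ENNReal.ofReal K * (ENNReal.ofReal (Real.exp (-ε₀)))^n := by
    intro n
    have hnn : (0:ℝ) ≤ (n:ℝ) := Nat.cast_nonneg n
    have hCe1 : 0 ≤ C₄ * Real.exp (-ε₀*(n:ℝ)) := mul_nonneg hC₄nn (Real.exp_nonneg _)
    have hCe2 : 0 ≤ C₄ * Real.exp (-ε₀*(n:ℝ)) * Real.exp (-(A*(n:ℝ))) :=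
      mul_nonneg hCe1 (Real.exp_nonneg _)
    have hBe : 0 ≤ 2*B * Real.exp (A*((n:ℝ)+1)) :=
      mul_nonneg (by linarith) (Real.exp_nonneg _)
    -- pointwise bound
    have hptwise : ∀ᵐ t ∂(volume.restrict (Set.Ioc (n:ℝ) ((n:ℝ)+1))),
        ENNReal.ofReal (Real.exp (-ρ*t) * u (c t)) ≤
          ENNReal.ofReal (C₄ * Real.exp (-ε₀*(n:ℝ))) +
          ENNReal.ofReal (C₄ * Real.exp (-ε₀*(n:ℝ)) * Real.exp (-(A*(n:ℝ)))) *
            ENNReal.ofReal (c t) := by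
      have hsub : Set.Ioc (n:ℝ) ((n:ℝ)+1) ⊆ Set.Ici 0 :=
        fun t ht => le_of_lt (lt_of_le_of_lt hnn ht.1)
      filter_upwards [ae_restrict_of_ae_restrict_of_subset hsub hc0,
        ae_restrict_mem measurableSet_Ioc] with t hct htmem
      have ht0 : (0:ℝ) < t := lt_of_le_of_lt hnn htmem.1
      have htn : (n:ℝ) ≤ t := le_of_lt htmem.1
      -- real bound
      have hb1 : Real.exp (-ρ*t) * u (c t) ≤
          Real.exp (-ρ*t) * u (Real.exp (A*t)) +
          (Real.exp (-ρ*t) * u (Real.exp (A*t))) * Real.exp (-(A*t)) * c t := by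
        have := hcut t ht0.le (c t) hct
        nlinarith [Real.exp_nonneg (-ρ*t)]
      have hg₁t := hg₁bd t ht0.le
      have hg₁nn : 0 ≤ Real.exp (-ρ*t) * u (Real.exp (A*t)) :=
        mul_nonneg (Real.exp_nonneg _) (hu_nn _ (Real.exp_nonneg _))
      have hmono1 : Real.exp (-ε₀*t) ≤ Real.exp (-ε₀*(n:ℝ)) :=
        Real.exp_le_exp.mpr
          (by have := mul_le_mul_of_nonneg_left htn hε₀.le; linarith)
      have hmono2 : Real.exp (-(A*t)) ≤ Real.exp (-(A*(n:ℝ))) :=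
        Real.exp_le_exp.mpr
          (by have := mul_le_mul_of_nonneg_left htn hApos.le; linarith)
      have hb2 : Real.exp (-ρ*t) * u (c t) ≤
          C₄ * Real.exp (-ε₀*(n:ℝ)) +
          (C₄ * Real.exp (-ε₀*(n:ℝ)) * Real.exp (-(A*(n:ℝ)))) * c t := by
        have e1 : Real.exp (-ρ*t) * u (Real.exp (A*t)) ≤ C₄ * Real.exp (-ε₀*(n:ℝ)) := by
          calc Real.exp (-ρ*t) * u (Real.exp (A*t)) ≤ C₄ * Real.exp (-ε₀*t) := hg₁t
            _ ≤ C₄ * Real.exp (-ε₀*(n:ℝ)) := mul_le_mul_of_nonneg_left hmono1 hC₄nn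
        have e2 : (Real.exp (-ρ*t) * u (Real.exp (A*t))) * Real.exp (-(A*t)) * c t ≤
            (C₄ * Real.exp (-ε₀*(n:ℝ))) * Real.exp (-(A*(n:ℝ))) * c t := by
          apply mul_le_mul_of_nonneg_right _ hct
          exact mul_le_mul e1 hmono2 (Real.exp_nonneg _) hCe1
        linarith
      calc ENNReal.ofReal (Real.exp (-ρ*t) * u (c t))
          ≤ ENNReal.ofReal (C₄ * Real.exp (-ε₀*(n:ℝ)) +
              (C₄ * Real.exp (-ε₀*(n:ℝ)) * Real.exp (-(A*(n:ℝ)))) * c t) :=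
            ENNReal.ofReal_le_ofReal hb2
        _ = ENNReal.ofReal (C₄ * Real.exp (-ε₀*(n:ℝ))) +
            ENNReal.ofReal (C₄ * Real.exp (-ε₀*(n:ℝ)) * Real.exp (-(A*(n:ℝ))) * c t) := by
            rw [ENNReal.ofReal_add hCe1 (mul_nonneg hCe2 hct)]
        _ = _ := by rw [ENNReal.ofReal_mul hCe2]
    have h1 := lintegral_mono_ae hptwise
    have h2 : (∫⁻ t in Set.Ioc (n:ℝ) ((n:ℝ)+1),
        (ENNReal.ofReal (C₄ * Real.exp (-ε₀*(n:ℝ))) +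
          ENNReal.ofReal (C₄ * Real.exp (-ε₀*(n:ℝ)) * Real.exp (-(A*(n:ℝ)))) *
            ENNReal.ofReal (c t)))
        = ENNReal.ofReal (C₄ * Real.exp (-ε₀*(n:ℝ))) * volume (Set.Ioc (n:ℝ) ((n:ℝ)+1)) +
          ENNReal.ofReal (C₄ * Real.exp (-ε₀*(n:ℝ)) * Real.exp (-(A*(n:ℝ)))) *
            ∫⁻ t in Set.Ioc (n:ℝ) ((n:ℝ)+1), ENNReal.ofReal (c t) := by
      rw [lintegral_add_left measurable_const,
        lintegral_const_mul' _ _ ENNReal.ofReal_ne_top, setLIntegral_const]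
    have hvol : volume (Set.Ioc (n:ℝ) ((n:ℝ)+1)) = 1 := by
      rw [Real.volume_Ioc]
      simp
    have h3 : (∫⁻ t in Set.Ioc (n:ℝ) ((n:ℝ)+1), ENNReal.ofReal (c t))
        ≤ ENNReal.ofReal (2*B * Real.exp (A*((n:ℝ)+1))) := by
      calc (∫⁻ t in Set.Ioc (n:ℝ) ((n:ℝ)+1), ENNReal.ofReal (c t))
          ≤ ∫⁻ t in Set.Ioc (0:ℝ) ((n:ℝ)+1), ENNReal.ofReal (c t) :=
            lintegral_mono_set (fun t ht => ⟨lt_of_le_of_lt hnn ht.1, ht.2⟩)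
        _ = ENNReal.ofReal (∫ t in Set.Ioc (0:ℝ) ((n:ℝ)+1), c t) :=
            (ofReal_integral_eq_lintegral_ofReal (hcIoc n)
              (ae_restrict_of_ae_restrict_of_subset
                (fun t ht => le_of_lt ht.1) hc0)).symm
        _ ≤ ENNReal.ofReal (2*B * Real.exp (A*((n:ℝ)+1))) := by
            apply ENNReal.ofReal_le_ofReal
            have := (traj ((n:ℝ)+1) (by positivity)).2
            rw [intervalIntegral.integral_of_le (by positivity)] at this
            rw [hB]
            linarith
    calc (∫⁻ t in Set.Ioc (n:ℝ) ((n:ℝ)+1), ENNReal.ofReal (Real.exp (-ρ*t) * u (c t)))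
        ≤ _ := h1
      _ = _ := h2
      _ ≤ ENNReal.ofReal (C₄ * Real.exp (-ε₀*(n:ℝ))) * 1 +
          ENNReal.ofReal (C₄ * Real.exp (-ε₀*(n:ℝ)) * Real.exp (-(A*(n:ℝ)))) *
            ENNReal.ofReal (2*B * Real.exp (A*((n:ℝ)+1))) := by
          rw [hvol]
          exact add_le_add le_rfl (mul_le_mul_right h3 _)
      _ = ENNReal.ofReal (C₄ * Real.exp (-ε₀*(n:ℝ)) +
          C₄ * Real.exp (-ε₀*(n:ℝ)) * Real.exp (-(A*(n:ℝ))) * (2*B * Real.exp (A*((n:ℝ)+1)))) := by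
          rw [mul_one, ← ENNReal.ofReal_mul hCe2,
            ← ENNReal.ofReal_add hCe1 (mul_nonneg hCe2 hBe)]
      _ = ENNReal.ofReal (K * Real.exp (-ε₀)^n) := by
          congr 1
          have e1 : Real.exp (-(A*(n:ℝ))) * Real.exp (A*((n:ℝ)+1)) = Real.exp A := by
            rw [← Real.exp_add]; ring_nf
          have e2 : Real.exp (-ε₀*(n:ℝ)) = Real.exp (-ε₀)^n := by
            rw [← Real.exp_nat_mul]; ring_nf
          rw [← e2, hK]
          linear_combination (C₄ * Real.exp (-ε₀*(n:ℝ)) * 2 * B) * e1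
      _ = ENNReal.ofReal K * (ENNReal.ofReal (Real.exp (-ε₀)))^n := by
          rw [ENNReal.ofReal_mul hKnn, ENNReal.ofReal_pow (Real.exp_nonneg _)]
  calc (∫⁻ t in Set.Ioi (0:ℝ), ENNReal.ofReal (Real.exp (-ρ*t) * u (c t)))
      = ∑' n : ℕ, ∫⁻ t in Set.Ioc (n:ℝ) ((n:ℝ)+1),
          ENNReal.ofReal (Real.exp (-ρ*t) * u (c t)) := by
        rw [Ioi_eq_iUnion_Ioc, lintegral_iUnion (fun n => measurableSet_Ioc)
          pairwise_disjoint_Ioc_nat]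
    _ ≤ ∑' n : ℕ, ENNReal.ofReal K * (ENNReal.ofReal (Real.exp (-ε₀)))^n :=
        ENNReal.tsum_le_tsum piece
    _ = S := by rw [ENNReal.tsum_mul_left, ENNReal.tsum_geometric, hS]

lemma const_adm (F : ℝ → ℝ) (k₀ : ℝ) (hk₀ : 0 ≤ k₀)
    (hFmono : StrictMonoOn F (Set.Ici 0)) (hF0 : F 0 = 0) :
    Adm F k₀ (fun _ => F k₀) := by
  refine ⟨(locallyIntegrable_const _).locallyIntegrableOn _, ?_, fun _ => k₀, ⟨?_, rfl, ?_⟩, ?_⟩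
  · refine Filter.Eventually.of_forall (fun t => ?_)
    rw [← hF0]
    exact hFmono.monotoneOn Set.self_mem_Ici hk₀ hk₀
  · exact continuousOn_const
  · intro t ht
    simp
  · exact fun t _ => hk₀

lemma integral_exp_decay (ρ : ℝ) (hρ : 0 < ρ) :
    (∫ t in Set.Ioi (0:ℝ), Real.exp (-ρ*t)) = 1/ρ := by
  have hd : ∀ x ∈ Set.Ici (0:ℝ), HasDerivAt (fun t => -Real.exp (-ρ*t)/ρ) (Real.exp (-ρ*x)) x := by
    intro x _
    have h1 : HasDerivAt (fun t : ℝ => -ρ*t) (-ρ) x := by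
      simpa using (hasDerivAt_id x).const_mul (-ρ)
    have h2 := (h1.exp.fun_neg).div_const ρ
    refine h2.congr_deriv ?_
    field_simp
  have hint : IntegrableOn (fun t => Real.exp (-ρ*t)) (Set.Ioi 0) :=
    exp_neg_integrableOn_Ioi 0 hρ
  have htend : Filter.Tendsto (fun t => -Real.exp (-ρ*t)/ρ) Filter.atTop (nhds 0) := by
    have h3 : Filter.Tendsto (fun t:ℝ => -ρ*t) Filter.atTop Filter.atBot :=
      tendsto_id.const_mul_atTop_of_neg (by linarith)
    have h4 := ((Real.tendsto_exp_atBot.comp h3).neg).div_const ρ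
    simpa using h4
  have h5 := integral_Ioi_of_hasDerivAt_of_tendsto' hd hint htend
  rw [h5]
  rw [mul_zero, Real.exp_zero]
  ring

lemma const_util (F u : ℝ → ℝ) (ρ : ℝ) (hρ : 0 < ρ) (k₀ : ℝ) :
    Util ρ u (fun _ => F k₀) = u (F k₀) / ρ := by
  show (∫ t in Set.Ioi (0:ℝ), Real.exp (-ρ * t) * u (F k₀)) = u (F k₀) / ρ
  rw [integral_mul_const]
  rw [show (fun t => Real.exp (-ρ * t)) = fun t => Real.exp (-ρ*t) from rfl]
  rw [integral_exp_decay ρ hρ]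
  ring


theorem stmt11 (F u : ℝ → ℝ) (ρ L ε₀ Mh : ℝ)
    (hρ : 0 < ρ) (hL : 0 < L) (hε₀ : 0 < ε₀) (hMh : 0 < Mh)
    (hFmono : StrictMonoOn F (Set.Ici 0)) (hF0 : F 0 = 0)
    (hFsub : ∀ x ≥ (0:ℝ), F x ≤ (L + ε₀) * x + Mh)
    (hFtop : Filter.Tendsto F Filter.atTop Filter.atTop)
    (hucont : ContinuousOn u (Set.Ici 0)) (humono : StrictMonoOn u (Set.Ici 0))
    (huconc : ConcaveOn ℝ (Set.Ici 0) u) (hu0 : u 0 = 0)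
    (hulim : Filter.Tendsto u Filter.atTop Filter.atTop)
    (hexp : Filter.Tendsto
      (fun t => Real.exp (ε₀ * t) * Real.exp (-ρ * t) * u (Real.exp ((L + ε₀) * t)))
      Filter.atTop (nhds 0)) :
    (∀ k₀ ≥ (0:ℝ), BddAbove {x | ∃ c, Adm F k₀ c ∧ Util ρ u c = x}) ∧
    (∀ k₀ ≥ (0:ℝ), u (F k₀) / ρ ≤ Val F ρ u k₀) ∧
    Filter.Tendsto (Val F ρ u) Filter.atTop Filter.atTop := by
  have hbdd : ∀ k₀ ≥ (0:ℝ), BddAbove {x | ∃ c, Adm F k₀ c ∧ Util ρ u c = x} :=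
    fun k₀ hk₀ => util_bdd F u ρ L ε₀ Mh hρ hL hε₀ hMh hFmono hF0 hFsub
      hucont humono huconc hu0 hexp k₀ hk₀
  have hlow : ∀ k₀ ≥ (0:ℝ), u (F k₀) / ρ ≤ Val F ρ u k₀ := by
    intro k₀ hk₀
    exact le_csSup (hbdd k₀ hk₀)
      ⟨fun _ => F k₀, const_adm F k₀ hk₀ hFmono hF0, const_util F u ρ hρ k₀⟩
  refine ⟨hbdd, hlow, ?_⟩
  refine Filter.tendsto_atTop_mono' Filter.atTop ?_
    ((hulim.comp hFtop).atTop_div_const hρ)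
  filter_upwards [Filter.eventually_ge_atTop (0:ℝ)] with k hk
  exact hlow k hk
end
end

section
/- Under the standing assumptions, the value function V satisfies lim_{k→∞} V(k)/k = 0. -/
open MeasureTheory

noncomputable section

open Set Filter

section Aux
variable {u : ℝ → ℝ}

lemma u_nonneg (humono : StrictMonoOn u (Set.Ici 0)) (hu0 : u 0 = 0) {x : ℝ} (hx : 0 ≤ x) :
    0 ≤ u x := by
  rcases eq_or_lt_of_le hx with h | h
  · rw [← h, hu0]
  · exact hu0 ▸ (humono Set.self_mem_Ici (Set.mem_Ici.2 hx) h).le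

lemma conc_ratio (huconc : ConcaveOn ℝ (Set.Ici 0) u) (hu0 : u 0 = 0) {x y : ℝ}
    (hx : 0 < x) (hxy : x ≤ y) : x / y * u y ≤ u x := by
  have hy : 0 < y := hx.trans_le hxy
  have ha : (0:ℝ) ≤ 1 - x / y := by
    have : x / y ≤ 1 := (div_le_one hy).2 hxy
    linarith
  have hb : (0:ℝ) ≤ x / y := by positivity
  have h1 := huconc.2 Set.self_mem_Ici (Set.mem_Ici.2 hy.le) ha hb (by ring)
  have h2 : (1 - x / y) • (0:ℝ) + (x / y) • y = x := by
    simp [smul_eq_mul]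
    field_simp
  rw [h2] at h1
  simpa [hu0, smul_eq_mul] using h1

lemma u_le_aux (humono : StrictMonoOn u (Set.Ici 0)) (huconc : ConcaveOn ℝ (Set.Ici 0) u)
    (hu0 : u 0 = 0) {x c : ℝ} (hx : 0 < x) (hc : 0 ≤ c) :
    u c ≤ u x + u x / x * c := by
  have hux : 0 ≤ u x := u_nonneg humono hu0 hx.le
  rcases le_or_gt c x with h | h
  · have h1 : u c ≤ u x := humono.monotoneOn (Set.mem_Ici.2 hc) (Set.mem_Ici.2 hx.le) h
    have h2 : 0 ≤ u x / x * c := by positivity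
    linarith
  · have hc' : 0 < c := hx.trans h
    have key : x / c * u c ≤ u x := conc_ratio huconc hu0 hx h.le
    rw [div_mul_eq_mul_div, div_le_iff₀ hc'] at key
    have h3 : u c ≤ u x * c / x := by
      rw [le_div_iff₀ hx]; nlinarith
    calc u c ≤ u x * c / x := h3
      _ = u x / x * c := by ring
      _ ≤ u x + u x / x * c := le_add_of_nonneg_left hux

lemma u_scale (huconc : ConcaveOn ℝ (Set.Ici 0) u) (hu0 : u 0 = 0) {K x : ℝ}
    (hK : 1 ≤ K) (hx : 0 < x) : u (K * x) ≤ K * u x := by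
  have hK0 : (0:ℝ) < K := lt_of_lt_of_le one_pos hK
  have hx2 : x ≤ K * x := le_mul_of_one_le_left hx.le hK
  have key := conc_ratio huconc hu0 hx hx2
  rw [div_mul_eq_mul_div, div_le_iff₀ (by positivity)] at key
  nlinarith

lemma ucont_comp (hucont : ContinuousOn u (Set.Ici 0)) :
    Continuous (fun x => u (max x 0)) :=
  hucont.comp_continuous (continuous_id.max continuous_const)
    (fun x => Set.mem_Ici.2 (le_max_right _ _))

lemma cont_u_comp (hucont : ContinuousOn u (Set.Ici 0)) {g : ℝ → ℝ} (hg : Continuous g)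
    (hg0 : ∀ t, 0 ≤ g t) : Continuous fun t => u (g t) := by
  have h := (ucont_comp hucont).comp hg
  simp only [Function.comp_def] at h
  have e : (fun t => u (max (g t) 0)) = fun t => u (g t) :=
    funext fun t => by rw [max_eq_left (hg0 t)]
  rwa [e] at h

end Aux

lemma base_int {ρ a : ℝ} (hρ : 0 < ρ) (ha : 0 < a)
    (hucont : ContinuousOn u (Set.Ici 0)) (humono : StrictMonoOn u (Set.Ici 0)) (hu0 : u 0 = 0)
    (hint : IntegrableOn (fun t => t * Real.exp (-ρ * t) * u (Real.exp (a * t))) (Set.Ioi 0)) :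
    IntegrableOn (fun t => Real.exp (-ρ * t) * u (Real.exp (a * t))) (Set.Ioi 0) := by
  have hcont : Continuous fun t => Real.exp (-ρ * t) * u (Real.exp (a * t)) := by
    exact (Real.continuous_exp.comp (by fun_prop)).mul
      (cont_u_comp hucont (Real.continuous_exp.comp (by fun_prop)) fun t => (Real.exp_pos _).le)
  have h1 : IntegrableOn (fun t => Real.exp (-ρ * t) * u (Real.exp (a * t))) (Set.Ioc 0 1) :=
    (hcont.integrableOn_Icc (a := 0) (b := 1)).mono_set Set.Ioc_subset_Icc_self
  have h2 : IntegrableOn (fun t => Real.exp (-ρ * t) * u (Real.exp (a * t))) (Set.Ioi 1) := by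
    refine Integrable.mono' (hint.mono_set (Set.Ioi_subset_Ioi zero_le_one))
      hcont.aestronglyMeasurable.restrict ?_
    refine (ae_restrict_iff' measurableSet_Ioi).2 (Filter.Eventually.of_forall fun t ht => ?_)
    have h1t : (1:ℝ) ≤ t := (Set.mem_Ioi.1 ht).le
    have hun : 0 ≤ u (Real.exp (a * t)) := u_nonneg humono hu0 (Real.exp_pos _).le
    have hen : 0 < Real.exp (-ρ * t) := Real.exp_pos _
    rw [Real.norm_eq_abs, abs_of_nonneg (by positivity)]
    nlinarith [mul_nonneg (mul_nonneg (sub_nonneg.2 h1t) hen.le) hun]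
  have h := h1.union h2
  rwa [Set.Ioc_union_Ioi_eq_Ioi zero_le_one] at h

lemma Iu_int {ρ a K : ℝ} (hρ : 0 < ρ) (ha : 0 < a)
    (hucont : ContinuousOn u (Set.Ici 0)) (humono : StrictMonoOn u (Set.Ici 0))
    (huconc : ConcaveOn ℝ (Set.Ici 0) u) (hu0 : u 0 = 0)
    (hint : IntegrableOn (fun t => t * Real.exp (-ρ * t) * u (Real.exp (a * t))) (Set.Ioi 0))
    (hK : 1 ≤ K) :
    IntegrableOn (fun t => Real.exp (-ρ * t) * u (K * Real.exp (a * t))) (Set.Ioi 0) := by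
  have hbase := base_int hρ ha hucont humono hu0 hint
  have hcont : Continuous fun t => Real.exp (-ρ * t) * u (K * Real.exp (a * t)) := by
    exact (Real.continuous_exp.comp (by fun_prop)).mul
      (cont_u_comp hucont (continuous_const.mul (Real.continuous_exp.comp (by fun_prop)))
        fun t => by positivity)
  refine Integrable.mono' (hbase.const_mul K) hcont.aestronglyMeasurable.restrict ?_
  refine Filter.Eventually.of_forall fun t => ?_
  have hscale : u (K * Real.exp (a * t)) ≤ K * u (Real.exp (a * t)) :=
    u_scale huconc hu0 hK (Real.exp_pos _)
  have hun : 0 ≤ u (K * Real.exp (a * t)) :=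
    u_nonneg humono hu0 (by positivity)
  have hen : 0 < Real.exp (-ρ * t) := Real.exp_pos _
  rw [Real.norm_eq_abs, abs_of_nonneg (by positivity)]
  nlinarith [mul_le_mul_of_nonneg_left hscale hen.le]

lemma exp_neg_int {b : ℝ} (hb : 0 < b) (t : ℝ) :
    ∫ s in Set.Ioi t, b * Real.exp (-b * s) = Real.exp (-b * t) := by
  have hderiv : ∀ s ∈ Set.Ici t, HasDerivAt (fun s => -Real.exp (-b * s)) (b * Real.exp (-b * s)) s := by
    intro s _
    have h1 : HasDerivAt (fun s : ℝ => -b * s) (-b) s := by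
      simpa using (hasDerivAt_id s).const_mul (-b)
    have h2 := (Real.hasDerivAt_exp (-b * s)).comp s h1
    have h3 := h2.neg
    rw [show b * Real.exp (-b * s) = -(Real.exp (-b * s) * -b) by ring]
    exact h3
  have hInt : IntegrableOn (fun s => b * Real.exp (-b * s)) (Set.Ioi t) :=
    (exp_neg_integrableOn_Ioi t hb).const_mul b
  have hTend : Filter.Tendsto (fun s => -Real.exp (-b * s)) Filter.atTop (nhds 0) := by
    have h1 : Filter.Tendsto (fun s : ℝ => b * s) Filter.atTop Filter.atTop :=
      Filter.Tendsto.const_mul_atTop hb Filter.tendsto_id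
    have h2 := (Real.tendsto_exp_neg_atTop_nhds_zero).comp h1
    have h3 := h2.neg
    simp only [neg_zero] at h3
    convert h3 using 2 with s
    simp [Function.comp, neg_mul]
  have := MeasureTheory.integral_Ioi_of_hasDerivAt_of_tendsto' hderiv hInt hTend
  rw [this]; simp


lemma gronwallC {F : ℝ → ℝ} {k₀ a Mh : ℝ} {c k : ℝ → ℝ}
    (ha : 0 < a) (hMh : 0 < Mh)
    (hFmono : StrictMonoOn F (Set.Ici 0)) (hF0 : F 0 = 0)
    (hFsub : ∀ x ≥ (0:ℝ), F x ≤ a * x + Mh)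
    (hc : LocallyIntegrableOn c (Set.Ici 0))
    (hc0 : ∀ᵐ t ∂(volume.restrict (Set.Ici 0)), 0 ≤ c t)
    (hsol : SolOn F k₀ c k) (hknn : ∀ t ≥ (0:ℝ), 0 ≤ k t) :
    ∀ t ≥ (0:ℝ), (∫ s in (0:ℝ)..t, c s) ≤ (k₀ + Mh / a) * Real.exp (a * t) := by
  obtain ⟨hkcont, hk0, hkeq⟩ := hsol
  set kt : ℝ → ℝ := fun t => k (max t 0) with hkt
  have hktcont : Continuous kt :=
    hkcont.comp_continuous (continuous_id.max continuous_const) (fun x => Set.mem_Ici.2 (le_max_right _ _))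
  have hktnn : ∀ t, 0 ≤ kt t := fun t => hknn _ (le_max_right _ _)
  have hkteq : ∀ t ≥ (0:ℝ), kt t = k t := fun t ht => by simp [hkt, max_eq_left ht]
  have hFmax : Monotone fun x => F (max x 0) := fun x y hxy =>
    hFmono.monotoneOn (Set.mem_Ici.2 (le_max_right _ _)) (Set.mem_Ici.2 (le_max_right _ _)) (max_le_max hxy le_rfl)
  have hFkmeas : Measurable fun s => F (kt s) := by
    have h2 := hFmax.measurable.comp hktcont.measurable
    have e : (fun s => F (max (kt s) 0)) = fun s => F (kt s) :=
      funext fun s => by rw [max_eq_left (hktnn s)]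
    simp only [Function.comp_def] at h2
    rwa [e] at h2
  have hFknn : ∀ s, 0 ≤ F (kt s) := fun s =>
    hF0 ▸ hFmono.monotoneOn Set.self_mem_Ici (hktnn s) (hktnn s)
  have hFkle : ∀ s, F (kt s) ≤ a * kt s + Mh := fun s => hFsub _ (hktnn s)
  have hakcont : Continuous fun s => a * kt s + Mh :=
    (continuous_const.mul hktcont).add continuous_const
  have hFkint : ∀ t ≥ (0:ℝ), IntervalIntegrable (fun s => F (kt s)) volume 0 t := by
    intro t ht
    rw [intervalIntegrable_iff_integrableOn_Ioc_of_le ht]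
    refine Integrable.mono' ((hakcont.integrableOn_Icc (a := 0) (b := t)).mono_set
      Set.Ioc_subset_Icc_self) hFkmeas.aestronglyMeasurable.restrict ?_
    exact Filter.Eventually.of_forall fun s => by
      rw [Real.norm_eq_abs, abs_of_nonneg (hFknn s)]; exact hFkle s
  have hcint : ∀ t ≥ (0:ℝ), IntervalIntegrable c volume 0 t := by
    intro t ht
    rw [intervalIntegrable_iff_integrableOn_Ioc_of_le ht]
    exact (hc.integrableOn_compact_subset Set.Icc_subset_Ici_self isCompact_Icc).mono_set
      Set.Ioc_subset_Icc_self
  have hCnn : ∀ t ≥ (0:ℝ), 0 ≤ ∫ s in (0:ℝ)..t, c s := by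
    intro t ht
    apply intervalIntegral.integral_nonneg_of_ae_restrict ht
    exact (hc0.filter_mono (ae_mono (Measure.restrict_mono
        Set.Icc_subset_Ici_self le_rfl))).mono (fun x hx => hx)
  set ψ : ℝ → ℝ := fun t => k₀ + ∫ s in (0:ℝ)..t, (a * kt s + Mh) with hψdef
  have hψderiv : ∀ t, HasDerivAt ψ (a * kt t + Mh) t := by
    intro t
    have h1 : IntervalIntegrable (fun s => a * kt s + Mh) volume 0 t :=
      hakcont.intervalIntegrable 0 t
    have h2 := intervalIntegral.integral_hasDerivAt_right h1
      hakcont.stronglyMeasurable.stronglyMeasurableAtFilter hakcont.continuousAt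
    exact h2.const_add k₀
  have hid : ∀ t ≥ (0:ℝ), k t + (∫ s in (0:ℝ)..t, c s) = k₀ + ∫ s in (0:ℝ)..t, F (kt s) := by
    intro t ht
    have e1 : (∫ s in (0:ℝ)..t, (F (k s) - c s)) = ∫ s in (0:ℝ)..t, (F (kt s) - c s) := by
      apply intervalIntegral.integral_congr
      intro s hs
      rw [Set.uIcc_of_le ht] at hs
      show F (k s) - c s = F (kt s) - c s
      rw [hkteq s hs.1]
    have e2 : (∫ s in (0:ℝ)..t, (F (kt s) - c s)) =
        (∫ s in (0:ℝ)..t, F (kt s)) - ∫ s in (0:ℝ)..t, c s :=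
      intervalIntegral.integral_sub (hFkint t ht) (hcint t ht)
    rw [hkeq t ht, e1, e2]; ring
  have he3 : ∀ t ≥ (0:ℝ), (∫ s in (0:ℝ)..t, F (kt s)) ≤ ∫ s in (0:ℝ)..t, (a * kt s + Mh) := by
    intro t ht
    exact intervalIntegral.integral_mono_on ht (hFkint t ht) (hakcont.intervalIntegrable 0 t)
      (fun s _ => hFkle s)
  have hkψ : ∀ t ≥ (0:ℝ), k t ≤ ψ t := by
    intro t ht
    have := hid t ht
    have h2 := hCnn t ht
    have h3 := he3 t ht
    simp only [hψdef]; linarith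
  have hCψ : ∀ t ≥ (0:ℝ), (∫ s in (0:ℝ)..t, c s) ≤ ψ t := by
    intro t ht
    have := hid t ht
    have h2 := hknn t ht
    have h3 := he3 t ht
    simp only [hψdef]; linarith
  set θ : ℝ → ℝ := fun t => Real.exp (-(a * t)) * (ψ t + Mh / a) with hθdef
  have hθderiv : ∀ t, HasDerivAt θ
      (Real.exp (-(a * t)) * (a * kt t + Mh) + (-a * Real.exp (-(a * t))) * (ψ t + Mh / a)) t := by
    intro t
    have h1 : HasDerivAt (fun t : ℝ => Real.exp (-(a * t))) (-a * Real.exp (-(a * t))) t := by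
      have h0 : HasDerivAt (fun t : ℝ => -(a * t)) (-a) t := by
        have h := ((hasDerivAt_id t).const_mul a).neg
        rw [mul_one] at h; exact h
      have := (Real.hasDerivAt_exp (-(a * t))).comp t h0
      rw [show -a * Real.exp (-(a * t)) = Real.exp (-(a * t)) * -a by ring]; exact this
    have h2 : HasDerivAt (fun t => ψ t + Mh / a) (a * kt t + Mh) t := (hψderiv t).add_const _
    have := h1.mul h2
    rw [add_comm (Real.exp (-(a * t)) * (a * kt t + Mh))]; exact this
  have hθanti : AntitoneOn θ (Set.Ici 0) := by
    apply antitoneOn_of_deriv_nonpos (convex_Ici 0)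
    · exact fun t _ => (hθderiv t).continuousAt.continuousWithinAt
    · exact fun t _ => (hθderiv t).differentiableAt.differentiableWithinAt
    · intro t ht
      rw [interior_Ici] at ht
      rw [(hθderiv t).deriv]
      have h1 : kt t ≤ ψ t := by rw [hkteq t ht.le]; exact hkψ t ht.le
      have h2 : 0 < Real.exp (-(a * t)) := Real.exp_pos _
      have key : Real.exp (-(a * t)) * (a * kt t + Mh) ≤ Real.exp (-(a * t)) * (a * ψ t + Mh) := by
        have h4 : a * kt t + Mh ≤ a * ψ t + Mh := by
          have := mul_le_mul_of_nonneg_left h1 ha.le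
          linarith
        exact mul_le_mul_of_nonneg_left h4 h2.le
      have e : -a * Real.exp (-(a * t)) * (ψ t + Mh / a) =
          -(Real.exp (-(a * t)) * (a * ψ t + Mh)) := by
        field_simp
      rw [e]
      linarith
  intro t ht
  have h1 : θ t ≤ θ 0 := hθanti Set.self_mem_Ici ht ht
  have hθ0 : θ 0 = k₀ + Mh / a := by simp [hθdef, hψdef]
  rw [hθ0] at h1
  have h2 : ψ t + Mh / a ≤ (k₀ + Mh / a) * Real.exp (a * t) := by
    have hee : Real.exp (-(a * t)) * Real.exp (a * t) = 1 := by
      rw [← Real.exp_add]; simp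
    have hpos : 0 < Real.exp (a * t) := Real.exp_pos _
    have h1' : Real.exp (-(a * t)) * (ψ t + Mh / a) ≤ k₀ + Mh / a := h1
    have hx : Real.exp (-(a * t)) * (ψ t + Mh / a) * Real.exp (a * t) = ψ t + Mh / a := by
      rw [mul_comm (Real.exp (-(a * t))), mul_assoc, hee, mul_one]
    linarith [mul_le_mul_of_nonneg_right h1' hpos.le, hx]
  have h3 := hCψ t ht
  have h4 : 0 < Mh / a := div_pos hMh ha
  exact le_trans h3 (by linarith)

set_option maxHeartbeats 2000000 in
lemma util_le {F u : ℝ → ℝ} {ρ a Mh k₀ : ℝ} {c : ℝ → ℝ}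
    (hρ : 0 < ρ) (ha : 0 < a) (hMh : 0 < Mh)
    (hFmono : StrictMonoOn F (Set.Ici 0)) (hF0 : F 0 = 0)
    (hFsub : ∀ x ≥ (0:ℝ), F x ≤ a * x + Mh)
    (hucont : ContinuousOn u (Set.Ici 0)) (humono : StrictMonoOn u (Set.Ici 0))
    (huconc : ConcaveOn ℝ (Set.Ici 0) u) (hu0 : u 0 = 0)
    (hint : IntegrableOn (fun t => t * Real.exp (-ρ * t) * u (Real.exp (a * t))) (Set.Ioi 0))
    (hk₀ : 1 ≤ k₀) (hAdm : Adm F k₀ c) :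
    Util ρ u c ≤ (1 + (ρ + a)) *
      ∫ t in Set.Ioi (0:ℝ), Real.exp (-ρ * t) * u ((k₀ + Mh / a) * Real.exp (a * t)) := by
  obtain ⟨hcloc, hc0, k, hsol, hknn⟩ := hAdm
  set K : ℝ := k₀ + Mh / a with hKdef
  have hMa : 0 < Mh / a := div_pos hMh ha
  have hK1 : 1 ≤ K := by simp only [hKdef]; linarith
  have hK0 : 0 < K := lt_of_lt_of_le one_pos hK1
  have hC := gronwallC ha hMh hFmono hF0 hFsub hcloc hc0 hsol hknn
  -- measurable nonnegative version of c
  obtain ⟨c₁, hc₁sm, hc₁eq⟩ := hcloc.aestronglyMeasurable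
  set c' : ℝ → ℝ := fun t => max (c₁ t) 0 with hc'def
  have hc'meas : Measurable c' := (hc₁sm.measurable).max measurable_const
  have hc'nn : ∀ t, 0 ≤ c' t := fun t => le_max_right _ _
  have hc'eq : ∀ᵐ t ∂(volume.restrict (Set.Ici 0)), c' t = c t := by
    filter_upwards [hc₁eq, hc0] with t h1 h2
    simp only [hc'def]
    rw [← h1, max_eq_left h2]
  have hIciIoi : volume.restrict (Set.Ioi (0:ℝ)) ≤ volume.restrict (Set.Ici 0) :=
    Measure.restrict_mono Set.Ioi_subset_Ici_self le_rfl
  have hc'eqIoi : ∀ᵐ t ∂(volume.restrict (Set.Ioi (0:ℝ))), c' t = c t :=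
    hc'eq.filter_mono (ae_mono hIciIoi)
  have hc0Ioi : ∀ᵐ t ∂(volume.restrict (Set.Ioi (0:ℝ))), 0 ≤ c t :=
    hc0.filter_mono (ae_mono hIciIoi)
  -- the weight functions
  set w : ℝ → ℝ := fun t => Real.exp (-ρ * t) * (u (K * Real.exp (a * t)) / (K * Real.exp (a * t)))
    with hwdef
  set φ : ℝ → ℝ := fun s =>
    (ρ + a) * Real.exp (-ρ * s) * (u (K * Real.exp (a * s)) / (K * Real.exp (a * s))) with hφdef
  have hb : 0 < ρ + a := by linarith
  have hKexp : ∀ t : ℝ, 0 < K * Real.exp (a * t) := fun t => by positivity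
  have hcontuK : Continuous fun t => u (K * Real.exp (a * t)) :=
    cont_u_comp hucont (continuous_const.mul (Real.continuous_exp.comp (by fun_prop)))
      (fun t => (hKexp t).le)
  have hudiv_cont : Continuous fun t => u (K * Real.exp (a * t)) / (K * Real.exp (a * t)) :=
    hcontuK.div (continuous_const.mul (Real.continuous_exp.comp (by fun_prop)))
      (fun t => (hKexp t).ne')
  have hwcont : Continuous w := (Real.continuous_exp.comp (by fun_prop)).mul hudiv_cont
  have hφcont : Continuous φ :=
    (continuous_const.mul (Real.continuous_exp.comp (by fun_prop))).mul hudiv_cont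
  have huKnn : ∀ t : ℝ, 0 ≤ u (K * Real.exp (a * t)) :=
    fun t => u_nonneg humono hu0 (hKexp t).le
  have hwnn : ∀ t, 0 ≤ w t := fun t => by
    have := huKnn t; have := hKexp t
    simp only [hwdef]; positivity
  have hφnn : ∀ s, 0 ≤ φ s := fun s => by
    have := huKnn s; have := hKexp s
    simp only [hφdef]; positivity
  -- the comparison integral
  have hIuint : IntegrableOn (fun t => Real.exp (-ρ * t) * u (K * Real.exp (a * t)))
      (Set.Ioi 0) := Iu_int hρ ha hucont humono huconc hu0 hint hK1
  set Iu : ℝ := ∫ t in Set.Ioi (0:ℝ), Real.exp (-ρ * t) * u (K * Real.exp (a * t)) with hIudef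
  have hIunn : 0 ≤ Iu := by
    refine setIntegral_nonneg measurableSet_Ioi fun t _ => ?_
    have := huKnn t; positivity
  -- step (w2)
  have hw2 : ∀ t : ℝ, 0 ≤ t →
      ENNReal.ofReal (w t) ≤ ∫⁻ s in Set.Ioi t, ENNReal.ofReal (φ s) := by
    intro t ht
    set cst : ℝ := Real.exp (a * t) * (u (K * Real.exp (a * t)) / (K * Real.exp (a * t)))
      with hcstdef
    have hcstnn : 0 ≤ cst := by
      have := huKnn t; have := hKexp t
      simp only [hcstdef]; positivity
    have hψint : IntegrableOn (fun s => cst * ((ρ + a) * Real.exp (-(ρ + a) * s)))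
        (Set.Ioi t) := ((exp_neg_integrableOn_Ioi t hb).const_mul (ρ + a)).const_mul cst
    have hle : ∀ s, t ≤ s → cst * ((ρ + a) * Real.exp (-(ρ + a) * s)) ≤ φ s := by
      intro s hts
      have hmono : u (K * Real.exp (a * t)) ≤ u (K * Real.exp (a * s)) := by
        refine humono.monotoneOn (Set.mem_Ici.2 (hKexp t).le) (Set.mem_Ici.2 (hKexp s).le) ?_
        exact mul_le_mul_of_nonneg_left (Real.exp_le_exp.2 (by nlinarith)) hK0.le
      have hsplit : Real.exp (-(ρ + a) * s) = Real.exp (-ρ * s) * (Real.exp (a * s))⁻¹ := by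
        rw [← Real.exp_neg, ← Real.exp_add]; ring_nf
      have lhs_eq : cst * ((ρ + a) * Real.exp (-(ρ + a) * s)) =
          (ρ + a) / K * Real.exp (-(ρ + a) * s) * u (K * Real.exp (a * t)) := by
        simp only [hcstdef]
        field_simp
      have rhs_eq : φ s =
          (ρ + a) / K * Real.exp (-(ρ + a) * s) * u (K * Real.exp (a * s)) := by
        simp only [hφdef]
        rw [hsplit]
        field_simp
      rw [lhs_eq, rhs_eq]
      have hcoef : 0 ≤ (ρ + a) / K * Real.exp (-(ρ + a) * s) := by positivity
      exact mul_le_mul_of_nonneg_left hmono hcoef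
    have hcalc : ∫ s in Set.Ioi t, cst * ((ρ + a) * Real.exp (-(ρ + a) * s)) =
        cst * Real.exp (-(ρ + a) * t) := by
      rw [MeasureTheory.integral_const_mul, exp_neg_int hb t]
    have hwt : w t = cst * Real.exp (-(ρ + a) * t) := by
      have hsplit : Real.exp (-(ρ + a) * t) = Real.exp (-ρ * t) * (Real.exp (a * t))⁻¹ := by
        rw [← Real.exp_neg, ← Real.exp_add]; ring_nf
      simp only [hwdef, hcstdef]
      rw [hsplit]
      field_simp
    calc ENNReal.ofReal (w t)
        = ENNReal.ofReal (∫ s in Set.Ioi t, cst * ((ρ + a) * Real.exp (-(ρ + a) * s))) := by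
          rw [hcalc, hwt]
      _ = ∫⁻ s in Set.Ioi t, ENNReal.ofReal (cst * ((ρ + a) * Real.exp (-(ρ + a) * s))) := by
          refine ofReal_integral_eq_lintegral_ofReal hψint ?_
          exact Filter.Eventually.of_forall fun s => by positivity
      _ ≤ ∫⁻ s in Set.Ioi t, ENNReal.ofReal (φ s) := by
          refine lintegral_mono_ae ?_
          refine (ae_restrict_iff' measurableSet_Ioi).2 (Filter.Eventually.of_forall fun s hs => ?_)
          exact ENNReal.ofReal_le_ofReal (hle s (le_of_lt hs))
  have hCs : ∀ s : ℝ, 0 < s → (∫⁻ t in Set.Ioo (0:ℝ) s, ENNReal.ofReal (c' t)) ≤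
      ENNReal.ofReal (K * Real.exp (a * s)) := by
    intro s hs
    have hsub : Set.Ioo (0:ℝ) s ⊆ Set.Ici 0 :=
      Set.Ioo_subset_Icc_self.trans Set.Icc_subset_Ici_self
    have he : c' =ᵐ[volume.restrict (Set.Ioo (0:ℝ) s)] c :=
      hc'eq.filter_mono (ae_mono (Measure.restrict_mono hsub le_rfl))
    have hcint : IntegrableOn c' (Set.Ioo (0:ℝ) s) := by
      have h1 : IntegrableOn c (Set.Icc 0 s) :=
        hcloc.integrableOn_compact_subset Set.Icc_subset_Ici_self isCompact_Icc
      exact (h1.mono_set Set.Ioo_subset_Icc_self).congr he.symm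
    have hlin : (∫⁻ t in Set.Ioo (0:ℝ) s, ENNReal.ofReal (c' t)) =
        ENNReal.ofReal (∫ t in Set.Ioo (0:ℝ) s, c' t) :=
      (ofReal_integral_eq_lintegral_ofReal hcint (Filter.Eventually.of_forall hc'nn)).symm
    have hval : (∫ t in Set.Ioo (0:ℝ) s, c' t) ≤ K * Real.exp (a * s) := by
      have h1 : (∫ t in Set.Ioo (0:ℝ) s, c' t) = ∫ t in Set.Ioo (0:ℝ) s, c t :=
        integral_congr_ae he
      have h2 : (∫ t in Set.Ioo (0:ℝ) s, c t) = ∫ r in (0:ℝ)..s, c r := by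
        rw [intervalIntegral.integral_of_le hs.le, integral_Ioc_eq_integral_Ioo]
      rw [h1, h2]
      exact hC s hs.le
    rw [hlin]
    exact ENNReal.ofReal_le_ofReal hval
  -- key lintegral bound
  have hkey : (∫⁻ t in Set.Ioi (0:ℝ), ENNReal.ofReal (w t * c' t)) ≤
      ENNReal.ofReal ((ρ + a) * Iu) := by
    set G : ℝ × ℝ → ENNReal := fun p =>
      Set.indicator {p : ℝ × ℝ | p.1 < p.2}
        (fun p => ENNReal.ofReal (φ p.2) * ENNReal.ofReal (c' p.1)) p with hGdef
    have hGmeas : Measurable G := by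
      refine Measurable.indicator ?_ (measurableSet_lt measurable_fst measurable_snd)
      exact (ENNReal.measurable_ofReal.comp (hφcont.measurable.comp measurable_snd)).mul
        (ENNReal.measurable_ofReal.comp (hc'meas.comp measurable_fst))
    have hstep1 : (∫⁻ t in Set.Ioi (0:ℝ), ENNReal.ofReal (w t * c' t)) ≤
        ∫⁻ t in Set.Ioi (0:ℝ), ∫⁻ s in Set.Ioi (0:ℝ), G (t, s) := by
      refine lintegral_mono_ae ((ae_restrict_iff' measurableSet_Ioi).2
        (Filter.Eventually.of_forall fun t ht => ?_))
      have hGt : (fun s => G (t, s)) = Set.indicator (Set.Ioi t)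
          (fun s => ENNReal.ofReal (φ s) * ENNReal.ofReal (c' t)) := by
        funext s
        by_cases h : t < s
        · simp [hGdef, Set.indicator, h]
        · simp [hGdef, Set.indicator, h]
      rw [hGt, lintegral_indicator measurableSet_Ioi,
        Measure.restrict_restrict measurableSet_Ioi, Set.Ioi_inter_Ioi,
        sup_eq_left.2 (le_of_lt ht), ENNReal.ofReal_mul (hwnn t),
        lintegral_mul_const' (ENNReal.ofReal (c' t)) _ ENNReal.ofReal_ne_top]
      exact mul_le_mul_left (hw2 t (le_of_lt ht)) _
    have hswap : (∫⁻ t in Set.Ioi (0:ℝ), ∫⁻ s in Set.Ioi (0:ℝ), G (t, s)) =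
        ∫⁻ s in Set.Ioi (0:ℝ), ∫⁻ t in Set.Ioi (0:ℝ), G (t, s) :=
      lintegral_lintegral_swap hGmeas.aemeasurable
    have hstep3 : ∀ s : ℝ, 0 < s → (∫⁻ t in Set.Ioi (0:ℝ), G (t, s)) ≤
        ENNReal.ofReal (φ s * (K * Real.exp (a * s))) := by
      intro s hs
      have hGs : (fun t => G (t, s)) = Set.indicator (Set.Iio s)
          (fun t => ENNReal.ofReal (φ s) * ENNReal.ofReal (c' t)) := by
        funext t
        by_cases h : t < s
        · simp [hGdef, Set.indicator, h]
        · simp [hGdef, Set.indicator, h]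
      rw [hGs]
      rw [lintegral_indicator measurableSet_Iio]
      rw [Measure.restrict_restrict measurableSet_Iio]
      rw [Set.Iio_inter_Ioi]
      rw [lintegral_const_mul' _ _ ENNReal.ofReal_ne_top]
      calc ENNReal.ofReal (φ s) * ∫⁻ t in Set.Ioo (0:ℝ) s, ENNReal.ofReal (c' t)
          ≤ ENNReal.ofReal (φ s) * ENNReal.ofReal (K * Real.exp (a * s)) :=
            mul_le_mul_right (hCs s hs) _
        _ = ENNReal.ofReal (φ s * (K * Real.exp (a * s))) :=
            (ENNReal.ofReal_mul (hφnn s)).symm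
    have hstep5 : (∫⁻ s in Set.Ioi (0:ℝ), ENNReal.ofReal (φ s * (K * Real.exp (a * s)))) =
        ENNReal.ofReal ((ρ + a) * Iu) := by
      have hfun : ∀ s : ℝ, φ s * (K * Real.exp (a * s)) =
          (ρ + a) * (Real.exp (-ρ * s) * u (K * Real.exp (a * s))) := by
        intro s
        have hne := (hKexp s).ne'
        simp only [hφdef]
        field_simp
      have h1 : (∫⁻ s in Set.Ioi (0:ℝ), ENNReal.ofReal (φ s * (K * Real.exp (a * s)))) =
          ∫⁻ s in Set.Ioi (0:ℝ),
            ENNReal.ofReal ((ρ + a) * (Real.exp (-ρ * s) * u (K * Real.exp (a * s)))) :=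
        lintegral_congr fun s => by rw [hfun s]
      rw [h1, ← ofReal_integral_eq_lintegral_ofReal (hIuint.const_mul (ρ + a))
        (Filter.Eventually.of_forall fun s => by have := huKnn s; positivity),
        MeasureTheory.integral_const_mul]
    calc (∫⁻ t in Set.Ioi (0:ℝ), ENNReal.ofReal (w t * c' t))
        ≤ ∫⁻ t in Set.Ioi (0:ℝ), ∫⁻ s in Set.Ioi (0:ℝ), G (t, s) := hstep1
      _ = ∫⁻ s in Set.Ioi (0:ℝ), ∫⁻ t in Set.Ioi (0:ℝ), G (t, s) := hswap
      _ ≤ ∫⁻ s in Set.Ioi (0:ℝ), ENNReal.ofReal (φ s * (K * Real.exp (a * s))) :=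
          lintegral_mono_ae ((ae_restrict_iff' measurableSet_Ioi).2
            (Filter.Eventually.of_forall fun s hs => hstep3 s hs))
      _ = ENNReal.ofReal ((ρ + a) * Iu) := hstep5
  have hwc'nn : ∀ t, 0 ≤ w t * c' t := fun t => mul_nonneg (hwnn t) (hc'nn t)
  have hwc'meas : AEStronglyMeasurable (fun t => w t * c' t)
      (volume.restrict (Set.Ioi (0:ℝ))) :=
    (hwcont.measurable.mul hc'meas).aestronglyMeasurable
  have hwc'int : IntegrableOn (fun t => w t * c' t) (Set.Ioi 0) := by
    refine ⟨hwc'meas, ?_⟩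
    rw [hasFiniteIntegral_iff_ofReal (Filter.Eventually.of_forall hwc'nn)]
    exact lt_of_le_of_lt hkey ENNReal.ofReal_lt_top
  have hwc'val : (∫ t in Set.Ioi (0:ℝ), w t * c' t) ≤ (ρ + a) * Iu := by
    rw [integral_eq_lintegral_of_nonneg_ae (Filter.Eventually.of_forall hwc'nn) hwc'meas]
    have h2 := ENNReal.toReal_mono ENNReal.ofReal_ne_top hkey
    rwa [ENNReal.toReal_ofReal (mul_nonneg hb.le hIunn)] at h2
  set g : ℝ → ℝ := fun t => Real.exp (-ρ * t) * u (K * Real.exp (a * t)) + w t * c' t with hgdef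
  have hgint : IntegrableOn g (Set.Ioi 0) := hIuint.add hwc'int
  have hfm : AEStronglyMeasurable (fun t => Real.exp (-ρ * t) * u (c t))
      (volume.restrict (Set.Ioi (0:ℝ))) := by
    have h1 : Continuous fun x : ℝ => u (max x 0) := ucont_comp hucont
    have h2 : Measurable fun t => u (max (c' t) 0) := h1.measurable.comp hc'meas
    have he : (fun t => u (max (c' t) 0)) = fun t => u (c' t) :=
      funext fun t => by rw [max_eq_left (hc'nn t)]
    rw [he] at h2
    have hm : AEStronglyMeasurable (fun t => Real.exp (-ρ * t) * u (c' t))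
        (volume.restrict (Set.Ioi (0:ℝ))) :=
      ((Real.continuous_exp.comp (by fun_prop)).measurable.mul h2).aestronglyMeasurable
    refine hm.congr ?_
    filter_upwards [hc'eqIoi] with t h1
    rw [h1]
  have hbound : ∀ᵐ t ∂(volume.restrict (Set.Ioi (0:ℝ))),
      ‖Real.exp (-ρ * t) * u (c t)‖ ≤ g t := by
    filter_upwards [hc'eqIoi, hc0Ioi] with t h1 h2
    have hx := hKexp t
    have hb2 := u_le_aux humono huconc hu0 hx h2
    have hunn : 0 ≤ u (c t) := u_nonneg humono hu0 h2
    have hen : (0:ℝ) < Real.exp (-ρ * t) := Real.exp_pos _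
    rw [Real.norm_eq_abs, abs_of_nonneg (by positivity)]
    have step : Real.exp (-ρ * t) * u (c t) ≤
        Real.exp (-ρ * t) * (u (K * Real.exp (a * t)) +
          u (K * Real.exp (a * t)) / (K * Real.exp (a * t)) * c t) :=
      mul_le_mul_of_nonneg_left hb2 hen.le
    have e : Real.exp (-ρ * t) * (u (K * Real.exp (a * t)) +
        u (K * Real.exp (a * t)) / (K * Real.exp (a * t)) * c t) =
        Real.exp (-ρ * t) * u (K * Real.exp (a * t)) + w t * c t := by
      simp only [hwdef]; ring
    rw [e] at step
    simp only [hgdef]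
    rw [h1]
    exact step
  have hfint : IntegrableOn (fun t => Real.exp (-ρ * t) * u (c t)) (Set.Ioi 0) :=
    Integrable.mono' hgint hfm hbound
  have hmono2 : (∫ t in Set.Ioi (0:ℝ), Real.exp (-ρ * t) * u (c t)) ≤
      ∫ t in Set.Ioi (0:ℝ), g t := by
    refine integral_mono_ae hfint hgint ?_
    filter_upwards [hbound] with t h
    exact le_trans (le_abs_self _) (by rwa [Real.norm_eq_abs] at h)
  have hsplit : (∫ t in Set.Ioi (0:ℝ), g t) = Iu + ∫ t in Set.Ioi (0:ℝ), w t * c' t :=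
    integral_add hIuint hwc'int
  calc Util ρ u c = ∫ t in Set.Ioi (0:ℝ), Real.exp (-ρ * t) * u (c t) := rfl
    _ ≤ ∫ t in Set.Ioi (0:ℝ), g t := hmono2
    _ = Iu + ∫ t in Set.Ioi (0:ℝ), w t * c' t := hsplit
    _ ≤ Iu + (ρ + a) * Iu := by linarith
    _ = (1 + (ρ + a)) * Iu := by ring

lemma tend_zero {u : ℝ → ℝ} {ρ a M' : ℝ} (hρ : 0 < ρ) (ha : 0 < a) (hM' : 0 < M')
    (hucont : ContinuousOn u (Set.Ici 0)) (humono : StrictMonoOn u (Set.Ici 0))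
    (huconc : ConcaveOn ℝ (Set.Ici 0) u) (hu0 : u 0 = 0)
    (husub : Filter.Tendsto (fun x => u x / x) Filter.atTop (nhds 0))
    (hint : IntegrableOn (fun t => t * Real.exp (-ρ * t) * u (Real.exp (a * t))) (Set.Ioi 0)) :
    Filter.Tendsto (fun k₀ : ℝ =>
      (∫ t in Set.Ioi (0:ℝ), Real.exp (-ρ * t) * u ((k₀ + M') * Real.exp (a * t))) / k₀)
      Filter.atTop (nhds 0) := by
  have hbase := base_int hρ ha hucont humono hu0 hint
  have key : Filter.Tendsto (fun k₀ : ℝ => ∫ t in Set.Ioi (0:ℝ),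
      Real.exp (-ρ * t) * u ((k₀ + M') * Real.exp (a * t)) / k₀) Filter.atTop (nhds 0) := by
    have h0 : (nhds (0:ℝ)) = nhds (∫ t in Set.Ioi (0:ℝ), (0:ℝ)) := by simp
    rw [h0]
    refine tendsto_integral_filter_of_dominated_convergence
      (fun t => (1 + M') * (Real.exp (-ρ * t) * u (Real.exp (a * t)))) ?_ ?_ ?_ ?_
    · filter_upwards [Filter.eventually_ge_atTop (1:ℝ)] with k₀ hk₀
      have hKpos : 0 < k₀ + M' := by linarith
      have hcont : Continuous fun t =>
          Real.exp (-ρ * t) * u ((k₀ + M') * Real.exp (a * t)) / k₀ := by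
        exact ((Real.continuous_exp.comp (by fun_prop)).mul
          (cont_u_comp hucont
            (continuous_const.mul (Real.continuous_exp.comp (by fun_prop)))
            (fun t => (mul_pos hKpos (Real.exp_pos _)).le))).div_const k₀
      exact hcont.aestronglyMeasurable
    · filter_upwards [Filter.eventually_ge_atTop (1:ℝ)] with k₀ hk₀
      refine (ae_restrict_iff' measurableSet_Ioi).2 (Filter.Eventually.of_forall fun t ht => ?_)
      have hk0pos : (0:ℝ) < k₀ := by linarith
      have hK1 : 1 ≤ k₀ + M' := by linarith
      have hexp : (0:ℝ) < Real.exp (a * t) := Real.exp_pos _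
      have hen : (0:ℝ) < Real.exp (-ρ * t) := Real.exp_pos _
      have hnn : 0 ≤ u ((k₀ + M') * Real.exp (a * t)) :=
        u_nonneg humono hu0 (by positivity)
      have hu2 : 0 ≤ u (Real.exp (a * t)) := u_nonneg humono hu0 hexp.le
      have hscale : u ((k₀ + M') * Real.exp (a * t)) ≤ (k₀ + M') * u (Real.exp (a * t)) :=
        u_scale huconc hu0 hK1 hexp
      have hfrac : (k₀ + M') / k₀ ≤ 1 + M' := by
        rw [div_le_iff₀ hk0pos]; nlinarith
      rw [Real.norm_eq_abs, abs_of_nonneg (by positivity)]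
      calc Real.exp (-ρ * t) * u ((k₀ + M') * Real.exp (a * t)) / k₀
          ≤ Real.exp (-ρ * t) * ((k₀ + M') * u (Real.exp (a * t))) / k₀ := by
            gcongr
        _ = (k₀ + M') / k₀ * (Real.exp (-ρ * t) * u (Real.exp (a * t))) := by ring
        _ ≤ (1 + M') * (Real.exp (-ρ * t) * u (Real.exp (a * t))) :=
            mul_le_mul_of_nonneg_right hfrac (by positivity)
    · exact hbase.const_mul _
    · refine (ae_restrict_iff' measurableSet_Ioi).2 (Filter.Eventually.of_forall fun t ht => ?_)
      have hexp : (0:ℝ) < Real.exp (a * t) := Real.exp_pos _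
      have hXto : Filter.Tendsto (fun k₀ : ℝ => (k₀ + M') * Real.exp (a * t))
          Filter.atTop Filter.atTop :=
        (Filter.tendsto_atTop_add_const_right _ M' Filter.tendsto_id).atTop_mul_const hexp
      have h1 : Filter.Tendsto (fun k₀ : ℝ =>
          u ((k₀ + M') * Real.exp (a * t)) / ((k₀ + M') * Real.exp (a * t)))
          Filter.atTop (nhds 0) := husub.comp hXto
      have h2 : Filter.Tendsto (fun k₀ : ℝ => (k₀ + M') / k₀) Filter.atTop (nhds 1) := by
        have h3 : Filter.Tendsto (fun k₀ : ℝ => 1 + M' / k₀) Filter.atTop (nhds (1 + 0)) :=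
          tendsto_const_nhds.add (tendsto_const_nhds.div_atTop Filter.tendsto_id)
        rw [add_zero] at h3
        refine h3.congr' ?_
        filter_upwards [Filter.eventually_ge_atTop (1:ℝ)] with k₀ hk₀
        have : (0:ℝ) < k₀ := by linarith
        field_simp
      have h4 := (h1.mul h2).const_mul (Real.exp (-ρ * t) * Real.exp (a * t))
      refine Filter.Tendsto.congr' ?_ (by simpa using h4)
      filter_upwards [Filter.eventually_ge_atTop (1:ℝ)] with k₀ hk₀
      have hk0pos : (0:ℝ) < k₀ := by linarith
      have hKpos : (0:ℝ) < k₀ + M' := by linarith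
      field_simp
  refine key.congr fun k₀ => ?_
  rw [integral_div]

lemma util_nonneg {u : ℝ → ℝ} {ρ : ℝ} {c : ℝ → ℝ}
    (humono : StrictMonoOn u (Set.Ici 0)) (hu0 : u 0 = 0)
    (hc0 : ∀ᵐ t ∂(volume.restrict (Set.Ici 0)), 0 ≤ c t) : 0 ≤ Util ρ u c := by
  refine integral_nonneg_of_ae ?_
  have h := hc0.filter_mono (ae_mono (Measure.restrict_mono Set.Ioi_subset_Ici_self le_rfl))
  filter_upwards [h] with t h2
  have h3 := u_nonneg humono hu0 h2
  positivity

theorem stmt13 (F u : ℝ → ℝ) (ρ L ε₀ Mh : ℝ)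
    (hρ : 0 < ρ) (hL : 0 < L) (hε₀ : 0 < ε₀) (hMh : 0 < Mh)
    (hFmono : StrictMonoOn F (Set.Ici 0)) (hF0 : F 0 = 0)
    (hFsub : ∀ x ≥ (0:ℝ), F x ≤ (L + ε₀) * x + Mh)
    (hFlin : Filter.Tendsto (fun x => F x / x) Filter.atTop (nhds L))
    (hucont : ContinuousOn u (Set.Ici 0)) (humono : StrictMonoOn u (Set.Ici 0))
    (huconc : ConcaveOn ℝ (Set.Ici 0) u) (hu0 : u 0 = 0)
    (hulim : Filter.Tendsto u Filter.atTop Filter.atTop)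
    (husub : Filter.Tendsto (fun x => u x / x) Filter.atTop (nhds 0))
    (hint : IntegrableOn
      (fun t => t * Real.exp (-ρ * t) * u (Real.exp ((L + ε₀) * t))) (Set.Ioi 0)) :
    Filter.Tendsto (fun k => Val F ρ u k / k) Filter.atTop (nhds 0) := by
  have ha : 0 < L + ε₀ := by linarith
  have hMa : 0 < Mh / (L + ε₀) := div_pos hMh ha
  set B : ℝ → ℝ := fun k₀ => (1 + (ρ + (L + ε₀))) *
    ∫ t in Set.Ioi (0:ℝ), Real.exp (-ρ * t) *
      u ((k₀ + Mh / (L + ε₀)) * Real.exp ((L + ε₀) * t)) with hBdef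
  have hval_nonneg : ∀ k₀ : ℝ, 0 ≤ Val F ρ u k₀ := by
    intro k₀
    apply Real.sSup_nonneg
    rintro x ⟨c, hAdm, rfl⟩
    exact util_nonneg humono hu0 hAdm.2.1
  have hIu_nonneg : ∀ k₀ : ℝ, 1 ≤ k₀ → 0 ≤ ∫ t in Set.Ioi (0:ℝ), Real.exp (-ρ * t) *
      u ((k₀ + Mh / (L + ε₀)) * Real.exp ((L + ε₀) * t)) := by
    intro k₀ hk₀
    refine setIntegral_nonneg measurableSet_Ioi fun t _ => ?_
    have h1 : (0:ℝ) < k₀ + Mh / (L + ε₀) := by linarith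
    have h2 : 0 ≤ u ((k₀ + Mh / (L + ε₀)) * Real.exp ((L + ε₀) * t)) :=
      u_nonneg humono hu0 (by positivity)
    positivity
  have hval_le : ∀ k₀ : ℝ, 1 ≤ k₀ → Val F ρ u k₀ ≤ B k₀ := by
    intro k₀ hk₀
    apply Real.sSup_le
    · rintro x ⟨c, hAdm, rfl⟩
      exact util_le hρ ha hMh hFmono hF0 hFsub hucont humono huconc hu0 hint hk₀ hAdm
    · have h1 : (0:ℝ) ≤ 1 + (ρ + (L + ε₀)) := by linarith
      exact mul_nonneg h1 (hIu_nonneg k₀ hk₀)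
  have hlim := tend_zero hρ ha hMa hucont humono huconc hu0 husub hint
  have hlim2 : Filter.Tendsto (fun k₀ => B k₀ / k₀) Filter.atTop (nhds 0) := by
    have h1 := hlim.const_mul (1 + (ρ + (L + ε₀)))
    rw [mul_zero] at h1
    refine h1.congr fun k₀ => ?_
    simp only [hBdef]
    rw [mul_div_assoc]
  refine tendsto_of_tendsto_of_tendsto_of_le_of_le' tendsto_const_nhds hlim2 ?_ ?_
  · filter_upwards [Filter.eventually_ge_atTop (1:ℝ)] with k₀ hk₀
    exact div_nonneg (hval_nonneg k₀) (by linarith)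
  · filter_upwards [Filter.eventually_ge_atTop (1:ℝ)] with k₀ hk₀
    have hk0pos : (0:ℝ) < k₀ := by linarith
    exact by gcongr; exact hval_le k₀ hk₀
end
end
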